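/- arXiv:1103.2685 — 7 statements merged into one kernel-verified Lean document; each statement's English description precedes it below -/
import Mathlib

section
/- Let G₁ and G₂ be graphs with maximum degrees d₁ = Δ(G₁) ≥ 2 and d₂ = Δ(G₂) ≥ 2. Then r(G₁, G₂) ≥ d₁ + d₂ - (1 - (-1)^((d₁-1)(d₂-1)))/2; that is, r(G₁,G₂) ≥ d₁+d₂ if (d₁-1)(d₂-1) is even, and r(G₁,G₂) ≥ d₁+d₂-1 otherwise. -/
open SimpleGraph

/-- `G` contains a copy of `H` as a subgraph. -/
def Contains {V W : Type*} (G : SimpleGraph V) (H : SimpleGraph W) : Prop :=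
  ∃ f : W ↪ V, ∀ a b, H.Adj a b → G.Adj (f a) (f b)

/-- The Turán number `ex(p; L)`: the maximum number of edges in a simple graph
on `p` vertices not containing `L` as a subgraph. -/
noncomputable def exNum (p : ℕ) {W : Type*} (L : SimpleGraph W) : ℕ :=
  sSup {k | ∃ G : SimpleGraph (Fin p), ¬ Contains G L ∧ G.edgeSet.ncard = k}

/-- The Ramsey number `r(G₁, G₂)`: the least positive `N` such that every graph on
`N` vertices contains `G₁` or its complement contains `G₂`. -/
noncomputable def ramsey {V W : Type*} (G₁ : SimpleGraph V) (G₂ : SimpleGraph W) : ℕ :=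
  sInf {N | 0 < N ∧ ∀ G : SimpleGraph (Fin N), Contains G G₁ ∨ Contains Gᶜ G₂}

/-- The tree `Tₙ*` on `n` vertices with edges `v₀v₁, …, v₀v_{n-3}, v_{n-3}v_{n-2},
v_{n-2}v_{n-1}`. -/
def Tstar (n : ℕ) : SimpleGraph (Fin n) :=
  SimpleGraph.fromRel (fun a b =>
    (a.val = 0 ∧ 1 ≤ b.val ∧ b.val ≤ n - 3) ∨ (a.val = n - 3 ∧ b.val = n - 2) ∨
      (a.val = n - 2 ∧ b.val = n - 1))

/-- The star `K_{1,n-1}` on `n` vertices with center `0`. -/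
def starGraph (n : ℕ) : SimpleGraph (Fin n) :=
  SimpleGraph.fromRel (fun a _ => a.val = 0)

/-! ### Auxiliary lemmas -/

section Aux

open Finset

/-- A clique in an induced subgraph yields a clique in the ambient graph. -/
lemma induce_isNClique' {V : Type} {G : SimpleGraph V} {A : Set V} {k : ℕ} {S : Finset A}
    (h : (G.induce A).IsNClique k S) :
    G.IsNClique k (S.map (Function.Embedding.subtype _)) := by
  constructor
  · rintro a ha b hb hab
    simp only [Finset.coe_map, Set.mem_image, Finset.mem_coe,
      Function.Embedding.coe_subtype] at ha hb
    obtain ⟨a', ha', rfl⟩ := ha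
    obtain ⟨b', hb', rfl⟩ := hb
    have hne : a' ≠ b' := fun e => hab (by rw [e])
    exact h.1 ha' hb' hne
  · rw [Finset.card_map, h.2]

lemma induce_compl' {V : Type} (G : SimpleGraph V) (A : Set V) :
    (G.induce A)ᶜ = Gᶜ.induce A := by
  ext a b
  simp only [compl_adj, comap_adj, Function.Embedding.coe_subtype, ne_eq, Subtype.ext_iff]

/-- Finite Ramsey theorem. -/
lemma exists_ramsey (s : ℕ) : ∀ t : ℕ, ∃ N : ℕ, ∀ (V : Type) (_ : Fintype V)
    (G : SimpleGraph V), N ≤ Fintype.card V →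
    (∃ S : Finset V, G.IsNClique s S) ∨ (∃ S : Finset V, Gᶜ.IsNClique t S) := by
  induction s with
  | zero => exact fun t => ⟨0, fun V _ G _ => Or.inl ⟨∅, by simp⟩⟩
  | succ s ihs =>
    intro t
    induction t with
    | zero => exact ⟨0, fun V _ G _ => Or.inr ⟨∅, by simp⟩⟩
    | succ t iht =>
      obtain ⟨N₁, h₁⟩ := ihs (t + 1)
      obtain ⟨N₂, h₂⟩ := iht
      refine ⟨N₁ + N₂ + 1, ?_⟩
      intro V _ G hcard
      classical
      have hne : Nonempty V := by rw [← Fintype.card_pos_iff]; omega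
      obtain ⟨v⟩ := hne
      set A : Finset V := univ.filter fun w => G.Adj v w with hA
      set B : Finset V := univ.filter fun w => w ≠ v ∧ ¬ G.Adj v w with hB
      have hvA : v ∉ A := by simp [hA]
      have hBeq : B = (insert v A)ᶜ := by
        ext w
        simp only [hB, hA, Finset.mem_filter, Finset.mem_univ, true_and, Finset.mem_compl,
          Finset.mem_insert, not_or]
      have hBcard : B.card = Fintype.card V - (A.card + 1) := by
        rw [hBeq, Finset.card_compl, Finset.card_insert_of_notMem hvA]
      have hle : A.card + 1 ≤ Fintype.card V := by
        rw [← Finset.card_insert_of_notMem hvA, ← Finset.card_univ]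
        exact Finset.card_le_card (Finset.subset_univ _)
      rcases le_or_gt N₁ A.card with hcase | hcase
      · have hcard' : N₁ ≤ Fintype.card (A : Set V) := by
          simpa using hcase
        rcases h₁ (A : Set V) inferInstance (G.induce (A : Set V)) hcard' with ⟨S, hS⟩ | ⟨S, hS⟩
        · refine Or.inl ⟨insert v (S.map (Function.Embedding.subtype _)), (induce_isNClique' hS).insert ?_⟩
          intro b hb
          simp only [Finset.mem_map, Function.Embedding.coe_subtype] at hb
          obtain ⟨⟨b, hbA⟩, _, rfl⟩ := hb
          have : b ∈ A := hbA
          simpa [hA] using this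
        · rw [induce_compl'] at hS
          exact Or.inr ⟨S.map (Function.Embedding.subtype _), induce_isNClique' hS⟩
      · have hcase₂ : N₂ ≤ B.card := by omega
        have hcard' : N₂ ≤ Fintype.card (B : Set V) := by simpa using hcase₂
        rcases h₂ (B : Set V) inferInstance (G.induce (B : Set V)) hcard' with ⟨S, hS⟩ | ⟨S, hS⟩
        · exact Or.inl ⟨S.map (Function.Embedding.subtype _), induce_isNClique' hS⟩
        · rw [induce_compl'] at hS
          refine Or.inr ⟨insert v (S.map (Function.Embedding.subtype _)), (induce_isNClique' hS).insert ?_⟩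
          intro b hb
          simp only [Finset.mem_map, Function.Embedding.coe_subtype] at hb
          obtain ⟨⟨b, hbB⟩, _, rfl⟩ := hb
          have : b ∈ B := hbB
          simp only [hB, Finset.mem_filter, Finset.mem_univ, true_and] at this
          exact ⟨Ne.symm this.1, fun h => this.2 h⟩

lemma contains_of_isNClique {V : Type} {G : SimpleGraph V} {m : ℕ} {G₁ : SimpleGraph (Fin m)}
    {S : Finset V} (h : G.IsNClique m S) : Contains G G₁ := by
  have e : Fin m ≃ ↥S := (Finset.equivFinOfCardEq h.2).symm
  refine ⟨⟨fun i => (e i : V), ?_⟩, ?_⟩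
  · intro a b hab
    exact e.injective (Subtype.val_injective hab)
  · intro a b hab
    refine h.1 (by exact (e a).2) (by exact (e b).2) ?_
    intro hcontra
    exact hab.ne (e.injective (Subtype.val_injective hcontra))

lemma ramsey_set_nonempty {m n : ℕ} (G₁ : SimpleGraph (Fin m)) (G₂ : SimpleGraph (Fin n)) :
    {N | 0 < N ∧ ∀ G : SimpleGraph (Fin N), Contains G G₁ ∨ Contains Gᶜ G₂}.Nonempty := by
  obtain ⟨N, hN⟩ := exists_ramsey m n
  refine ⟨N + 1, Nat.succ_pos _, fun G => ?_⟩
  rcases hN (Fin (N + 1)) inferInstance G (by simp) with ⟨S, hS⟩ | ⟨S, hS⟩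
  · exact Or.inl (contains_of_isNClique hS)
  · exact Or.inr (contains_of_isNClique hS)

lemma not_contains_of_degree_lt {V : Type} [Fintype V] {G : SimpleGraph V} [DecidableRel G.Adj]
    {m : ℕ} {G₁ : SimpleGraph (Fin m)} [DecidableRel G₁.Adj] {d : ℕ} (h₁ : G₁.maxDegree = d)
    (hd : 0 < d) (h : ∀ v, G.degree v < d) : ¬ Contains G G₁ := by
  rintro ⟨f, hf⟩
  have hm : Nonempty (Fin m) := by
    rcases Nat.eq_zero_or_pos m with hm | hm
    · exfalso
      subst hm
      have := G₁.maxDegree_le_of_forall_degree_le 0 (fun v => v.elim0)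
      omega
    · exact ⟨⟨0, hm⟩⟩
  obtain ⟨v, hv⟩ := G₁.exists_maximal_degree_vertex
  have hsub : (G₁.neighborFinset v).map f ⊆ G.neighborFinset (f v) := by
    intro x hx
    simp only [Finset.mem_map, mem_neighborFinset] at hx ⊢
    obtain ⟨u, hu, rfl⟩ := hx
    exact hf v u hu
  have hcard := Finset.card_le_card hsub
  rw [Finset.card_map] at hcard
  simp only [card_neighborFinset_eq_degree] at hcard
  have h2 := h (f v)
  omega

open Fin.NatCast Fin.CommRing in
/-- Existence of an `r`-regular graph on `Fin N` whenever `r < N` and `r * N` is even. -/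
lemma exists_regular_graph (N r : ℕ) (hN : 0 < N) (hr : r < N) (hpar : Even r ∨ Even N) :
    ∃ (H : SimpleGraph (Fin N)) (_ : DecidableRel H.Adj), ∀ v, H.degree v = r := by
  haveI : NeZero N := ⟨hN.ne'⟩
  classical
  set k := r / 2 with hk
  have hk2 : 2 * k < N := by omega
  set I₁ : Finset (Fin N) := (Finset.Icc 1 k).image (fun j : ℕ => (j : Fin N)) with hI₁
  set I₂ : Finset (Fin N) := (Finset.Icc 1 k).image (fun j : ℕ => -(j : Fin N)) with hI₂
  have hval₁ : ∀ j : ℕ, j ∈ Finset.Icc 1 k → ((j : Fin N)).val = j := by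
    intro j hj
    rw [Finset.mem_Icc] at hj
    exact Fin.val_cast_of_lt (by omega)
  have hval₂ : ∀ j : ℕ, j ∈ Finset.Icc 1 k → ((-(j : Fin N))).val = N - j := by
    intro j hj
    have hj' := hj
    rw [Finset.mem_Icc] at hj'
    rw [Fin.coe_neg, hval₁ j hj]
    exact Nat.mod_eq_of_lt (by omega)
  have hmem₁ : ∀ x ∈ I₁, 1 ≤ x.val ∧ x.val ≤ k := by
    intro x hx
    rw [hI₁, Finset.mem_image] at hx
    obtain ⟨j, hj, rfl⟩ := hx
    rw [hval₁ j hj]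
    rw [Finset.mem_Icc] at hj
    omega
  have hmem₂ : ∀ x ∈ I₂, N - k ≤ x.val ∧ x.val ≤ N - 1 := by
    intro x hx
    rw [hI₂, Finset.mem_image] at hx
    obtain ⟨j, hj, rfl⟩ := hx
    rw [hval₂ j hj]
    rw [Finset.mem_Icc] at hj
    omega
  have hcard₁ : I₁.card = k := by
    rw [hI₁, Finset.card_image_of_injOn, Nat.card_Icc]
    · omega
    · intro a ha b hb hab
      simp only [Finset.mem_coe] at ha hb
      have h' : ((a : ℕ) : Fin N) = ((b : ℕ) : Fin N) := hab
      calc a = ((a : ℕ) : Fin N).val := (hval₁ a ha).symm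
        _ = ((b : ℕ) : Fin N).val := by rw [h']
        _ = b := hval₁ b hb
  have hcard₂ : I₂.card = k := by
    rw [hI₂, Finset.card_image_of_injOn, Nat.card_Icc]
    · omega
    · intro a ha b hb hab
      simp only [Finset.mem_coe] at ha hb
      have h' : (-((a : ℕ) : Fin N)) = (-((b : ℕ) : Fin N)) := hab
      have ha' := Finset.mem_Icc.mp ha
      have hb' := Finset.mem_Icc.mp hb
      have hv : (-((a : ℕ) : Fin N)).val = (-((b : ℕ) : Fin N)).val := by rw [h']
      rw [hval₂ a ha, hval₂ b hb] at hv
      omega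
  have hdisj : Disjoint I₁ I₂ := by
    rw [Finset.disjoint_left]
    intro x hx₁ hx₂
    have h1 := hmem₁ x hx₁
    have h2 := hmem₂ x hx₂
    omega
  -- the jump set
  set J : Finset (Fin N) :=
    if Even r then I₁ ∪ I₂ else insert ((N / 2 : ℕ) : Fin N) (I₁ ∪ I₂) with hJ
  have hNeven : ¬ Even r → Even N := fun h => (hpar.resolve_left h)
  have hvalc : ¬ Even r → (((N / 2 : ℕ) : Fin N)).val = N / 2 := by
    intro h
    exact Fin.val_cast_of_lt (by omega)
  have hcnotmem : ¬ Even r → ((N / 2 : ℕ) : Fin N) ∉ I₁ ∪ I₂ := by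
    intro h hx
    have hNe := hNeven h
    rw [Nat.even_iff] at hNe
    have hrodd : r % 2 = 1 := by rw [Nat.even_iff] at h; omega
    rcases Finset.mem_union.mp hx with hx | hx
    · have := hmem₁ _ hx
      rw [hvalc h] at this
      omega
    · have := hmem₂ _ hx
      rw [hvalc h] at this
      omega
  have hJcard : J.card = r := by
    rw [hJ]
    by_cases h : Even r
    · rw [if_pos h, Finset.card_union_of_disjoint hdisj, hcard₁, hcard₂]
      rw [Nat.even_iff] at h
      omega
    · rw [if_neg h, Finset.card_insert_of_notMem (hcnotmem h),
        Finset.card_union_of_disjoint hdisj, hcard₁, hcard₂]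
      rw [Nat.even_iff] at h
      omega
  have hJ0 : (0 : Fin N) ∉ J := by
    intro h0
    rw [hJ] at h0
    have hval0 : (0 : Fin N).val = 0 := rfl
    by_cases h : Even r
    · rw [if_pos h] at h0
      rcases Finset.mem_union.mp h0 with hx | hx
      · have := hmem₁ _ hx; omega
      · have := hmem₂ _ hx; omega
    · rw [if_neg h] at h0
      rcases Finset.mem_insert.mp h0 with hx | hx
      · have := hvalc h
        rw [← hx] at this
        have hNe := hNeven h
        rw [Nat.even_iff] at hNe
        omega
      · rcases Finset.mem_union.mp hx with hx | hx
        · have := hmem₁ _ hx; omega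
        · have := hmem₂ _ hx; omega
  have hsymm : ∀ x ∈ J, -x ∈ J := by
    intro x hx
    rw [hJ] at hx ⊢
    have hcore : ∀ y ∈ I₁ ∪ I₂, -y ∈ I₁ ∪ I₂ := by
      intro y hy
      rcases Finset.mem_union.mp hy with hy | hy
      · rw [hI₁, Finset.mem_image] at hy
        obtain ⟨j, hj, rfl⟩ := hy
        exact Finset.mem_union_right _ (by rw [hI₂]; exact Finset.mem_image_of_mem _ hj)
      · rw [hI₂, Finset.mem_image] at hy
        obtain ⟨j, hj, rfl⟩ := hy
        rw [neg_neg]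
        exact Finset.mem_union_left _ (by rw [hI₁]; exact Finset.mem_image_of_mem _ hj)
    by_cases h : Even r
    · rw [if_pos h] at hx ⊢
      exact hcore x hx
    · rw [if_neg h] at hx ⊢
      rcases Finset.mem_insert.mp hx with hx | hx
      · subst hx
        have : ((N / 2 : ℕ) : Fin N) + ((N / 2 : ℕ) : Fin N) = 0 := by
          rw [← Nat.cast_add]
          have hNe := hNeven h
          rw [Nat.even_iff] at hNe
          have : N / 2 + N / 2 = N := by omega
          rw [this, Fin.natCast_self]
        rw [neg_eq_of_add_eq_zero_left this]
        exact Finset.mem_insert_self _ _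
      · exact Finset.mem_insert_of_mem (hcore x hx)
  -- build the graph
  refine ⟨SimpleGraph.circulantGraph (J : Set (Fin N)), inferInstance, ?_⟩
  intro v
  have hadj : ∀ u w : Fin N, (SimpleGraph.circulantGraph (J : Set (Fin N))).Adj u w ↔
      w - u ∈ J := by
    intro u w
    rw [circulantGraph_adj]
    constructor
    · rintro ⟨hne, h | h⟩
      · have := hsymm _ (Finset.mem_coe.mp h)
        rwa [neg_sub] at this
      · exact h
    · intro h
      refine ⟨?_, Or.inr h⟩
      rintro rfl
      rw [sub_self] at h
      exact hJ0 h
  have hnb : (SimpleGraph.circulantGraph (J : Set (Fin N))).neighborFinset v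
      = J.image (fun j => v + j) := by
    ext w
    rw [mem_neighborFinset, hadj, Finset.mem_image]
    constructor
    · intro h
      exact ⟨w - v, h, by ring⟩
    · rintro ⟨j, hj, rfl⟩
      simpa using hj
  rw [← card_neighborFinset_eq_degree, hnb,
    Finset.card_image_of_injective _ (add_right_injective v), hJcard]

lemma ramsey_lower_of_window {m n : ℕ} (G₁ : SimpleGraph (Fin m)) (G₂ : SimpleGraph (Fin n))
    [DecidableRel G₁.Adj] [DecidableRel G₂.Adj] {d₁ d₂ : ℕ}
    (h₁ : G₁.maxDegree = d₁) (h₂ : G₂.maxDegree = d₂) (hd₁ : 2 ≤ d₁) (hd₂ : 2 ≤ d₂)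
    (B : ℕ)
    (hB : ∀ N, 0 < N → N < B → ∃ r, r < N ∧ (Even r ∨ Even N) ∧ r + 1 ≤ d₁ ∧ N ≤ r + d₂) :
    B ≤ ramsey G₁ G₂ := by
  rw [ramsey]
  refine le_csInf (ramsey_set_nonempty G₁ G₂) ?_
  rintro N ⟨hN0, hN⟩
  by_contra hlt
  push_neg at hlt
  obtain ⟨r, hrN, hpar, hrd₁, hrd₂⟩ := hB N hN0 hlt
  obtain ⟨H, hdec, hH⟩ := exists_regular_graph N r hN0 hrN hpar
  rcases hN H with hc | hc
  · exact not_contains_of_degree_lt h₁ (by omega) (fun v => by rw [hH]; omega) hc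
  · refine not_contains_of_degree_lt h₂ (by omega) (fun v => ?_) hc
    rw [degree_compl, hH, Fintype.card_fin]
    omega

end Aux

theorem stmt2 {m n : ℕ} (G₁ : SimpleGraph (Fin m)) (G₂ : SimpleGraph (Fin n))
    [DecidableRel G₁.Adj] [DecidableRel G₂.Adj] (d₁ d₂ : ℕ)
    (h₁ : G₁.maxDegree = d₁) (h₂ : G₂.maxDegree = d₂)
    (hd₁ : 2 ≤ d₁) (hd₂ : 2 ≤ d₂) :
    (Even ((d₁ - 1) * (d₂ - 1)) → d₁ + d₂ ≤ ramsey G₁ G₂) ∧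
    (¬ Even ((d₁ - 1) * (d₂ - 1)) → d₁ + d₂ - 1 ≤ ramsey G₁ G₂) := by
  constructor
  · intro hev
    rcases Nat.even_mul.mp hev with h' | h' <;> rw [Nat.even_iff] at h' <;>
    · refine ramsey_lower_of_window G₁ G₂ h₁ h₂ hd₁ hd₂ _ ?_
      intro N hN0 hNB
      by_cases h : (N - d₂) % 2 = 0
      · exact ⟨N - d₂, by omega, Or.inl (Nat.even_iff.mpr h), by omega, by omega⟩
      · by_cases h2 : N - d₂ + 2 ≤ d₁
        · exact ⟨N - d₂ + 1, by omega, Or.inl (Nat.even_iff.mpr (by omega)), by omega, by omega⟩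
        · exact ⟨N - d₂, by omega, Or.inr (Nat.even_iff.mpr (by omega)), by omega, by omega⟩
  · intro hodd
    have hpar : (d₁ - 1) % 2 = 1 ∧ (d₂ - 1) % 2 = 1 := by
      rw [Nat.even_mul, Nat.even_iff, Nat.even_iff] at hodd
      push_neg at hodd
      omega
    refine ramsey_lower_of_window G₁ G₂ h₁ h₂ hd₁ hd₂ _ ?_
    intro N hN0 hNB
    by_cases h : (N - d₂) % 2 = 0
    · exact ⟨N - d₂, by omega, Or.inl (Nat.even_iff.mpr h), by omega, by omega⟩
    · exact ⟨N - d₂ + 1, by omega, Or.inl (Nat.even_iff.mpr (by omega)), by omega, by omega⟩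
end

section
/- For integers p ≥ n-1 ≥ 1, the maximum number of edges in a simple graph on p vertices containing no vertex of degree at least n-1 equals ⌊(n-2)p/2⌋. -/
open SimpleGraph

section TuranStarHelpers

open Finset


section Helpers

set_option linter.unusedSectionVars false

variable {p : ℕ} [NeZero p]

lemma castInj {i j : ℕ} (hi : i < p) (hj : j < p) (h : (i : ZMod p) = j) : i = j := by
  have := congrArg ZMod.val h
  rwa [ZMod.val_cast_of_lt hi, ZMod.val_cast_of_lt hj] at this

lemma cast_add_ne {i j : ℕ} (h1 : 0 < i + j) (h2 : i + j < p) :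
    (i : ZMod p) ≠ -(j : ZMod p) := by
  intro h
  have h3 : ((i + j : ℕ) : ZMod p) = 0 := by push_cast; rw [h]; ring
  rw [ZMod.natCast_eq_zero_iff] at h3
  have := Nat.le_of_dvd h1 h3
  omega

lemma cast_add_ne2 {i j : ℕ} (h1 : p < i + j) (h2 : i + j < 2 * p) :
    (i : ZMod p) ≠ -(j : ZMod p) := by
  intro h
  have h3 : ((i + j : ℕ) : ZMod p) = 0 := by push_cast; rw [h]; ring
  rw [ZMod.natCast_eq_zero_iff] at h3
  have h4 : p ∣ (i + j - p) := Nat.dvd_sub h3 dvd_rfl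
  have := Nat.le_of_dvd (by omega) h4
  omega

lemma cast_shift {i : ℕ} (hi : p ≤ i) : ((i : ℕ) : ZMod p) = ((i - p : ℕ) : ZMod p) := by
  have : i = (i - p) + p := by omega
  rw [this, Nat.cast_add, ZMod.natCast_self, add_zero]
  congr 1
  omega

/-- circulant graph -/
def circ (S : Finset (ZMod p)) : SimpleGraph (ZMod p) :=
  SimpleGraph.fromRel (fun x y => y - x ∈ S)

lemma circ_adj (S : Finset (ZMod p)) (hsym : ∀ a ∈ S, -a ∈ S) (h0 : (0:ZMod p) ∉ S)
    {x y : ZMod p} : (circ S).Adj x y ↔ y - x ∈ S := by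
  simp only [circ, fromRel_adj]
  constructor
  · rintro ⟨hne, h | h⟩
    · exact h
    · have := hsym _ h; rwa [neg_sub] at this
  · intro h
    refine ⟨?_, Or.inl h⟩
    rintro rfl
    rw [sub_self] at h
    exact h0 h

lemma circ_nf (S : Finset (ZMod p)) (hsym : ∀ a ∈ S, -a ∈ S) (h0 : (0:ZMod p) ∉ S)
    (x : ZMod p) [DecidableRel (circ S).Adj] :
    (circ S).neighborFinset x = S.image (fun a => x + a) := by
  ext y
  simp only [mem_neighborFinset, mem_image, circ_adj S hsym h0]
  constructor
  · intro h; exact ⟨y - x, h, by ring⟩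
  · rintro ⟨a, ha, rfl⟩; simpa using ha

lemma circ_degree (S : Finset (ZMod p)) (hsym : ∀ a ∈ S, -a ∈ S) (h0 : (0:ZMod p) ∉ S)
    (x : ZMod p) [DecidableRel (circ S).Adj] : (circ S).degree x = S.card := by
  show ((circ S).neighborFinset x).card = S.card
  rw [circ_nf S hsym h0, card_image_of_injective _ (add_right_injective x)]

/-- near-perfect matching graph: each a ∈ A matched to a + m -/
def matchG (m : ZMod p) (A : Finset (ZMod p)) : SimpleGraph (ZMod p) :=
  SimpleGraph.fromRel (fun x y => x ∈ A ∧ y = x + m)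

lemma matchG_nf (m : ZMod p) (hm : m ≠ 0) (A : Finset (ZMod p)) (y : ZMod p)
    [DecidableRel (matchG m A).Adj] :
    (matchG m A).neighborFinset y =
      (if y ∈ A then {y + m} else ∅) ∪ (if y - m ∈ A then {y - m} else ∅) := by
  ext z
  rw [mem_neighborFinset]
  simp only [matchG, fromRel_adj, mem_union]
  constructor
  · rintro ⟨hne, ⟨hyA, rfl⟩ | ⟨hzA, hy⟩⟩
    · left; simp [hyA]
    · right
      have hz : z = y - m := by rw [hy]; ring
      rw [hz] at hzA ⊢
      simp [hzA]
  · intro h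
    rcases h with h | h
    · by_cases hyA : y ∈ A
      · simp only [if_pos hyA, mem_singleton] at h
        subst h
        exact ⟨fun he => hm (left_eq_add.mp he), Or.inl ⟨hyA, rfl⟩⟩
      · simp [if_neg hyA] at h
    · by_cases hyA : y - m ∈ A
      · simp only [if_pos hyA, mem_singleton] at h
        subst h
        exact ⟨fun he => hm (sub_eq_self.mp he.symm), Or.inr ⟨hyA, by ring⟩⟩
      · simp [if_neg hyA] at h

lemma matchG_degree (m : ZMod p) (hm : m ≠ 0) (A : Finset (ZMod p))
    (hA : ∀ y, ¬(y ∈ A ∧ y - m ∈ A)) (y : ZMod p) [DecidableRel (matchG m A).Adj] :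
    (matchG m A).degree y = if (y ∈ A ∨ y - m ∈ A) then 1 else 0 := by
  show ((matchG m A).neighborFinset y).card = _
  rw [matchG_nf m hm A y]
  by_cases h1 : y ∈ A <;> by_cases h2 : y - m ∈ A
  · exact absurd ⟨h1, h2⟩ (hA y)
  · simp [h1, h2]
  · simp [h1, h2]
  · simp [h1, h2]

lemma matchG_sum_degree (m : ZMod p) (hm : m ≠ 0) (A : Finset (ZMod p))
    (hA : ∀ y, ¬(y ∈ A ∧ y - m ∈ A)) [DecidableRel (matchG m A).Adj] :
    ∑ y, (matchG m A).degree y = 2 * A.card := by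
  classical
  have h1 : ∑ y, (matchG m A).degree y
      = ∑ y, (if (y ∈ A ∨ y - m ∈ A) then 1 else 0) :=
    Finset.sum_congr rfl fun y _ => matchG_degree m hm A hA y
  have h2 : ∑ y, (if (y ∈ A ∨ y - m ∈ A) then 1 else 0)
      = (Finset.univ.filter (fun y : ZMod p => y ∈ A ∨ y - m ∈ A)).card := by
    rw [← Nat.cast_id ((Finset.univ.filter (fun y : ZMod p => y ∈ A ∨ y - m ∈ A)).card),
      ← Finset.sum_boole]
  rw [h1, h2, Finset.filter_or, Finset.card_union_of_disjoint, Finset.filter_univ_mem]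
  · have h3 : Finset.univ.filter (fun y : ZMod p => y - m ∈ A) = A.image (fun a => a + m) := by
      ext z
      simp only [Finset.mem_filter, Finset.mem_univ, true_and, Finset.mem_image]
      constructor
      · intro h; exact ⟨z - m, h, by ring⟩
      · rintro ⟨a, ha, rfl⟩; simpa using ha
    rw [h3, Finset.card_image_of_injective _ (add_left_injective m)]
    ring
  · rw [Finset.disjoint_left]
    intro z hz1 hz2
    simp only [Finset.mem_filter] at hz1 hz2
    exact hA z ⟨hz1.2, hz2.2⟩

/-- symmetric set {±1, ..., ±k} -/
def Sk (p k : ℕ) : Finset (ZMod p) :=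
  ((Finset.Icc 1 k).image (fun i : ℕ => (i : ZMod p))) ∪
    ((Finset.Icc 1 k).image (fun i : ℕ => -(i : ZMod p)))

lemma mem_Sk {k : ℕ} {x : ZMod p} :
    x ∈ Sk p k ↔ ∃ i, 1 ≤ i ∧ i ≤ k ∧ ((i : ZMod p) = x ∨ -(i : ZMod p) = x) := by
  simp only [Sk, Finset.mem_union, Finset.mem_image, Finset.mem_Icc]
  constructor
  · rintro (⟨i, ⟨h1, h2⟩, h3⟩ | ⟨i, ⟨h1, h2⟩, h3⟩)
    · exact ⟨i, h1, h2, Or.inl h3⟩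
    · exact ⟨i, h1, h2, Or.inr h3⟩
  · rintro ⟨i, h1, h2, h3 | h3⟩
    · exact Or.inl ⟨i, ⟨h1, h2⟩, h3⟩
    · exact Or.inr ⟨i, ⟨h1, h2⟩, h3⟩

lemma Sk_symm {k : ℕ} : ∀ a ∈ Sk p k, -a ∈ Sk p k := by
  intro a ha
  rw [mem_Sk] at ha ⊢
  obtain ⟨i, h1, h2, h3 | h3⟩ := ha
  · exact ⟨i, h1, h2, Or.inr (by rw [h3])⟩
  · exact ⟨i, h1, h2, Or.inl (by rw [← h3, neg_neg])⟩

lemma Sk_zero_not_mem {k : ℕ} (hk : k < p) : (0 : ZMod p) ∉ Sk p k := by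
  rw [mem_Sk]
  rintro ⟨i, h1, h2, h3 | h3⟩
  · have := castInj (p := p) (by omega) (by omega) (h3.trans (Nat.cast_zero).symm)
    omega
  · rw [neg_eq_zero] at h3
    have := castInj (p := p) (by omega) (by omega) (h3.trans (Nat.cast_zero).symm)
    omega

lemma Sk_card {k : ℕ} (hk : 2 * k < p) : (Sk p k).card = 2 * k := by
  have hinj : Set.InjOn (fun i : ℕ => (i : ZMod p)) (Finset.Icc 1 k) := by
    intro i hi j hj h
    simp only [Finset.coe_Icc, Set.mem_Icc] at hi hj
    exact castInj (by omega) (by omega) h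
  have hinj2 : Set.InjOn (fun i : ℕ => -(i : ZMod p)) (Finset.Icc 1 k) := by
    intro i hi j hj h
    exact hinj hi hj (neg_injective h)
  rw [Sk, Finset.card_union_of_disjoint, Finset.card_image_of_injOn hinj,
    Finset.card_image_of_injOn hinj2, Nat.card_Icc]
  · omega
  · rw [Finset.disjoint_left]
    rintro x hx1 hx2
    simp only [Finset.mem_image, Finset.mem_Icc] at hx1 hx2
    obtain ⟨i, ⟨hi1, hi2⟩, rfl⟩ := hx1
    obtain ⟨j, ⟨hj1, hj2⟩, hj3⟩ := hx2
    exact cast_add_ne (by omega) (by omega) hj3.symm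

lemma sup_nf (G H : SimpleGraph (ZMod p)) [DecidableRel G.Adj] [DecidableRel H.Adj]
    [DecidableRel (G ⊔ H).Adj] (x : ZMod p) :
    (G ⊔ H).neighborFinset x = G.neighborFinset x ∪ H.neighborFinset x := by
  ext y
  simp [mem_neighborFinset]

lemma exists_H (p d : ℕ) [NeZero p] (hd : d < p) :
    ∃ (H : SimpleGraph (ZMod p)) (_ : DecidableRel H.Adj),
      (∀ v, H.degree v ≤ d) ∧ ∑ v, H.degree v = d * p - d * p % 2 := by
  have hp : 0 < p := Nat.pos_of_ne_zero (NeZero.ne p)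
  rcases Nat.even_or_odd d with hdeven | hdodd
  · -- d even : circulant Sk (d/2)
    obtain ⟨k, hk⟩ := hdeven
    have h2k : 2 * k < p := by omega
    have h0 : (0 : ZMod p) ∉ Sk p k := Sk_zero_not_mem (by omega)
    letI instH : DecidableRel (circ (Sk p k)).Adj := Classical.decRel _
    refine ⟨circ (Sk p k), instH, ?_, ?_⟩
    · intro v
      rw [circ_degree _ Sk_symm h0, Sk_card h2k]
      omega
    · have hmod : d * p % 2 = 0 := by
        rw [Nat.mul_mod]
        have h2 : d % 2 = 0 := by omega
        rw [h2]
        simp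
      rw [hmod]
      calc ∑ v, (circ (Sk p k)).degree v = ∑ _v : ZMod p, 2 * k :=
            Finset.sum_congr rfl fun v _ => by rw [circ_degree _ Sk_symm h0, Sk_card h2k]
        _ = d * p - 0 := by
            rw [Finset.sum_const, Finset.card_univ, ZMod.card, smul_eq_mul,
              Nat.sub_zero, hk]
            ring
  · rcases Nat.even_or_odd p with hpeven | hpodd
    · -- d odd, p even : circulant Sk (d/2) ∪ {p/2}
      obtain ⟨k, hk⟩ := hdodd
      obtain ⟨l, hl⟩ := hpeven
      set m₂ : ZMod p := ((p / 2 : ℕ) : ZMod p) with hm₂def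
      have hm₂not : m₂ ∉ Sk p k := by
        rw [mem_Sk]
        rintro ⟨i, h1, h2, h3 | h3⟩
        · have := castInj (p := p) (by omega) (by omega) h3
          omega
        · exact cast_add_ne (p := p) (i := p / 2) (j := i) (by omega) (by omega) h3.symm
      have hneg : -m₂ = m₂ := by
        apply neg_eq_of_add_eq_zero_left
        rw [hm₂def, ← Nat.cast_add]
        have : p / 2 + p / 2 = p := by omega
        rw [this, ZMod.natCast_self]
      have hm₂0 : m₂ ≠ 0 := by
        intro h
        have := castInj (p := p) (by omega) (by omega)
          (h.trans (Nat.cast_zero (R := ZMod p)).symm)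
        omega
      set S : Finset (ZMod p) := insert m₂ (Sk p k) with hSdef
      have hsym : ∀ a ∈ S, -a ∈ S := by
        intro a ha
        rw [hSdef, Finset.mem_insert] at ha ⊢
        rcases ha with rfl | ha
        · exact Or.inl hneg
        · exact Or.inr (Sk_symm a ha)
      have h0 : (0 : ZMod p) ∉ S := by
        rw [hSdef, Finset.mem_insert]
        rintro (h | h)
        · exact hm₂0 h.symm
        · exact Sk_zero_not_mem (by omega) h
      have hcard : S.card = d := by
        rw [hSdef, Finset.card_insert_of_notMem hm₂not, Sk_card (by omega)]
        omega
      letI instH : DecidableRel (circ S).Adj := Classical.decRel _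
      refine ⟨circ S, instH, ?_, ?_⟩
      · intro v
        rw [circ_degree _ hsym h0, hcard]
      · have hmod : d * p % 2 = 0 := by
          rw [Nat.mul_mod]
          have h2 : p % 2 = 0 := by omega
          rw [h2]
          simp
        rw [hmod]
        calc ∑ v, (circ S).degree v = ∑ _v : ZMod p, d :=
              Finset.sum_congr rfl fun v _ => by rw [circ_degree _ hsym h0, hcard]
          _ = d * p - 0 := by
              rw [Finset.sum_const, Finset.card_univ, ZMod.card, smul_eq_mul,
                Nat.sub_zero]
              ring
    · -- d odd, p odd
      obtain ⟨k, hk⟩ := hdodd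
      obtain ⟨l, hl⟩ := hpodd
      have hkl : k < l := by omega
      have hl1 : 1 ≤ l := by omega
      set m' : ZMod p := ((l : ℕ) : ZMod p) with hm'def
      have hm'0 : m' ≠ 0 := by
        intro h
        have := castInj (p := p) (i := l) (j := 0) (by omega) (by omega)
          (h.trans (Nat.cast_zero (R := ZMod p)).symm)
        omega
      set A : Finset (ZMod p) :=
        insert (0 : ZMod p) ((Finset.Icc (l + 2) (p - 1)).image (fun i : ℕ => (i : ZMod p)))
        with hAdef
      have mem_A : ∀ x : ZMod p,
          x ∈ A ↔ x = 0 ∨ ∃ i, l + 2 ≤ i ∧ i ≤ p - 1 ∧ (i : ZMod p) = x := by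
        intro x
        rw [hAdef]
        simp only [Finset.mem_insert, Finset.mem_image, Finset.mem_Icc]
        constructor
        · rintro (h | ⟨i, ⟨hi1, hi2⟩, hi3⟩)
          · exact Or.inl h
          · exact Or.inr ⟨i, hi1, hi2, hi3⟩
        · rintro (h | ⟨i, hi1, hi2, hi3⟩)
          · exact Or.inl h
          · exact Or.inr ⟨i, ⟨hi1, hi2⟩, hi3⟩
      have card_A : A.card = l := by
        rw [hAdef, Finset.card_insert_of_notMem, Finset.card_image_of_injOn, Nat.card_Icc]
        · omega
        · intro i hi j hj h
          simp only [Finset.coe_Icc, Set.mem_Icc] at hi hj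
          exact castInj (by omega) (by omega) h
        · rw [Finset.mem_image]
          rintro ⟨i, hi, h⟩
          rw [Finset.mem_Icc] at hi
          have := castInj (p := p) (i := i) (j := 0) (by omega) (by omega)
            (h.trans (Nat.cast_zero (R := ZMod p)).symm)
          omega
      have hA : ∀ y, ¬(y ∈ A ∧ y - m' ∈ A) := by
        rintro y ⟨hy1, hy2⟩
        rw [mem_A] at hy1 hy2
        rcases hy1 with rfl | ⟨j, hj1, hj2, hj3⟩
        · rcases hy2 with h | ⟨i, hi1, hi2, hi3⟩
          · rw [zero_sub, neg_eq_zero] at h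
            exact hm'0 h
          · rw [zero_sub] at hi3
            have : ((i : ℕ) : ZMod p) = -((l : ℕ) : ZMod p) := hi3
            exact cast_add_ne2 (by omega) (by omega) this
        · rcases hy2 with h | ⟨i, hi1, hi2, hi3⟩
          · rw [sub_eq_zero] at h
            have : j = l := castInj (by omega) (by omega) (hj3.trans h)
            omega
          · have h5 : ((i + l : ℕ) : ZMod p) = (j : ZMod p) := by
              push_cast
              rw [hi3, hm'def]
              push_cast
              rw [hj3]
              ring
            rw [cast_shift (by omega)] at h5
            have := castInj (p := p) (i := i + l - p) (j := j) (by omega) (by omega) h5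
            omega
      have h2k : 2 * k < p := by omega
      have h0 : (0 : ZMod p) ∉ Sk p k := Sk_zero_not_mem (by omega)
      have hm'Sk : m' ∉ Sk p k := by
        rw [mem_Sk]
        rintro ⟨i, hi1, hi2, h | h⟩
        · have := castInj (p := p) (i := i) (j := l) (by omega) (by omega) h
          omega
        · exact cast_add_ne (p := p) (i := l) (j := i) (by omega) (by omega) h.symm
      have hm'Sk' : -m' ∉ Sk p k := by
        intro h
        have := Sk_symm _ h
        rw [neg_neg] at this
        exact hm'Sk this
      letI instC : DecidableRel (circ (Sk p k)).Adj := Classical.decRel _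
      letI instM : DecidableRel (matchG m' A).Adj := Classical.decRel _
      letI instH : DecidableRel (circ (Sk p k) ⊔ matchG m' A).Adj := Classical.decRel _
      have hdisj : ∀ y : ZMod p,
          Disjoint ((circ (Sk p k)).neighborFinset y) ((matchG m' A).neighborFinset y) := by
        intro y
        rw [Finset.disjoint_left]
        intro z hz1 hz2
        rw [mem_neighborFinset, circ_adj _ Sk_symm h0] at hz1
        rw [matchG_nf m' hm'0 A, Finset.mem_union] at hz2
        rcases hz2 with h | h
        · by_cases hyA : y ∈ A
          · rw [if_pos hyA, Finset.mem_singleton] at h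
            subst h
            apply hm'Sk
            have : y + m' - y = m' := by ring
            rwa [this] at hz1
          · rw [if_neg hyA] at h
            exact absurd h (Finset.notMem_empty z)
        · by_cases hyA : y - m' ∈ A
          · rw [if_pos hyA, Finset.mem_singleton] at h
            subst h
            apply hm'Sk'
            have : y - m' - y = -m' := by ring
            rwa [this] at hz1
          · rw [if_neg hyA] at h
            exact absurd h (Finset.notMem_empty z)
      have hdeg : ∀ y : ZMod p,
          (circ (Sk p k) ⊔ matchG m' A).degree y = 2 * k + (matchG m' A).degree y := by
        intro y
        show ((circ (Sk p k) ⊔ matchG m' A).neighborFinset y).card = _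
        rw [sup_nf, Finset.card_union_of_disjoint (hdisj y)]
        congr 1
        rw [circ_nf _ Sk_symm h0, Finset.card_image_of_injective _ (add_right_injective y),
          Sk_card h2k]
      refine ⟨circ (Sk p k) ⊔ matchG m' A, instH, ?_, ?_⟩
      · intro v
        rw [hdeg v, matchG_degree m' hm'0 A hA]
        split_ifs <;> omega
      · have hmod : d * p % 2 = 1 := by
          rw [Nat.mul_mod]
          have e1 : d % 2 = 1 := by omega
          have e2 : p % 2 = 1 := by omega
          rw [e1, e2]
        rw [hmod]
        have hdp : d * p = (p * (2 * k) + 2 * l) + 1 := by rw [hk, hl]; ring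
        rw [hdp, Nat.add_sub_cancel]
        calc ∑ v, (circ (Sk p k) ⊔ matchG m' A).degree v
            = ∑ v, (2 * k + (matchG m' A).degree v) :=
              Finset.sum_congr rfl fun v _ => hdeg v
          _ = p * (2 * k) + 2 * l := by
              rw [Finset.sum_add_distrib, Finset.sum_const, Finset.card_univ, ZMod.card,
                smul_eq_mul, matchG_sum_degree m' hm'0 A hA, card_A]

set_option maxHeartbeats 1000000 in
lemma exists_G (p d : ℕ) [NeZero p] (hd : d < p) :
    ∃ (G : SimpleGraph (Fin p)) (_ : DecidableRel G.Adj),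
      (∀ v, G.degree v ≤ d) ∧ G.edgeFinset.card = d * p / 2 := by
  obtain ⟨H, instH, hdeg, hsum⟩ := exists_H p d hd
  let e : Fin p ≃ ZMod p := (Fintype.equivFinOfCardEq (ZMod.card p)).symm
  let G : SimpleGraph (Fin p) := H.comap e
  letI instG : DecidableRel G.Adj := fun a b => instH (e a) (e b)
  have hGdeg : ∀ a, G.degree a = H.degree (e a) := by
    intro a
    show (G.neighborFinset a).card = (H.neighborFinset (e a)).card
    rw [← Finset.card_image_of_injective (G.neighborFinset a) e.injective]
    congr 1
    ext z
    simp only [Finset.mem_image, mem_neighborFinset, comap_adj, G]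
    constructor
    · rintro ⟨b, hb, rfl⟩
      exact hb
    · intro hz
      refine ⟨e.symm z, ?_, e.apply_symm_apply z⟩
      rwa [e.apply_symm_apply]
  have hsum' : ∑ a : Fin p, G.degree a = d * p - d * p % 2 := by
    calc ∑ a : Fin p, G.degree a = ∑ a : Fin p, H.degree (e a) :=
          Finset.sum_congr rfl fun a _ => hGdeg a
      _ = ∑ v : ZMod p, H.degree v := Fintype.sum_equiv e _ _ (fun a => rfl)
      _ = d * p - d * p % 2 := hsum
  have hhs := SimpleGraph.sum_degrees_eq_twice_card_edges G
  refine ⟨G, instG, fun v => by rw [hGdeg]; exact hdeg _, ?_⟩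
  rw [hsum'] at hhs
  generalize hX : d * p = X at hhs ⊢
  omega

lemma upper_bound {p d : ℕ} (G : SimpleGraph (Fin p)) [DecidableRel G.Adj]
    (hdeg : ∀ v, G.degree v ≤ d) : G.edgeFinset.card ≤ d * p / 2 := by
  have h1 : ∑ v, G.degree v ≤ d * p := by
    calc ∑ v, G.degree v ≤ ∑ _v : Fin p, d := Finset.sum_le_sum fun v _ => hdeg v
      _ = d * p := by
          rw [Finset.sum_const, Finset.card_univ, Fintype.card_fin, smul_eq_mul]
          ring
  have hhs := SimpleGraph.sum_degrees_eq_twice_card_edges G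
  rw [hhs] at h1
  generalize hX : d * p = X at h1 ⊢
  omega

end Helpers


end TuranStarHelpers

theorem stmt6 (p n : ℕ) (h1 : 1 ≤ n - 1) (h2 : n - 1 ≤ p) :
    sSup {k | ∃ (G : SimpleGraph (Fin p)) (_ : DecidableRel G.Adj),
      (∀ v, G.degree v < n - 1) ∧ G.edgeFinset.card = k} = (n - 2) * p / 2 := by
  haveI : NeZero p := ⟨by omega⟩
  have hn : n - 1 = (n - 2) + 1 := by omega
  obtain ⟨G, instG, hdeg, hcard⟩ := exists_G p (n - 2) (by omega)
  have hbdd : ∀ k ∈ {k | ∃ (G : SimpleGraph (Fin p)) (_ : DecidableRel G.Adj),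
      (∀ v, G.degree v < n - 1) ∧ G.edgeFinset.card = k}, k ≤ (n - 2) * p / 2 := by
    rintro k ⟨G', instG', hdeg', rfl⟩
    exact upper_bound G' fun v => by have := hdeg' v; omega
  have hmem : (n - 2) * p / 2 ∈ {k | ∃ (G : SimpleGraph (Fin p))
      (_ : DecidableRel G.Adj), (∀ v, G.degree v < n - 1) ∧ G.edgeFinset.card = k} :=
    ⟨G, instG, fun v => by have := hdeg v; omega, hcard⟩
  apply le_antisymm
  · exact csSup_le ⟨_, hmem⟩ hbdd
  · exact le_csSup ⟨(n - 2) * p / 2, hbdd⟩ hmem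
end

section
/- Let n ≥ 6 be an integer and let G_n be a connected graph on n vertices such that ex(2n-5; G_n) < n² - 5n + 4. Then r(G_n, T_n*) = 2n - 5, given that ex(2n-5; T_n*) = n² - 6n + 11. -/
open SimpleGraph

lemma le_exNum {p : ℕ} {W : Type*} {L : SimpleGraph W} {G : SimpleGraph (Fin p)}
    (h : ¬ Contains G L) : G.edgeSet.ncard ≤ exNum p L := by
  apply le_csSup
  · refine ⟨Nat.card (Sym2 (Fin p)), ?_⟩
    rintro k ⟨G', -, rfl⟩
    rw [← Set.ncard_univ]
    exact Set.ncard_le_ncard (Set.subset_univ _) Set.finite_univ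
  · exact ⟨G, h, rfl⟩

lemma edge_sum {p : ℕ} (G : SimpleGraph (Fin p)) :
    G.edgeSet.ncard + Gᶜ.edgeSet.ncard = p.choose 2 := by
  classical
  have hd : Disjoint G.edgeSet Gᶜ.edgeSet := by
    rw [SimpleGraph.disjoint_edgeSet]; exact disjoint_compl_right
  have hu : G.edgeSet ∪ Gᶜ.edgeSet = (⊤ : SimpleGraph (Fin p)).edgeSet := by
    rw [← SimpleGraph.edgeSet_sup, sup_compl_eq_top]
  have h2 := Set.ncard_union_eq hd (Set.toFinite _) (Set.toFinite _)
  rw [hu] at h2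
  rw [← h2, ← SimpleGraph.coe_edgeFinset, Set.ncard_coe_finset,
    SimpleGraph.card_edgeFinset_top_eq_card_choose_two, Fintype.card_fin]

/-- Two cliques: vertices adjacent iff on the same side of the threshold `t`. -/
def splitG (m t : ℕ) : SimpleGraph (Fin m) where
  Adj a b := a ≠ b ∧ ((a.val < t) ↔ (b.val < t))
  symm := ⟨fun a b ⟨h1, h2⟩ => ⟨h1.symm, h2.symm⟩⟩
  loopless := ⟨fun a h => h.1 rfl⟩

lemma splitG_no_conn {n m : ℕ} (hn : 6 ≤ n) (hm : m ≤ 2 * n - 6)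
    (Gn : SimpleGraph (Fin n)) (hconn : Gn.Connected) :
    ¬ Contains (splitG m (n - 3)) Gn := by
  rintro ⟨f, hf⟩
  have key : ∀ u v : Fin n, ((f u).val < n - 3 ↔ (f v).val < n - 3) := by
    intro u v
    obtain ⟨w⟩ := hconn.preconnected u v
    induction w with
    | nil => exact Iff.rfl
    | cons h p ih => exact ((hf _ _ h).2).trans ih
  have v0 : Fin n := ⟨0, by omega⟩
  by_cases h0 : (f ⟨0, by omega⟩).val < n - 3
  · have hall : ∀ u : Fin n, (f u).val < n - 3 := fun u => (key u ⟨0, by omega⟩).mpr h0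
    have F : Fin n → Fin (n - 3) := fun u => ⟨(f u).val, hall u⟩
    have hFinj : Function.Injective (fun u : Fin n => (⟨(f u).val, hall u⟩ : Fin (n - 3))) := by
      intro u v h
      have h' : (f u).val = (f v).val := by simpa [Fin.ext_iff] using h
      exact f.injective (Fin.ext h')
    have := Fintype.card_le_of_injective _ hFinj
    simp only [Fintype.card_fin] at this
    omega
  · have hall : ∀ u : Fin n, ¬ (f u).val < n - 3 := fun u h => h0 ((key u ⟨0, by omega⟩).mp h)
    have hlt : ∀ u : Fin n, (f u).val - (n - 3) < n - 3 := by
      intro u; have := (f u).isLt; have := hall u; omega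
    have hFinj : Function.Injective
        (fun u : Fin n => (⟨(f u).val - (n - 3), hlt u⟩ : Fin (n - 3))) := by
      intro u v h
      have h' : (f u).val - (n - 3) = (f v).val - (n - 3) := by simpa [Fin.ext_iff] using h
      have hu := hall u; have hv := hall v
      exact f.injective (Fin.ext (by omega))
    have := Fintype.card_le_of_injective _ hFinj
    simp only [Fintype.card_fin] at this
    omega

lemma splitG_no_T {n m : ℕ} (hn : 6 ≤ n) (hm : m ≤ 2 * n - 6) :
    ¬ Contains (splitG m (n - 3))ᶜ (Tstar n) := by
  rintro ⟨f, hf⟩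
  -- adjacency in Tstar forces opposite sides
  have hside : ∀ a b : Fin n, (Tstar n).Adj a b →
      ¬ (((f a).val < n - 3) ↔ ((f b).val < n - 3)) := by
    intro a b hab
    have h := hf a b hab
    rw [SimpleGraph.compl_adj] at h
    intro hiff
    exact h.2 ⟨h.1, hiff⟩
  have hA : ∀ i : Fin n, 1 ≤ i.val → i.val ≤ n - 3 → (Tstar n).Adj ⟨0, by omega⟩ i := by
    intro i h1 h2
    rw [Tstar, SimpleGraph.fromRel_adj]
    refine ⟨?_, Or.inl (Or.inl ⟨rfl, h1, h2⟩)⟩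
    simp only [ne_eq, Fin.ext_iff]; omega
  have hB : (Tstar n).Adj ⟨n - 3, by omega⟩ ⟨n - 2, by omega⟩ := by
    rw [Tstar, SimpleGraph.fromRel_adj]
    exact ⟨by simp [Fin.ext_iff]; omega, Or.inl (Or.inr (Or.inl ⟨rfl, rfl⟩))⟩
  have hC : (Tstar n).Adj ⟨n - 2, by omega⟩ ⟨n - 1, by omega⟩ := by
    rw [Tstar, SimpleGraph.fromRel_adj]
    exact ⟨by simp [Fin.ext_iff]; omega, Or.inl (Or.inr (Or.inr ⟨rfl, rfl⟩))⟩
  -- the map g : Fin (n-2) → Fin n hitting v₁,…,v_{n-3},v_{n-1}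
  set g : Fin (n - 2) → Fin n := fun j =>
    if h : j.val + 1 ≤ n - 3 then ⟨j.val + 1, by omega⟩ else ⟨n - 1, by omega⟩ with hg
  have hginj : Function.Injective g := by
    intro j j' h
    have hj := j.isLt; have hj' := j'.isLt
    simp only [hg] at h
    split_ifs at h with h1 h2 h2 <;> simp [Fin.ext_iff] at h ⊢ <;> omega
  have hopp : ∀ j : Fin (n - 2),
      ¬ (((f (g j)).val < n - 3) ↔ ((f ⟨0, by omega⟩).val < n - 3)) := by
    intro j
    by_cases hj : j.val + 1 ≤ n - 3
    · have hgj : g j = ⟨j.val + 1, by omega⟩ := by simp only [hg]; rw [dif_pos hj]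
      rw [hgj]
      have := hside _ _ (hA ⟨j.val + 1, by omega⟩ (by simp) (by simpa using hj))
      tauto
    · have hgj : g j = ⟨n - 1, by omega⟩ := by simp only [hg]; rw [dif_neg hj]
      rw [hgj]
      have h1 := hside _ _ (hA ⟨n - 3, by omega⟩ (by simp; omega) (by simp))
      have h2 := hside _ _ hB
      have h3 := hside _ _ hC
      tauto
  by_cases h0 : (f ⟨0, by omega⟩).val < n - 3
  · have hall : ∀ j : Fin (n - 2), ¬ (f (g j)).val < n - 3 := by
      intro j h; exact hopp j (iff_of_true h h0)
    have hlt : ∀ j : Fin (n - 2), (f (g j)).val - (n - 3) < n - 3 := by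
      intro j; have := (f (g j)).isLt; have := hall j; omega
    have hFinj : Function.Injective
        (fun j : Fin (n - 2) => (⟨(f (g j)).val - (n - 3), hlt j⟩ : Fin (n - 3))) := by
      intro j j' h
      have h' : (f (g j)).val - (n - 3) = (f (g j')).val - (n - 3) := by simpa [Fin.ext_iff] using h
      have hu := hall j; have hv := hall j'
      exact hginj (f.injective (Fin.ext (by omega)))
    have := Fintype.card_le_of_injective _ hFinj
    simp only [Fintype.card_fin] at this
    omega
  · have hall : ∀ j : Fin (n - 2), (f (g j)).val < n - 3 := by
      intro j
      by_contra h
      exact hopp j (iff_of_false h h0)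
    have hFinj : Function.Injective
        (fun j : Fin (n - 2) => (⟨(f (g j)).val, hall j⟩ : Fin (n - 3))) := by
      intro j j' h
      have h' : (f (g j)).val = (f (g j')).val := by simpa [Fin.ext_iff] using h
      exact hginj (f.injective (Fin.ext h'))
    have := Fintype.card_le_of_injective _ hFinj
    simp only [Fintype.card_fin] at this
    omega

theorem stmt7 (n : ℕ) (hn : 6 ≤ n) (Gn : SimpleGraph (Fin n)) (hconn : Gn.Connected)
    (hex : exNum (2 * n - 5) Gn < n ^ 2 - 5 * n + 4)
    (hexT : exNum (2 * n - 5) (Tstar n) = n ^ 2 - 6 * n + 11) :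
    ramsey Gn (Tstar n) = 2 * n - 5 := by
  have hmem : (2 * n - 5) ∈ {N | 0 < N ∧
      ∀ G : SimpleGraph (Fin N), Contains G Gn ∨ Contains Gᶜ (Tstar n)} := by
    refine ⟨by omega, fun G => ?_⟩
    by_contra h
    push_neg at h
    obtain ⟨h1, h2⟩ := h
    have e1 : G.edgeSet.ncard ≤ exNum (2 * n - 5) Gn := le_exNum h1
    have e2 : Gᶜ.edgeSet.ncard ≤ exNum (2 * n - 5) (Tstar n) := le_exNum h2
    have e3 := edge_sum G
    rw [hexT] at e2
    obtain ⟨k, rfl⟩ : ∃ k, n = k + 6 := ⟨n - 6, by omega⟩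
    have hc : (2 * (k + 6) - 5).choose 2 = 2 * (k * k) + 13 * k + 21 := by
      rw [show 2 * (k + 6) - 5 = 2 * k + 7 by omega, Nat.choose_two_right,
        show 2 * k + 7 - 1 = 2 * (k + 3) by omega,
        Nat.mul_div_assoc _ (dvd_mul_right 2 (k + 3)), Nat.mul_div_cancel_left _ two_pos]
      ring
    have h4 : (k + 6) ^ 2 - 5 * (k + 6) + 4 = k * k + 7 * k + 10 := by
      have : (k + 6) ^ 2 = k * k + 12 * k + 36 := by ring
      omega
    have h5 : (k + 6) ^ 2 - 6 * (k + 6) + 11 = k * k + 6 * k + 11 := by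
      have : (k + 6) ^ 2 = k * k + 12 * k + 36 := by ring
      omega
    rw [h4] at hex
    rw [h5] at e2
    rw [hc] at e3
    have e4 : G.edgeSet.ncard < k * k + 7 * k + 10 := lt_of_le_of_lt e1 hex
    generalize k * k = a at e2 e3 e4
    omega
  apply le_antisymm
  · exact Nat.sInf_le hmem
  · apply le_csInf ⟨_, hmem⟩
    rintro m ⟨hm0, hm⟩
    by_contra h
    push_neg at h
    have hm6 : m ≤ 2 * n - 6 := by omega
    rcases hm (splitG m (n - 3)) with hc | hc
    · exact splitG_no_conn hn hm6 Gn hconn hc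
    · exact splitG_no_T hn hm6 hc
end

section
/- For every integer n ≥ 8, r(T_n*, T_n*) = 2n - 5. -/
open SimpleGraph

open Finset

set_option maxHeartbeats 1000000
lemma tstar_adj1 {n : ℕ} (hn : 8 ≤ n) (z i : Fin n) (hz : z.val = 0)
    (h1 : 1 ≤ i.val) (h2 : i.val ≤ n - 3) : (Tstar n).Adj z i := by
  rw [Tstar, fromRel_adj]
  exact ⟨fun he => by rw [he] at hz; omega, Or.inl (Or.inl ⟨hz, h1, h2⟩)⟩

lemma tstar_adj2 {n : ℕ} (hn : 8 ≤ n) (i j : Fin n) (hi : i.val = n - 3)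
    (hj : j.val = n - 2) : (Tstar n).Adj i j := by
  rw [Tstar, fromRel_adj]
  exact ⟨fun he => by rw [he] at hi; omega, Or.inl (Or.inr (Or.inl ⟨hi, hj⟩))⟩

lemma tstar_adj3 {n : ℕ} (hn : 8 ≤ n) (i j : Fin n) (hi : i.val = n - 2)
    (hj : j.val = n - 1) : (Tstar n).Adj i j := by
  rw [Tstar, fromRel_adj]
  exact ⟨fun he => by rw [he] at hi; omega, Or.inl (Or.inr (Or.inr ⟨hi, hj⟩))⟩

lemma lowerconstr (n m : ℕ) (hn : 8 ≤ n) (hm : m ≤ 2 * n - 6) :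
    ∃ H : SimpleGraph (Fin m), ¬ Contains H (Tstar n) ∧ ¬ Contains Hᶜ (Tstar n) := by
  set H : SimpleGraph (Fin m) :=
    SimpleGraph.fromRel (fun a b => (a.val < n - 3 ↔ b.val < n - 3)) with hH
  have cardlt : (univ.filter (fun v : Fin m => v.val < n - 3)).card ≤ n - 3 := by
    have := Finset.card_le_card_of_injOn
      (f := fun v : Fin m => (⟨v.val % (n - 3), Nat.mod_lt _ (by omega)⟩ : Fin (n - 3)))
      (s := univ.filter (fun v : Fin m => v.val < n - 3)) (t := univ) (by simp)
      (by
        intro a ha b hb hab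
        simp only [Finset.mem_coe, Finset.mem_filter] at ha hb
        have := congrArg Fin.val hab
        simp only at this
        rw [Nat.mod_eq_of_lt ha.2, Nat.mod_eq_of_lt hb.2] at this
        exact Fin.ext this)
    simpa using this
  have cardge : (univ.filter (fun v : Fin m => ¬ v.val < n - 3)).card ≤ n - 3 := by
    have := Finset.card_le_card_of_injOn
      (f := fun v : Fin m => (⟨(v.val - (n - 3)) % (n - 3), Nat.mod_lt _ (by omega)⟩ :
        Fin (n - 3)))
      (s := univ.filter (fun v : Fin m => ¬ v.val < n - 3)) (t := univ) (by simp)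
      (by
        intro a ha b hb hab
        simp only [Finset.mem_coe, Finset.mem_filter] at ha hb
        have := congrArg Fin.val hab
        simp only at this
        have ha2 := a.isLt; have hb2 := b.isLt
        rw [Nat.mod_eq_of_lt (by omega), Nat.mod_eq_of_lt (by omega)] at this
        exact Fin.ext (by omega))
    simpa using this
  have hHadj : ∀ a b : Fin m, H.Adj a b → (a.val < n - 3 ↔ b.val < n - 3) := by
    intro a b hab
    rw [hH, fromRel_adj] at hab
    tauto
  have hHcadj : ∀ a b : Fin m, Hᶜ.Adj a b → ¬ (a.val < n - 3 ↔ b.val < n - 3) := by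
    intro a b hab
    rw [compl_adj, hH, fromRel_adj] at hab
    have h1 := hab.1
    have h2 := hab.2
    tauto
  obtain ⟨i0, hi0⟩ : ∃ i : Fin n, i.val = 0 := ⟨⟨0, by omega⟩, rfl⟩
  obtain ⟨iA, hiA⟩ : ∃ i : Fin n, i.val = n - 3 := ⟨⟨n - 3, by omega⟩, rfl⟩
  obtain ⟨iB, hiB⟩ : ∃ i : Fin n, i.val = n - 2 := ⟨⟨n - 2, by omega⟩, rfl⟩
  obtain ⟨iC, hiC⟩ : ∃ i : Fin n, i.val = n - 1 := ⟨⟨n - 1, by omega⟩, rfl⟩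
  refine ⟨H, ?_, ?_⟩
  · rintro ⟨f, hf⟩
    have l1 : ∀ i : Fin n, 1 ≤ i.val → i.val ≤ n - 3 →
        ((f i).val < n - 3 ↔ (f i0).val < n - 3) :=
      fun i h1 h2 => (hHadj _ _ (hf _ _ (tstar_adj1 hn i0 i hi0 h1 h2))).symm
    have l2 := hHadj _ _ (hf _ _ (tstar_adj2 hn iA iB hiA hiB))
    have l3 := hHadj _ _ (hf _ _ (tstar_adj3 hn iB iC hiB hiC))
    have l1' := l1 iA (by omega) (by omega)
    have same : ∀ i : Fin n, ((f i).val < n - 3 ↔ (f i0).val < n - 3) := by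
      intro i
      have hlt := i.isLt
      rcases Nat.lt_or_ge i.val 1 with h | h
      · have : i = i0 := Fin.ext (by omega)
        rw [this]
      · rcases Nat.lt_or_ge i.val (n - 2) with h' | h'
        · exact l1 i h (by omega)
        · rcases Nat.lt_or_ge i.val (n - 1) with h'' | h''
          · have : i = iB := Fin.ext (by omega)
            rw [this]
            exact l2.symm.trans l1'
          · have : i = iC := Fin.ext (by omega)
            rw [this]
            exact l3.symm.trans (l2.symm.trans l1')
    have himg : (univ.image f).card = n := by
      rw [Finset.card_image_of_injective _ f.injective, Finset.card_univ, Fintype.card_fin]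
    by_cases hP : (f i0).val < n - 3
    · have hsub : univ.image f ⊆ univ.filter (fun v : Fin m => v.val < n - 3) := by
        intro u hu
        obtain ⟨i, _, rfl⟩ := Finset.mem_image.mp hu
        exact Finset.mem_filter.mpr ⟨Finset.mem_univ _, (same i).mpr hP⟩
      have := Finset.card_le_card hsub
      omega
    · have hsub : univ.image f ⊆ univ.filter (fun v : Fin m => ¬ v.val < n - 3) := by
        intro u hu
        obtain ⟨i, _, rfl⟩ := Finset.mem_image.mp hu
        exact Finset.mem_filter.mpr ⟨Finset.mem_univ _, fun hc => hP ((same i).mp hc)⟩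
      have := Finset.card_le_card hsub
      omega
  · rintro ⟨f, hf⟩
    have l1 : ∀ i : Fin n, 1 ≤ i.val → i.val ≤ n - 3 →
        ¬ ((f i0).val < n - 3 ↔ (f i).val < n - 3) :=
      fun i h1 h2 => hHcadj _ _ (hf _ _ (tstar_adj1 hn i0 i hi0 h1 h2))
    have l2 := hHcadj _ _ (hf _ _ (tstar_adj2 hn iA iB hiA hiB))
    have l3 := hHcadj _ _ (hf _ _ (tstar_adj3 hn iB iC hiB hiC))
    have l1' := l1 iA (by omega) (by omega)
    have opp : ∀ i : Fin n, i.val ≠ 0 → i.val ≠ n - 2 →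
        ((f i).val < n - 3 ↔ ¬ (f i0).val < n - 3) := by
      intro i h0 h2'
      have hlt := i.isLt
      rcases Nat.lt_or_ge i.val (n - 2) with h' | h'
      · have := l1 i (by omega) (by omega)
        tauto
      · have : i = iC := Fin.ext (by omega)
        rw [this]
        tauto
    have himg : (univ.image f).card = n := by
      rw [Finset.card_image_of_injective _ f.injective, Finset.card_univ, Fintype.card_fin]
    set D : Finset (Fin m) :=
      (if (f i0).val < n - 3 then univ.filter (fun v : Fin m => ¬ v.val < n - 3)
        else univ.filter (fun v : Fin m => v.val < n - 3)) with hD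
    have hsub : univ.image f ⊆ D ∪ {f i0, f iB} := by
      intro u hu
      obtain ⟨i, _, rfl⟩ := Finset.mem_image.mp hu
      by_cases h0 : i.val = 0
      · apply Finset.mem_union_right
        have : i = i0 := Fin.ext (by omega)
        rw [this]
        simp
      · by_cases h2' : i.val = n - 2
        · apply Finset.mem_union_right
          have : i = iB := Fin.ext (by omega)
          rw [this]
          simp
        · apply Finset.mem_union_left
          have hopp := opp i h0 h2'
          rw [hD]
          by_cases hP : (f i0).val < n - 3
          · rw [if_pos hP]
            exact Finset.mem_filter.mpr ⟨Finset.mem_univ _, by tauto⟩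
          · rw [if_neg hP]
            exact Finset.mem_filter.mpr ⟨Finset.mem_univ _, by tauto⟩
    have hc := Finset.card_le_card hsub
    have hc2 := Finset.card_union_le D ({f i0, f iB} : Finset (Fin m))
    have hc3 : ({f i0, f iB} : Finset (Fin m)).card ≤ 2 := by
      refine le_trans (Finset.card_insert_le _ _) ?_
      simp
    have hc4 : D.card ≤ n - 3 := by
      rw [hD]
      split
      · exact cardge
      · exact cardlt
    omega

variable {V : Type*} [Fintype V] [DecidableEq V]

/-- Structure sufficient to embed `Tstar n`, with `k = n - 4` spare leaves. -/
def Struct (G : SimpleGraph V) [DecidableRel G.Adj] (k : ℕ) : Prop :=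
  ∃ w s x y : V, G.Adj w s ∧ G.Adj s x ∧ G.Adj x y ∧ w ≠ x ∧ w ≠ y ∧ s ≠ y ∧
    k ≤ ((G.neighborFinset w) \ {s, x, y}).card

lemma struct_contains (n : ℕ) (hn : 8 ≤ n) (G : SimpleGraph V) [DecidableRel G.Adj]
    (h : Struct G (n - 4)) : Contains G (Tstar n) := by
  obtain ⟨w, s, x, y, hws, hsx, hxy, hwx, hwy, hsy, hcard⟩ := h
  obtain ⟨L, hLsub, hLcard⟩ := Finset.exists_subset_card_eq hcard
  have hLN : ∀ v ∈ L, G.Adj w v := by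
    intro v hv
    have := hLsub hv
    rw [Finset.mem_sdiff, mem_neighborFinset] at this
    exact this.1
  have hwL : w ∉ L := fun h => G.irrefl (hLN w h)
  have hsL : s ∉ L := by
    intro h; have := hLsub h; rw [Finset.mem_sdiff] at this
    exact this.2 (by simp)
  have hxL : x ∉ L := by
    intro h; have := hLsub h; rw [Finset.mem_sdiff] at this
    exact this.2 (by simp)
  have hyL : y ∉ L := by
    intro h; have := hLsub h; rw [Finset.mem_sdiff] at this
    exact this.2 (by simp)
  have hws' := G.ne_of_adj hws
  have hsx' := G.ne_of_adj hsx
  have hxy' := G.ne_of_adj hxy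
  -- enumeration of L
  set g : Fin (n - 4) → V := fun k => (L.equivFin.symm (Fin.cast hLcard.symm k) : V) with hg
  have hgL : ∀ k, g k ∈ L := fun k => (L.equivFin.symm _).2
  have hginj : Function.Injective g := by
    intro a b hab
    have : (L.equivFin.symm (Fin.cast hLcard.symm a)) = (L.equivFin.symm (Fin.cast hLcard.symm b)) :=
      Subtype.ext hab
    have := L.equivFin.symm.injective this
    simpa [Fin.ext_iff] using this
  classical
  set f : Fin n → V := fun i =>
    if h0 : i.val = 0 then w
    else if h1 : i.val ≤ n - 4 then g ⟨i.val - 1, by omega⟩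
    else if i.val = n - 3 then s
    else if i.val = n - 2 then x
    else y with hf
  have hreg : ∀ i : Fin n, i.val = 0 ∨ (1 ≤ i.val ∧ i.val ≤ n - 4) ∨ i.val = n - 3 ∨
      i.val = n - 2 ∨ i.val = n - 1 := by
    intro i; have := i.isLt; omega
  have hf0 : ∀ i : Fin n, i.val = 0 → f i = w := by intro i h; simp [hf, h]
  have hfleaf : ∀ (i : Fin n) (h1 : 1 ≤ i.val) (h2 : i.val ≤ n - 4),
      f i = g ⟨i.val - 1, by omega⟩ := by
    intro i h1 h2; simp only [hf]; rw [dif_neg (by omega), dif_pos h2]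
  have hfs : ∀ i : Fin n, i.val = n - 3 → f i = s := by
    intro i h; simp only [hf]; rw [dif_neg (by omega), dif_neg (by omega), if_pos h]
  have hfx : ∀ i : Fin n, i.val = n - 2 → f i = x := by
    intro i h; simp only [hf]
    rw [dif_neg (by omega), dif_neg (by omega), if_neg (by omega), if_pos h]
  have hfy : ∀ i : Fin n, i.val = n - 1 → f i = y := by
    intro i h; simp only [hf]
    rw [dif_neg (by omega), dif_neg (by omega), if_neg (by omega), if_neg (by omega)]
  have finj : Function.Injective f := by
    have leafmem : ∀ (i : Fin n) (h1 : 1 ≤ i.val) (h2 : i.val ≤ n - 4), f i ∈ L := by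
      intro i h1 h2; rw [hfleaf i h1 h2]; exact hgL _
    intro i j hij
    rcases hreg i with hi | hi | hi | hi | hi <;> rcases hreg j with hj | hj | hj | hj | hj
    · exact Fin.ext (by omega)
    · exact (hwL (by rw [hf0 i hi] at hij; rw [hij]; exact leafmem j hj.1 hj.2)).elim
    · exact (hws' (by rw [← hf0 i hi, ← hfs j hj, hij])).elim
    · exact (hwx (by rw [← hf0 i hi, ← hfx j hj, hij])).elim
    · exact (hwy (by rw [← hf0 i hi, ← hfy j hj, hij])).elim
    · exact (hwL (by rw [hf0 j hj] at hij; rw [← hij]; exact leafmem i hi.1 hi.2)).elim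
    · rw [hfleaf i hi.1 hi.2, hfleaf j hj.1 hj.2] at hij
      have h2 := congrArg Fin.val (hginj hij)
      simp only at h2
      exact Fin.ext (by omega)
    · exact (hsL (by rw [hfs j hj] at hij; rw [← hij]; exact leafmem i hi.1 hi.2)).elim
    · exact (hxL (by rw [hfx j hj] at hij; rw [← hij]; exact leafmem i hi.1 hi.2)).elim
    · exact (hyL (by rw [hfy j hj] at hij; rw [← hij]; exact leafmem i hi.1 hi.2)).elim
    · exact (hws' (by rw [← hf0 j hj, ← hfs i hi, hij])).elim
    · exact (hsL (by rw [hfs i hi] at hij; rw [hij]; exact leafmem j hj.1 hj.2)).elim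
    · exact Fin.ext (by omega)
    · exact (hsx' (by rw [← hfs i hi, ← hfx j hj, hij])).elim
    · exact (hsy (by rw [← hfs i hi, ← hfy j hj, hij])).elim
    · exact (hwx (by rw [← hf0 j hj, ← hfx i hi, hij])).elim
    · exact (hxL (by rw [hfx i hi] at hij; rw [hij]; exact leafmem j hj.1 hj.2)).elim
    · exact (hsx' (by rw [← hfs j hj, ← hfx i hi, hij])).elim
    · exact Fin.ext (by omega)
    · exact (hxy' (by rw [← hfx i hi, ← hfy j hj, hij])).elim
    · exact (hwy (by rw [← hf0 j hj, ← hfy i hi, hij])).elim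
    · exact (hyL (by rw [hfy i hi] at hij; rw [hij]; exact leafmem j hj.1 hj.2)).elim
    · exact (hsy (by rw [← hfs j hj, ← hfy i hi, hij])).elim
    · exact (hxy' (by rw [← hfx j hj, ← hfy i hi, hij])).elim
    · exact Fin.ext (by omega)
  have key : ∀ a b : Fin n,
      ((a.val = 0 ∧ 1 ≤ b.val ∧ b.val ≤ n - 3) ∨ (a.val = n - 3 ∧ b.val = n - 2) ∨
        (a.val = n - 2 ∧ b.val = n - 1)) → G.Adj (f a) (f b) := by
    rintro a b (⟨ha, hb1, hb2⟩ | ⟨ha, hb⟩ | ⟨ha, hb⟩)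
    · rw [hf0 a ha]
      rcases le_or_gt b.val (n - 4) with hb | hb
      · rw [hfleaf b hb1 hb]; exact hLN _ (hgL _)
      · rw [hfs b (by omega)]; exact hws
    · rw [hfs a ha, hfx b hb]; exact hsx
    · rw [hfx a ha, hfy b hb]; exact hxy
  refine ⟨⟨f, finj⟩, ?_⟩
  intro a b hab
  rw [Tstar, fromRel_adj] at hab
  rcases hab.2 with h | h
  · exact key a b h
  · exact (key b a h).symm

lemma card_le_one_add {N X Y : Finset V} {c : V} (h : N ⊆ insert c (X ∪ Y)) :
    N.card ≤ 1 + X.card + Y.card := by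
  calc N.card ≤ (insert c (X ∪ Y)).card := Finset.card_le_card h
    _ ≤ (X ∪ Y).card + 1 := Finset.card_insert_le _ _
    _ ≤ (X.card + Y.card) + 1 := by exact add_le_add_left (Finset.card_union_le _ _) 1
    _ = 1 + X.card + Y.card := by ring

lemma sum_card_inter_comm (G : SimpleGraph V) [DecidableRel G.Adj] (X Y : Finset V) :
    ∑ v ∈ X, (G.neighborFinset v ∩ Y).card = ∑ v ∈ Y, (G.neighborFinset v ∩ X).card := by
  have key : ∀ (Z : Finset V) (v : V),
      (G.neighborFinset v ∩ Z).card = ∑ u ∈ Z, if G.Adj v u then 1 else 0 := by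
    intro Z v
    have : G.neighborFinset v ∩ Z = Z.filter (fun u => G.Adj v u) := by
      ext u; simp [Finset.mem_inter, and_comm]
    rw [this, Finset.card_filter]
  simp_rw [key]
  rw [Finset.sum_comm]
  refine Finset.sum_congr rfl fun u _ => Finset.sum_congr rfl fun v _ => ?_
  simp only [G.adj_comm v u]

lemma arith2 {t b1 b0 : ℕ} (ht : 5 ≤ t) (h : b1 + b0 = t - 1) :
    b1 + b0 * (b0 - 1) + (t + 1) + ((t + 1) + (t + 1) * t + b1) ≤ 2 * t ^ 2 + 4 := by
  obtain ⟨u, rfl⟩ : ∃ u, t = u + 5 := ⟨t - 5, by omega⟩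
  have h' : b1 + b0 = u + 4 := by omega
  rcases Nat.eq_zero_or_pos b0 with h0 | h0
  · subst h0
    simp only [Nat.sub_zero, Nat.mul_zero, Nat.zero_mul, Nat.add_zero, Nat.zero_add]
    nlinarith
  · obtain ⟨k, rfl⟩ : ∃ k, b0 = k + 1 := ⟨b0 - 1, by omega⟩
    have hs : k + 1 - 1 = k := by omega
    rw [hs]
    nlinarith

lemma arith3a {t S : ℕ} (ht : 5 ≤ t) (hS : S ≤ 2) :
    2 * t + 2 * (t * (t - 1)) + S ≤ 2 * t ^ 2 + 4 := by
  obtain ⟨u, rfl⟩ : ∃ u, t = u + 5 := ⟨t - 5, by omega⟩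
  have hs : u + 5 - 1 = u + 4 := by omega
  rw [hs]
  nlinarith

lemma arith3b {t b1 b0 : ℕ} (h : b1 + b0 = t) (hb0 : 3 ≤ b0) :
    t + t * t + b1 * t + b0 * (b0 - 1) ≤ 2 * t ^ 2 + 4 := by
  obtain ⟨k, rfl⟩ : ∃ k, b0 = k + 3 := ⟨b0 - 3, by omega⟩
  subst h
  have hs : k + 3 - 1 = k + 2 := by omega
  rw [hs]
  nlinarith

lemma turan {t : ℕ} (ht : 5 ≤ t) (hcard : Fintype.card V = 2 * t + 1)
    (G : SimpleGraph V) [DecidableRel G.Adj] (hG : ¬ Struct G (t - 1)) :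
    ∑ v : V, G.degree v ≤ 2 * t ^ 2 + 4 := by
  have M : ∀ w s x y : V, G.Adj w s → G.Adj s x → G.Adj x y → w ≠ x → w ≠ y → s ≠ y →
      t - 1 ≤ ((G.neighborFinset w) \ {s, x, y}).card → False :=
    fun w s x y h1 h2 h3 h4 h5 h6 h7 => hG ⟨w, s, x, y, h1, h2, h3, h4, h5, h6, h7⟩
  have cardsd : ∀ w s x y : V,
      (G.neighborFinset w ∩ {s, x, y}).card + (G.neighborFinset w \ {s, x, y}).card
        = G.degree w := by
    intro w s x y
    rw [add_comm]
    exact Finset.card_sdiff_add_card_inter _ _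
  have degmax : ∀ v : V, G.degree v ≤ 2 * t := by
    intro v
    have := G.degree_lt_card_verts v
    omega
  by_cases h1 : ∃ c, t + 2 ≤ G.degree c
  · -- Case 1 : a vertex of degree ≥ t + 2
    obtain ⟨c, hc⟩ := h1
    set A := G.neighborFinset c with hA
    set B := Finset.univ \ insert c A with hB
    have hcA : c ∉ A := by simp [hA]
    have hAcard : A.card = G.degree c := rfl
    have hBmem : ∀ b, b ∈ B ↔ b ≠ c ∧ b ∉ A := by
      intro b
      simp only [hB, Finset.mem_sdiff, Finset.mem_univ, true_and, Finset.mem_insert, not_or]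
    have hBcard : B.card = 2 * t - G.degree c := by
      rw [hB, Finset.card_sdiff_of_subset (Finset.subset_univ _), Finset.card_insert_of_notMem hcA,
        hAcard, Finset.card_univ, hcard]
      omega
    have hadjc : ∀ s ∈ A, G.Adj c s := fun s hs => (mem_neighborFinset G c s).mp hs
    -- no 4-path from c at all
    have KEY1 : ∀ x, x ≠ c → ∀ s ∈ A, G.Adj s x → G.neighborFinset x ⊆ {c, s} := by
      intro x hxc s hs hsx u hu
      rw [mem_neighborFinset] at hu
      by_contra hu'
      simp only [Finset.mem_insert, Finset.mem_singleton, not_or] at hu'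
      refine M c s x u (hadjc s hs) hsx hu (Ne.symm hxc) (Ne.symm hu'.1) (Ne.symm hu'.2) ?_
      have h5 : (G.neighborFinset c ∩ {s, x, u}).card ≤ 3 := by
        refine le_trans (Finset.card_le_card Finset.inter_subset_right) ?_
        refine le_trans (Finset.card_insert_le _ _) ?_
        refine le_trans (add_le_add_left (Finset.card_insert_le _ _) 1) ?_
        simp
      have h6 := cardsd c s x u
      omega
    have bA : ∀ a ∈ A, (G.neighborFinset a ∩ A).card ≤ 1 := by
      intro a ha
      rcases (G.neighborFinset a ∩ A).eq_empty_or_nonempty with he | ⟨s, hs⟩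
      · simp [he]
      · have hs1 := Finset.mem_inter.mp hs
        have haneq : a ≠ c := fun h => hcA (h ▸ ha)
        have hsub := KEY1 a haneq s hs1.2 ((mem_neighborFinset G a s).mp hs1.1).symm
        have : G.neighborFinset a ∩ A ⊆ {s} := by
          intro u hu
          have hu1 := Finset.mem_inter.mp hu
          have := hsub hu1.1
          simp only [Finset.mem_insert, Finset.mem_singleton] at this ⊢
          rcases this with h | h
          · exact absurd (h ▸ hu1.2) hcA
          · exact h
        exact le_trans (Finset.card_le_card this) (by simp)
    have bB : ∀ b ∈ B, (G.neighborFinset b ∩ A).card ≤ 1 := by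
      intro b hb
      rcases (G.neighborFinset b ∩ A).eq_empty_or_nonempty with he | ⟨s, hs⟩
      · simp [he]
      · have hs1 := Finset.mem_inter.mp hs
        have hbneq : b ≠ c := ((hBmem b).mp hb).1
        have hsub := KEY1 b hbneq s hs1.2 ((mem_neighborFinset G b s).mp hs1.1).symm
        have : G.neighborFinset b ∩ A ⊆ {s} := by
          intro u hu
          have hu1 := Finset.mem_inter.mp hu
          have := hsub hu1.1
          simp only [Finset.mem_insert, Finset.mem_singleton] at this ⊢
          rcases this with h | h
          · exact absurd (h ▸ hu1.2) hcA
          · exact h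
        exact le_trans (Finset.card_le_card this) (by simp)
    have bBB : ∀ b ∈ B, (G.neighborFinset b ∩ B).card ≤ B.card - 1 := by
      intro b hb
      have : G.neighborFinset b ∩ B ⊆ B.erase b := by
        intro u hu
        have hu1 := Finset.mem_inter.mp hu
        refine Finset.mem_erase.mpr ⟨?_, hu1.2⟩
        intro h
        exact G.irrefl (h ▸ (mem_neighborFinset G b u).mp hu1.1)
      exact le_trans (Finset.card_le_card this) (le_of_eq (Finset.card_erase_of_mem hb))
    have degA : ∀ a ∈ A, G.degree a ≤ 1 + (G.neighborFinset a ∩ A).card +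
        (G.neighborFinset a ∩ B).card := by
      intro a _
      refine card_le_one_add (c := c) ?_
      intro u hu
      simp only [Finset.mem_insert, Finset.mem_union, Finset.mem_inter]
      by_cases huc : u = c
      · exact Or.inl huc
      · by_cases huA : u ∈ A
        · exact Or.inr (Or.inl ⟨hu, huA⟩)
        · exact Or.inr (Or.inr ⟨hu, (hBmem u).mpr ⟨huc, huA⟩⟩)
    have degB : ∀ b ∈ B, G.degree b ≤ (G.neighborFinset b ∩ A).card +
        (G.neighborFinset b ∩ B).card := by
      intro b hb
      have hsub : G.neighborFinset b ⊆ (G.neighborFinset b ∩ A) ∪ (G.neighborFinset b ∩ B) := by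
        intro u hu
        simp only [Finset.mem_union, Finset.mem_inter]
        by_cases huA : u ∈ A
        · exact Or.inl ⟨hu, huA⟩
        · refine Or.inr ⟨hu, (hBmem u).mpr ⟨?_, huA⟩⟩
          intro h
          have : G.Adj b c := h ▸ (mem_neighborFinset G b u).mp hu
          exact ((hBmem b).mp hb).2 ((mem_neighborFinset G c b).mpr this.symm)
      exact le_trans (Finset.card_le_card hsub) (Finset.card_union_le _ _)
    -- assemble
    have hsplit : ∑ v : V, G.degree v =
        ∑ v ∈ B, G.degree v + (G.degree c + ∑ v ∈ A, G.degree v) := by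
      have h7 := Finset.sum_sdiff (f := fun v => G.degree v)
        (Finset.subset_univ (insert c A))
      rw [Finset.sum_insert hcA] at h7
      rw [← hB] at h7
      exact h7.symm
    have hsymm := sum_card_inter_comm G A B
    have sA : ∑ a ∈ A, G.degree a ≤ A.card + A.card + B.card := by
      calc ∑ a ∈ A, G.degree a
          ≤ ∑ a ∈ A, (1 + (G.neighborFinset a ∩ A).card + (G.neighborFinset a ∩ B).card) :=
            Finset.sum_le_sum degA
        _ = A.card + (∑ a ∈ A, (G.neighborFinset a ∩ A).card)
            + ∑ a ∈ A, (G.neighborFinset a ∩ B).card := by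
            rw [Finset.sum_add_distrib, Finset.sum_add_distrib, Finset.sum_const, smul_eq_mul,
              mul_one]
        _ ≤ A.card + A.card + B.card := by
            have e1 : ∑ a ∈ A, (G.neighborFinset a ∩ A).card ≤ A.card := by
              calc ∑ a ∈ A, (G.neighborFinset a ∩ A).card ≤ ∑ a ∈ A, 1 := Finset.sum_le_sum bA
                _ = A.card := by simp
            have e2 : ∑ a ∈ A, (G.neighborFinset a ∩ B).card ≤ B.card := by
              rw [hsymm]
              calc ∑ b ∈ B, (G.neighborFinset b ∩ A).card ≤ ∑ b ∈ B, 1 := Finset.sum_le_sum bB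
                _ = B.card := by simp
            omega
    have sB : ∑ b ∈ B, G.degree b ≤ B.card + B.card * (B.card - 1) := by
      calc ∑ b ∈ B, G.degree b
          ≤ ∑ b ∈ B, ((G.neighborFinset b ∩ A).card + (G.neighborFinset b ∩ B).card) :=
            Finset.sum_le_sum degB
        _ ≤ ∑ b ∈ B, (1 + (B.card - 1)) := by
            refine Finset.sum_le_sum fun b hb => ?_
            exact add_le_add (bB b hb) (bBB b hb)
        _ = B.card + B.card * (B.card - 1) := by
            rw [Finset.sum_const, smul_eq_mul]; ring
    rw [hAcard, hBcard] at sA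
    rw [hBcard] at sB
    set d := G.degree c
    have hABle : d ≤ 2 * t := degmax c
    have final : ∑ v : V, G.degree v ≤ (2 * t - d) + (2 * t - d) * ((2 * t - d) - 1)
        + (d + (d + d + (2 * t - d))) := by
      rw [hsplit]
      have := hAcard
      omega
    -- arithmetic
    obtain ⟨u, hu⟩ : ∃ u, t = u + 5 := ⟨t - 5, by omega⟩
    obtain ⟨e, he⟩ : ∃ e, d = t + 2 + e := ⟨d - (t + 2), by omega⟩
    have hd2 : 2 * t - d ≤ t - 2 := by omega
    obtain ⟨m, hm⟩ : ∃ m, 2 * t - d = m ∧ m ≤ t - 2 := ⟨2 * t - d, rfl, hd2⟩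
    rcases hm with ⟨hm1, hm2⟩
    rw [hm1] at final
    rcases Nat.eq_zero_or_pos m with hm0 | hm0
    · subst hm0; nlinarith
    · obtain ⟨v, hv⟩ : ∃ v, m = v + 1 := ⟨m - 1, by omega⟩
      subst hv
      have hv2 : v + 1 ≤ t - 2 := hm2
      have hv3 : v + 3 ≤ t := by omega
      simp only [Nat.add_sub_cancel] at final
      nlinarith
  · push_neg at h1
    have cap1 : ∀ v, G.degree v ≤ t + 1 := fun v => by have := h1 v; omega
    by_cases h2 : ∃ c, G.degree c = t + 1
    · -- Case 2 : max degree t + 1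
      obtain ⟨c, hc⟩ := h2
      set A := G.neighborFinset c with hA
      set B := Finset.univ \ insert c A with hB
      have hcA : c ∉ A := by simp [hA]
      have hAcard : A.card = t + 1 := hc
      have hBmem : ∀ b, b ∈ B ↔ b ≠ c ∧ b ∉ A := by
        intro b
        simp only [hB, Finset.mem_sdiff, Finset.mem_univ, true_and, Finset.mem_insert, not_or]
      have hBcard : B.card = t - 1 := by
        rw [hB, Finset.card_sdiff_of_subset (Finset.subset_univ _), Finset.card_insert_of_notMem hcA,
          hAcard, Finset.card_univ, hcard]
        omega
      have hadjc : ∀ s ∈ A, G.Adj c s := fun s hs => (mem_neighborFinset G c s).mp hs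
      have KEY2 : ∀ b, b ∉ A → b ≠ c → ∀ s ∈ A, G.Adj s b → G.neighborFinset b ⊆ {s} := by
        intro b hbA hbc s hs hsb u hu
        rw [mem_neighborFinset] at hu
        simp only [Finset.mem_singleton]
        by_contra hus
        have huc : u ≠ c := by
          intro h; rw [h] at hu
          exact hbA ((mem_neighborFinset G c b).mpr hu.symm)
        refine M c s b u (hadjc s hs) hsb hu (Ne.symm hbc) (Ne.symm huc)
          (fun h => hus h.symm) ?_
        have hsub : G.neighborFinset c ∩ {s, b, u} ⊆ {s, u} := by
          intro z hz
          have hz1 := Finset.mem_inter.mp hz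
          simp only [Finset.mem_insert, Finset.mem_singleton] at hz1 ⊢
          rcases hz1.2 with h | h | h
          · exact Or.inl h
          · exact absurd (h ▸ hz1.1) hbA
          · exact Or.inr h
        have h5 : (G.neighborFinset c ∩ {s, b, u}).card ≤ 2 := by
          refine le_trans (Finset.card_le_card hsub) ?_
          refine le_trans (Finset.card_insert_le _ _) ?_
          simp
        have h6 := cardsd c s b u
        have h7 : G.degree c = t + 1 := hc
        omega
      set B1 := B.filter (fun b => (G.neighborFinset b ∩ A).Nonempty) with hB1
      set B0 := B.filter (fun b => ¬ (G.neighborFinset b ∩ A).Nonempty) with hB0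
      have hB1sub : ∀ b ∈ B1, ∃ s ∈ A, G.neighborFinset b ⊆ {s} := by
        intro b hb
        obtain ⟨hbB, s, hs⟩ := Finset.mem_filter.mp hb
        have hs1 := Finset.mem_inter.mp hs
        have hbm := (hBmem b).mp hbB
        exact ⟨s, hs1.2, KEY2 b hbm.2 hbm.1 s hs1.2
          ((mem_neighborFinset G b s).mp hs1.1).symm⟩
      have degB1 : ∀ b ∈ B1, G.degree b ≤ 1 := by
        intro b hb
        obtain ⟨s, _, hsub⟩ := hB1sub b hb
        calc G.degree b = (G.neighborFinset b).card := rfl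
          _ ≤ ({s} : Finset V).card := Finset.card_le_card hsub
          _ = 1 := by simp
      have nAB1 : ∀ b ∈ B1, (G.neighborFinset b ∩ A).card ≤ 1 := by
        intro b hb
        exact le_trans (Finset.card_le_card Finset.inter_subset_left) (degB1 b hb)
      have nAB0 : ∀ b ∈ B0, (G.neighborFinset b ∩ A).card = 0 := by
        intro b hb
        have := (Finset.mem_filter.mp hb).2
        rw [Finset.not_nonempty_iff_eq_empty] at this
        simp [this]
      have B0sub : ∀ b ∈ B0, G.neighborFinset b ⊆ B0.erase b := by
        intro b hb u hu
        have hb' := Finset.mem_filter.mp hb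
        have hbm := (hBmem b).mp hb'.1
        have hadjbu := (mem_neighborFinset G b u).mp hu
        have huc : u ≠ c := by
          intro h; rw [h] at hadjbu
          exact hbm.2 ((mem_neighborFinset G c b).mpr hadjbu.symm)
        have huA : u ∉ A := fun h => hb'.2 ⟨u, Finset.mem_inter.mpr ⟨hu, h⟩⟩
        have huB : u ∈ B := (hBmem u).mpr ⟨huc, huA⟩
        have huB1 : u ∉ B1 := by
          intro h
          obtain ⟨s, hsA, hsub⟩ := hB1sub u h
          have : b ∈ ({s} : Finset V) :=
            hsub ((mem_neighborFinset G u b).mpr hadjbu.symm)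
          simp only [Finset.mem_singleton] at this
          exact hbm.2 (this ▸ hsA)
        refine Finset.mem_erase.mpr ⟨fun h => G.irrefl (h ▸ hadjbu), ?_⟩
        refine Finset.mem_filter.mpr ⟨huB, fun hne => huB1 (Finset.mem_filter.mpr ⟨huB, hne⟩)⟩
      have degB0 : ∀ b ∈ B0, G.degree b ≤ B0.card - 1 := by
        intro b hb
        calc G.degree b = (G.neighborFinset b).card := rfl
          _ ≤ (B0.erase b).card := Finset.card_le_card (B0sub b hb)
          _ = B0.card - 1 := Finset.card_erase_of_mem hb
      have degA : ∀ a ∈ A, G.degree a ≤ 1 + (G.neighborFinset a ∩ A).card +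
          (G.neighborFinset a ∩ B).card := by
        intro a _
        refine card_le_one_add (c := c) ?_
        intro u hu
        simp only [Finset.mem_insert, Finset.mem_union, Finset.mem_inter]
        by_cases huc : u = c
        · exact Or.inl huc
        · by_cases huA : u ∈ A
          · exact Or.inr (Or.inl ⟨hu, huA⟩)
          · exact Or.inr (Or.inr ⟨hu, (hBmem u).mpr ⟨huc, huA⟩⟩)
      have nAA : ∀ a ∈ A, (G.neighborFinset a ∩ A).card ≤ t := by
        intro a ha
        have hsub : G.neighborFinset a ∩ A ⊆ A.erase a := by
          intro u hu
          have hu1 := Finset.mem_inter.mp hu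
          refine Finset.mem_erase.mpr ⟨?_, hu1.2⟩
          intro h
          exact G.irrefl (h ▸ (mem_neighborFinset G a u).mp hu1.1)
        calc (G.neighborFinset a ∩ A).card ≤ (A.erase a).card := Finset.card_le_card hsub
          _ = A.card - 1 := Finset.card_erase_of_mem ha
          _ = t := by rw [hAcard]; omega
      have hsymm := sum_card_inter_comm G A B
      have sBsplit := Finset.sum_filter_add_sum_filter_not B
        (fun b => (G.neighborFinset b ∩ A).Nonempty) (fun b => G.degree b)
      have sBsplit2 := Finset.sum_filter_add_sum_filter_not B
        (fun b => (G.neighborFinset b ∩ A).Nonempty) (fun b => (G.neighborFinset b ∩ A).card)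
      have cardsplit := Finset.card_filter_add_card_filter_not
        (s := B) (p := fun b => (G.neighborFinset b ∩ A).Nonempty)
      rw [← hB1, ← hB0] at sBsplit sBsplit2 cardsplit
      have e1 : ∑ b ∈ B1, G.degree b ≤ B1.card := by
        calc ∑ b ∈ B1, G.degree b ≤ ∑ b ∈ B1, 1 := Finset.sum_le_sum degB1
          _ = B1.card := by simp
      have e2 : ∑ b ∈ B0, G.degree b ≤ B0.card * (B0.card - 1) := by
        calc ∑ b ∈ B0, G.degree b ≤ ∑ b ∈ B0, (B0.card - 1) := Finset.sum_le_sum degB0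
          _ = B0.card * (B0.card - 1) := by rw [Finset.sum_const, smul_eq_mul]
      have e3 : ∑ b ∈ B1, (G.neighborFinset b ∩ A).card ≤ B1.card := by
        calc ∑ b ∈ B1, (G.neighborFinset b ∩ A).card ≤ ∑ b ∈ B1, 1 := Finset.sum_le_sum nAB1
          _ = B1.card := by simp
      have e4 : ∑ b ∈ B0, (G.neighborFinset b ∩ A).card = 0 :=
        Finset.sum_eq_zero nAB0
      have sA : ∑ a ∈ A, G.degree a ≤ (t + 1) + (t + 1) * t + B1.card := by
        calc ∑ a ∈ A, G.degree a
            ≤ ∑ a ∈ A, (1 + (G.neighborFinset a ∩ A).card + (G.neighborFinset a ∩ B).card) :=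
              Finset.sum_le_sum degA
          _ = A.card + (∑ a ∈ A, (G.neighborFinset a ∩ A).card)
              + ∑ a ∈ A, (G.neighborFinset a ∩ B).card := by
              rw [Finset.sum_add_distrib, Finset.sum_add_distrib, Finset.sum_const, smul_eq_mul,
                mul_one]
          _ ≤ (t + 1) + (t + 1) * t + B1.card := by
              have g1 : ∑ a ∈ A, (G.neighborFinset a ∩ A).card ≤ (t + 1) * t := by
                calc ∑ a ∈ A, (G.neighborFinset a ∩ A).card ≤ ∑ a ∈ A, t :=
                    Finset.sum_le_sum nAA
                  _ = (t + 1) * t := by rw [Finset.sum_const, smul_eq_mul, hAcard]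
              have g2 : ∑ a ∈ A, (G.neighborFinset a ∩ B).card ≤ B1.card := by
                rw [hsymm, ← sBsplit2]
                omega
              omega
      have hsplit : ∑ v : V, G.degree v =
          ∑ v ∈ B, G.degree v + (G.degree c + ∑ v ∈ A, G.degree v) := by
        have h7 := Finset.sum_sdiff (f := fun v => G.degree v)
          (Finset.subset_univ (insert c A))
        rw [Finset.sum_insert hcA] at h7
        rw [← hB] at h7
        exact h7.symm
      -- final arithmetic
      have hbb : B1.card + B0.card = t - 1 := by rw [← hBcard]; exact cardsplit
      have total : ∑ v : V, G.degree v ≤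
          B1.card + B0.card * (B0.card - 1) + (t + 1) + ((t + 1) + (t + 1) * t + B1.card) := by
        rw [hsplit, ← sBsplit]
        have h8 : G.degree c = t + 1 := hc
        omega
      exact le_trans total (arith2 ht hbb)
    · -- Case 3 : max degree t (or less)
      push_neg at h2
      have cap2 : ∀ v, G.degree v ≤ t := by
        intro v
        have := cap1 v
        have := h2 v
        omega
      by_cases h3 : ∃ c, G.degree c = t
      · obtain ⟨c, hc⟩ := h3
        set A := G.neighborFinset c with hA
        set B := Finset.univ \ insert c A with hB
        have hcA : c ∉ A := by simp [hA]
        have hAcard : A.card = t := hc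
        have hBmem : ∀ b, b ∈ B ↔ b ≠ c ∧ b ∉ A := by
          intro b
          simp only [hB, Finset.mem_sdiff, Finset.mem_univ, true_and, Finset.mem_insert, not_or]
        have hBcard : B.card = t := by
          rw [hB, Finset.card_sdiff_of_subset (Finset.subset_univ _), Finset.card_insert_of_notMem hcA,
            hAcard, Finset.card_univ, hcard]
          omega
        have hadjc : ∀ s ∈ A, G.Adj c s := fun s hs => (mem_neighborFinset G c s).mp hs
        have KEY3 : ∀ b, b ∉ A → b ≠ c → ∀ s ∈ A, G.Adj s b → G.neighborFinset b ⊆ A := by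
          intro b hbA hbc s hs hsb u hu
          have hadjbu := (mem_neighborFinset G b u).mp hu
          by_contra huA
          have hus : u ≠ s := fun h => huA (h ▸ hs)
          have huc : u ≠ c := by
            intro h; rw [h] at hadjbu
            exact hbA ((mem_neighborFinset G c b).mpr hadjbu.symm)
          refine M c s b u (hadjc s hs) hsb hadjbu (Ne.symm hbc) (Ne.symm huc)
            (fun h => hus h.symm) ?_
          have hsub : G.neighborFinset c ∩ {s, b, u} ⊆ {s} := by
            intro z hz
            have hz1 := Finset.mem_inter.mp hz
            simp only [Finset.mem_insert, Finset.mem_singleton] at hz1 ⊢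
            rcases hz1.2 with h | h | h
            · exact h
            · exact absurd (h ▸ hz1.1) hbA
            · exact absurd (h ▸ hz1.1) huA
          have h5 : (G.neighborFinset c ∩ {s, b, u}).card ≤ 1 := by
            refine le_trans (Finset.card_le_card hsub) ?_
            simp
          have h6 := cardsd c s b u
          have h7 : G.degree c = t := hc
          omega
        set B1 := B.filter (fun b => (G.neighborFinset b ∩ A).Nonempty) with hB1
        set B0 := B.filter (fun b => ¬ (G.neighborFinset b ∩ A).Nonempty) with hB0
        have hB1sub : ∀ b ∈ B1, G.neighborFinset b ⊆ A := by
          intro b hb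
          obtain ⟨hbB, s, hs⟩ := Finset.mem_filter.mp hb
          have hs1 := Finset.mem_inter.mp hs
          have hbm := (hBmem b).mp hbB
          exact KEY3 b hbm.2 hbm.1 s hs1.2 ((mem_neighborFinset G b s).mp hs1.1).symm
        have degB1 : ∀ b ∈ B1, G.degree b = (G.neighborFinset b ∩ A).card := by
          intro b hb
          have : G.neighborFinset b ∩ A = G.neighborFinset b :=
            Finset.inter_eq_left.mpr (hB1sub b hb)
          rw [this]; rfl
        have B0sub : ∀ b ∈ B0, G.neighborFinset b ⊆ B0.erase b := by
          intro b hb u hu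
          have hb' := Finset.mem_filter.mp hb
          have hbm := (hBmem b).mp hb'.1
          have hadjbu := (mem_neighborFinset G b u).mp hu
          have huc : u ≠ c := by
            intro h; rw [h] at hadjbu
            exact hbm.2 ((mem_neighborFinset G c b).mpr hadjbu.symm)
          have huA : u ∉ A := fun h => hb'.2 ⟨u, Finset.mem_inter.mpr ⟨hu, h⟩⟩
          have huB : u ∈ B := (hBmem u).mpr ⟨huc, huA⟩
          have huB1 : u ∉ B1 := by
            intro h
            exact hbm.2 (hB1sub u h ((mem_neighborFinset G u b).mpr hadjbu.symm))
          refine Finset.mem_erase.mpr ⟨fun h => G.irrefl (h ▸ hadjbu), ?_⟩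
          refine Finset.mem_filter.mpr ⟨huB, fun hne => huB1 (Finset.mem_filter.mpr ⟨huB, hne⟩)⟩
        have degB0 : ∀ b ∈ B0, G.degree b ≤ B0.card - 1 := by
          intro b hb
          calc G.degree b = (G.neighborFinset b).card := rfl
            _ ≤ (B0.erase b).card := Finset.card_le_card (B0sub b hb)
            _ = B0.card - 1 := Finset.card_erase_of_mem hb
        have degA3 : ∀ a ∈ A, G.degree a ≤ 1 + (G.neighborFinset a ∩ A).card +
            (G.neighborFinset a ∩ B1).card := by
          intro a ha
          refine card_le_one_add (c := c) ?_
          intro u hu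
          have hadjau := (mem_neighborFinset G a u).mp hu
          simp only [Finset.mem_insert, Finset.mem_union, Finset.mem_inter]
          by_cases huc : u = c
          · exact Or.inl huc
          · by_cases huA : u ∈ A
            · exact Or.inr (Or.inl ⟨hu, huA⟩)
            · have huB : u ∈ B := (hBmem u).mpr ⟨huc, huA⟩
              have huB0 : u ∉ B0 := by
                intro h
                have := B0sub u h ((mem_neighborFinset G u a).mpr hadjau.symm)
                have := (hBmem a).mp (Finset.mem_filter.mp (Finset.mem_of_mem_erase this)).1
                exact this.2 ha
              have huB1 : u ∈ B1 := by
                by_cases hne : (G.neighborFinset u ∩ A).Nonempty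
                · exact Finset.mem_filter.mpr ⟨huB, hne⟩
                · exact absurd (Finset.mem_filter.mpr ⟨huB, hne⟩) huB0
              exact Or.inr (Or.inr ⟨hu, huB1⟩)
        have lowA : ∀ a ∈ A, (G.neighborFinset a ∩ A).card +
            (G.neighborFinset a ∩ B1).card ≤ t - 1 := by
          intro a ha
          have hdisj : Disjoint (G.neighborFinset a ∩ A) (G.neighborFinset a ∩ B1) := by
            rw [Finset.disjoint_left]
            intro u hu1 hu2
            have h1 := (Finset.mem_inter.mp hu1).2
            have h2 := (Finset.mem_filter.mp (Finset.mem_inter.mp hu2).2).1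
            exact ((hBmem u).mp h2).2 h1
          have hsub : (G.neighborFinset a ∩ A) ∪ (G.neighborFinset a ∩ B1) ⊆
              (G.neighborFinset a).erase c := by
            intro u hu
            rcases Finset.mem_union.mp hu with h | h
            · have h1 := Finset.mem_inter.mp h
              exact Finset.mem_erase.mpr ⟨fun he => hcA (he ▸ h1.2), h1.1⟩
            · have h1 := Finset.mem_inter.mp h
              have h2 := (Finset.mem_filter.mp h1.2).1
              exact Finset.mem_erase.mpr ⟨((hBmem u).mp h2).1, h1.1⟩
          have hcmem : c ∈ G.neighborFinset a := by
            rw [mem_neighborFinset]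
            exact (hadjc a ha).symm
          calc (G.neighborFinset a ∩ A).card + (G.neighborFinset a ∩ B1).card
              = ((G.neighborFinset a ∩ A) ∪ (G.neighborFinset a ∩ B1)).card :=
                (Finset.card_union_of_disjoint hdisj).symm
            _ ≤ ((G.neighborFinset a).erase c).card := Finset.card_le_card hsub
            _ = G.degree a - 1 := Finset.card_erase_of_mem hcmem
            _ ≤ t - 1 := by have := cap2 a; omega
        have hsymm1 := sum_card_inter_comm G A B1
        have sBsplit := Finset.sum_filter_add_sum_filter_not B
          (fun b => (G.neighborFinset b ∩ A).Nonempty) (fun b => G.degree b)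
        have cardsplit := Finset.card_filter_add_card_filter_not
          (s := B) (p := fun b => (G.neighborFinset b ∩ A).Nonempty)
        rw [← hB1, ← hB0] at sBsplit cardsplit
        have hbb : B1.card + B0.card = t := by rw [← hBcard]; exact cardsplit
        have e2 : ∑ b ∈ B0, G.degree b ≤ B0.card * (B0.card - 1) := by
          calc ∑ b ∈ B0, G.degree b ≤ ∑ b ∈ B0, (B0.card - 1) := Finset.sum_le_sum degB0
            _ = B0.card * (B0.card - 1) := by rw [Finset.sum_const, smul_eq_mul]
        have eB1 : ∑ b ∈ B1, G.degree b = ∑ a ∈ A, (G.neighborFinset a ∩ B1).card := by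
          rw [hsymm1]
          exact Finset.sum_congr rfl degB1
        have hsplit : ∑ v : V, G.degree v =
            ∑ v ∈ B, G.degree v + (G.degree c + ∑ v ∈ A, G.degree v) := by
          have h7 := Finset.sum_sdiff (f := fun v => G.degree v)
            (Finset.subset_univ (insert c A))
          rw [Finset.sum_insert hcA] at h7
          rw [← hB] at h7
          exact h7.symm
        have sAdeg : ∑ a ∈ A, G.degree a ≤ t + (∑ a ∈ A, (G.neighborFinset a ∩ A).card
            + ∑ a ∈ A, (G.neighborFinset a ∩ B1).card) := by
          calc ∑ a ∈ A, G.degree a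
              ≤ ∑ a ∈ A, (1 + (G.neighborFinset a ∩ A).card + (G.neighborFinset a ∩ B1).card) :=
                Finset.sum_le_sum degA3
            _ = A.card + ∑ a ∈ A, (G.neighborFinset a ∩ A).card
                + ∑ a ∈ A, (G.neighborFinset a ∩ B1).card := by
                rw [Finset.sum_add_distrib, Finset.sum_add_distrib, Finset.sum_const,
                  smul_eq_mul, mul_one]
            _ ≤ _ := by rw [hAcard]; omega
        have sAlow : ∑ a ∈ A, (G.neighborFinset a ∩ A).card
            + ∑ a ∈ A, (G.neighborFinset a ∩ B1).card ≤ t * (t - 1) := by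
          rw [← Finset.sum_add_distrib]
          calc ∑ a ∈ A, ((G.neighborFinset a ∩ A).card + (G.neighborFinset a ∩ B1).card)
              ≤ ∑ _a ∈ A, (t - 1) := Finset.sum_le_sum lowA
            _ = t * (t - 1) := by rw [Finset.sum_const, smul_eq_mul, hAcard]
        rcases le_or_gt B0.card 2 with hb0 | hb0
        · -- bound (i)
          have hSS : B0.card * (B0.card - 1) ≤ 2 := by
            interval_cases h : B0.card <;> simp
          have total : ∑ v : V, G.degree v ≤
              2 * t + 2 * (t * (t - 1)) + (B0.card * (B0.card - 1)) := by
            rw [hsplit, ← sBsplit]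
            have h8 : G.degree c = t := hc
            omega
          refine le_trans total (le_trans ?_ (arith3a ht hSS))
          omega
        · -- bound (ii)
          have sB1t : ∑ b ∈ B1, G.degree b ≤ B1.card * t := by
            calc ∑ b ∈ B1, G.degree b ≤ ∑ _b ∈ B1, t :=
                Finset.sum_le_sum fun b _ => cap2 b
              _ = B1.card * t := by rw [Finset.sum_const, smul_eq_mul]
          have sAt : ∑ a ∈ A, G.degree a ≤ t * t := by
            calc ∑ a ∈ A, G.degree a ≤ ∑ _a ∈ A, t :=
                Finset.sum_le_sum fun a _ => cap2 a
              _ = t * t := by rw [Finset.sum_const, smul_eq_mul, hAcard]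
          have total : ∑ v : V, G.degree v ≤
              t + t * t + B1.card * t + B0.card * (B0.card - 1) := by
            rw [hsplit, ← sBsplit]
            have h8 : G.degree c = t := hc
            omega
          exact le_trans total (arith3b hbb hb0)
      · -- all degrees ≤ t - 1
        push_neg at h3
        have cap3 : ∀ v, G.degree v ≤ t - 1 := by
          intro v
          have := cap2 v
          have := h3 v
          omega
        calc ∑ v : V, G.degree v ≤ ∑ _v : V, (t - 1) :=
            Finset.sum_le_sum fun v _ => cap3 v
          _ = (2 * t + 1) * (t - 1) := by
              rw [Finset.sum_const, smul_eq_mul, Finset.card_univ, hcard]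
          _ ≤ 2 * t ^ 2 + 4 := by
              obtain ⟨e, he⟩ : ∃ e, t = e + 1 := ⟨t - 1, by omega⟩
              subst he
              simp only [Nat.add_sub_cancel]
              nlinarith

lemma upper (n : ℕ) (hn : 8 ≤ n) (G : SimpleGraph (Fin (2 * n - 5))) :
    Contains G (Tstar n) ∨ Contains Gᶜ (Tstar n) := by
  classical
  by_contra hcon
  push_neg at hcon
  set t := n - 3 with htdef
  have ht : 5 ≤ t := by omega
  have hcard : Fintype.card (Fin (2 * n - 5)) = 2 * t + 1 := by
    rw [Fintype.card_fin]; omega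
  haveI : DecidableRel G.Adj := Classical.decRel _
  haveI : DecidableRel Gᶜ.Adj := Classical.decRel _
  have hk : t - 1 = n - 4 := by omega
  have hS1 : ¬ Struct G (t - 1) := by
    rw [hk]; exact fun h => hcon.1 (struct_contains n hn G h)
  have hS2 : ¬ Struct Gᶜ (t - 1) := by
    rw [hk]; exact fun h => hcon.2 (struct_contains n hn Gᶜ h)
  have b1 := turan ht hcard G hS1
  have b2 := turan ht hcard Gᶜ hS2
  have key : ∀ v, G.degree v + Gᶜ.degree v = 2 * t := by
    intro v
    have h1 := G.degree_compl (v := v)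
    have h2 := G.degree_lt_card_verts v
    rw [hcard] at h1 h2
    omega
  have hsum : ∑ v : Fin (2 * n - 5), G.degree v + ∑ v : Fin (2 * n - 5), Gᶜ.degree v
      = (2 * t + 1) * (2 * t) := by
    rw [← Finset.sum_add_distrib]
    calc ∑ v : Fin (2 * n - 5), (G.degree v + Gᶜ.degree v)
        = ∑ _v : Fin (2 * n - 5), 2 * t := Finset.sum_congr rfl fun v _ => key v
      _ = (2 * t + 1) * (2 * t) := by
          rw [Finset.sum_const, smul_eq_mul, Finset.card_univ, hcard]
  nlinarith

theorem stmt8 (n : ℕ) (hn : 8 ≤ n) :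
    ramsey (Tstar n) (Tstar n) = 2 * n - 5 := by
  have hmem : 2 * n - 5 ∈ {N | 0 < N ∧ ∀ G : SimpleGraph (Fin N),
      Contains G (Tstar n) ∨ Contains Gᶜ (Tstar n)} :=
    ⟨by omega, fun G => upper n hn G⟩
  rw [ramsey]
  refine le_antisymm (Nat.sInf_le hmem) ?_
  refine le_csInf ⟨_, hmem⟩ ?_
  rintro N ⟨hN0, hN⟩
  by_contra hlt
  push_neg at hlt
  obtain ⟨Hc, h1, h2⟩ := lowerconstr n N hn (by omega)
  rcases hN Hc with h | h
  · exact h1 h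
  · exact h2 h
end

section
/- Let m, n be integers with n > m ≥ 5 and (m-1) | (n-3). Let G_m be a connected graph of order m with ex(m+n-3; G_m) ≤ (m-2)(m+n-3)/2, and assume ex(m+n-3; T_n*) ≤ (n-2)(m+n-4)/2. Then r(G_m, T_n*) = m+n-3. -/
open SimpleGraph

lemma edge_le_exNum {p : ℕ} {W : Type*} (L : SimpleGraph W) (G : SimpleGraph (Fin p))
    (h : ¬ Contains G L) : G.edgeSet.ncard ≤ exNum p L := by
  apply le_csSup
  · refine ⟨Fintype.card (Sym2 (Fin p)), ?_⟩
    rintro k ⟨G', -, rfl⟩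
    simpa [Set.ncard_univ] using Set.ncard_le_ncard (Set.subset_univ G'.edgeSet) Set.finite_univ
  · exact ⟨G, h, rfl⟩

lemma edge_compl_sum {p : ℕ} (G : SimpleGraph (Fin p)) :
    2 * (G.edgeSet.ncard + Gᶜ.edgeSet.ncard) = p * (p - 1) := by
  classical
  have h1 : G.edgeSet ∪ Gᶜ.edgeSet = (⊤ : SimpleGraph (Fin p)).edgeSet := by
    rw [← edgeSet_sup, sup_compl_eq_top]
  have hd : Disjoint G.edgeSet Gᶜ.edgeSet := disjoint_edgeSet.2 disjoint_compl_right
  have h2 : G.edgeSet.ncard + Gᶜ.edgeSet.ncard = (⊤ : SimpleGraph (Fin p)).edgeSet.ncard := by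
    rw [← h1, Set.ncard_union_eq hd (Set.toFinite _) (Set.toFinite _)]
  rw [h2]
  have h3 : (⊤ : SimpleGraph (Fin p)).edgeSet.ncard = p.choose 2 := by
    rw [Set.ncard_eq_toFinset_card']
    have := SimpleGraph.card_edgeFinset_top_eq_card_choose_two (V := Fin p)
    simpa [SimpleGraph.edgeFinset] using this
  rw [h3, Nat.choose_two_right]
  rcases p with _ | q
  · simp
  · have : Even ((q + 1) * q) := by simpa [mul_comm] using Nat.even_mul_succ_self q
    obtain ⟨t, ht⟩ := this
    simp only [Nat.succ_sub_one]
    omega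

lemma block_card_le (N d q : ℕ) (hd : 0 < d) :
    (Finset.univ.filter (fun v : Fin N => v.val / d = q)).card ≤ d := by
  classical
  have h := Finset.card_le_card_of_injOn (fun v : Fin N => v.val % d)
    (s := Finset.univ.filter (fun v : Fin N => v.val / d = q))
    (t := Finset.range d) (fun a _ => Finset.mem_range.2 (Nat.mod_lt _ hd)) ?_
  · simpa using h
  · intro v hv w hw hvw
    have hvw2 : v.val % d = w.val % d := hvw
    have hv2 : v.val / d = q := by simpa using hv
    have hw2 : w.val / d = q := by simpa using hw
    have h1 := Nat.div_add_mod v.val d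
    have h2 := Nat.div_add_mod w.val d
    refine Fin.ext ?_
    rw [← h1, ← h2, hv2, hw2, hvw2]

lemma block_card_ge (N d q : ℕ) (hd : 0 < d) (hN : (q + 1) * d ≤ N) :
    d ≤ (Finset.univ.filter (fun v : Fin N => v.val / d = q)).card := by
  classical
  have h0 : 0 < N := lt_of_lt_of_le (by positivity) hN
  have h := Finset.card_le_card_of_injOn
    (fun i : ℕ => (⟨(q * d + i) % N, Nat.mod_lt _ h0⟩ : Fin N))
    (s := Finset.range d) (t := Finset.univ.filter (fun v : Fin N => v.val / d = q)) ?_ ?_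
  · simpa using h
  · intro i hi
    rw [Finset.mem_coe, Finset.mem_range] at hi
    have hlt : q * d + i < N := by
      calc q * d + i < q * d + d := by omega
        _ = (q + 1) * d := by ring
        _ ≤ N := hN
    simp only [Finset.mem_coe, Finset.mem_filter, Finset.mem_univ, true_and]
    show (q * d + i) % N / d = q
    rw [Nat.mod_eq_of_lt hlt, mul_comm q d, Nat.mul_add_div hd, Nat.div_eq_of_lt hi, add_zero]
  · intro i hi j hj hij
    simp only [Finset.coe_range, Set.mem_Iio] at hi hj
    have hlti : q * d + i < N := by nlinarith
    have hltj : q * d + j < N := by nlinarith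
    have := congrArg Fin.val hij
    simp only [Nat.mod_eq_of_lt hlti, Nat.mod_eq_of_lt hltj] at this
    omega

lemma contains_of_comap {N N' : ℕ} (h : N' ≤ N) (G : SimpleGraph (Fin N)) {W : Type*}
    (L : SimpleGraph W) (hc : Contains (G.comap (Fin.castLE h)) L) : Contains G L := by
  obtain ⟨f, hf⟩ := hc
  exact ⟨f.trans (Fin.castLEEmb h), fun a b hab => hf a b hab⟩

lemma comap_compl {N N' : ℕ} (h : N' ≤ N) (G : SimpleGraph (Fin N)) :
    (G.comap (Fin.castLE h))ᶜ = Gᶜ.comap (Fin.castLE h) := by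
  ext a b
  simp only [compl_adj, comap_adj, ne_eq]
  constructor
  · rintro ⟨h1, h2⟩
    exact ⟨fun he => h1 (Fin.castLE_injective h he), h2⟩
  · rintro ⟨h1, h2⟩
    exact ⟨fun he => h1 (by rw [he]), h2⟩

set_option maxHeartbeats 1000000 in
theorem stmt10 {m n : ℕ} (hm : 5 ≤ m) (hmn : m < n) (hdvd : (m - 1) ∣ (n - 3))
    (Gm : SimpleGraph (Fin m)) (hconn : Gm.Connected)
    (hex : 2 * exNum (m + n - 3) Gm ≤ (m - 2) * (m + n - 3))
    (hexT : 2 * exNum (m + n - 3) (Tstar n) ≤ (n - 2) * (m + n - 4)) :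
    ramsey Gm (Tstar n) = m + n - 3 := by
  classical
  have hm1 : 0 < m - 1 := by omega
  obtain ⟨k, hk⟩ := hdvd
  have hk1 : 1 ≤ k := by
    rcases Nat.eq_zero_or_pos k with rfl | h
    · omega
    · exact h
  have hN : m + n - 4 = (m - 1) * (k + 1) := by
    have h1 : (m - 1) * (k + 1) = (m - 1) * k + (m - 1) := by ring
    omega
  obtain ⟨H, hHdef⟩ : ∃ H : SimpleGraph (Fin (m + n - 4)),
      H = SimpleGraph.fromRel (fun a b => a.val / (m - 1) = b.val / (m - 1)) := ⟨_, rfl⟩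
  have hHadj : ∀ a b : Fin (m + n - 4),
      H.Adj a b ↔ a ≠ b ∧ a.val / (m - 1) = b.val / (m - 1) := by
    intro a b
    rw [hHdef, SimpleGraph.fromRel_adj]
    constructor
    · rintro ⟨hne, h | h⟩
      exacts [⟨hne, h⟩, ⟨hne, h.symm⟩]
    · rintro ⟨hne, h⟩
      exact ⟨hne, Or.inl h⟩
  have hHcadj : ∀ a b : Fin (m + n - 4), Hᶜ.Adj a b → a.val / (m - 1) ≠ b.val / (m - 1) := by
    intro a b hab heq
    exact hab.2 ((hHadj a b).2 ⟨hab.1, heq⟩)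
  -- H does not contain Gm
  have hnoGm : ¬ Contains H Gm := by
    rintro ⟨f, hf⟩
    have key : ∀ {x y : Fin m}, Gm.Walk x y → (f x).val / (m - 1) = (f y).val / (m - 1) := by
      intro x y w
      induction w with
      | nil => rfl
      | cons h _ ih => exact (((hHadj _ _).1 (hf _ _ h)).2).trans ih
    have x0 : Fin m := ⟨0, by omega⟩
    have himg : ∀ x : Fin m, (f x).val / (m - 1) = (f x0).val / (m - 1) := by
      intro x
      obtain ⟨w⟩ := hconn.preconnected x0 x
      exact (key w).symm
    have hsub : Finset.univ.image f ⊆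
        Finset.univ.filter (fun v : Fin (m + n - 4) =>
          v.val / (m - 1) = (f x0).val / (m - 1)) := by
      intro v hv
      simp only [Finset.mem_image, Finset.mem_univ, true_and] at hv
      obtain ⟨x, rfl⟩ := hv
      simp only [Finset.mem_filter, Finset.mem_univ, true_and]
      exact himg x
    have h1 := Finset.card_le_card hsub
    rw [Finset.card_image_of_injective _ f.injective, Finset.card_univ, Fintype.card_fin] at h1
    have h2 := block_card_le (m + n - 4) (m - 1) ((f x0).val / (m - 1)) hm1
    omega
  -- Hᶜ does not contain Tstar n
  have hnoT : ¬ Contains Hᶜ (Tstar n) := by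
    rintro ⟨f, hf⟩
    have hn6 : 6 ≤ n := by omega
    obtain ⟨v0, hv0⟩ : ∃ v0 : Fin n, v0 = (⟨0, by omega⟩ : Fin n) := ⟨_, rfl⟩
    obtain ⟨vA, hvA⟩ : ∃ vA : Fin n, vA = (⟨n - 2, by omega⟩ : Fin n) := ⟨_, rfl⟩
    obtain ⟨vB, hvB⟩ : ∃ vB : Fin n, vB = (⟨n - 1, by omega⟩ : Fin n) := ⟨_, rfl⟩
    have hv0val : v0.val = 0 := by rw [hv0]
    have hvAval : vA.val = n - 2 := by rw [hvA]
    have hvBval : vB.val = n - 1 := by rw [hvB]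
    have hT0 : ∀ j : Fin n, 1 ≤ j.val → j.val ≤ n - 3 → (Tstar n).Adj v0 j := by
      intro j h1 h2
      refine ⟨fun he => ?_, Or.inl (Or.inl ⟨hv0val, h1, h2⟩)⟩
      have := congrArg Fin.val he
      omega
    have hTAB : (Tstar n).Adj vA vB := by
      refine ⟨fun he => ?_, Or.inl (Or.inr (Or.inr ⟨hvAval, hvBval⟩))⟩
      have := congrArg Fin.val he
      omega
    obtain ⟨q, hq⟩ : ∃ q, q = (f v0).val / (m - 1) := ⟨_, rfl⟩
    have hqk : (q + 1) * (m - 1) ≤ m + n - 4 := by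
      have hlt : (f v0).val < m + n - 4 := (f v0).isLt
      have : q < k + 1 := by
        rw [hq, Nat.div_lt_iff_lt_mul hm1]
        calc (f v0).val < m + n - 4 := hlt
          _ = (k + 1) * (m - 1) := by rw [hN]; ring
      calc (q + 1) * (m - 1) ≤ (k + 1) * (m - 1) := Nat.mul_le_mul_right _ (by omega)
        _ = m + n - 4 := by rw [hN]; ring
    have hblock := block_card_ge (m + n - 4) (m - 1) q hm1 hqk
    obtain ⟨S, hSdef⟩ : ∃ S : Finset (Fin (m + n - 4)),
        S = Finset.univ.filter (fun v : Fin (m + n - 4) => ¬ v.val / (m - 1) = q) := ⟨_, rfl⟩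
    have hSeq : S = Finset.univ \
        (Finset.univ.filter (fun v : Fin (m + n - 4) => v.val / (m - 1) = q)) := by
      rw [hSdef]
      ext v
      simp
    have hScard : S.card ≤ n - 3 := by
      rw [hSeq, Finset.card_sdiff_of_subset (Finset.filter_subset _ _), Finset.card_univ, Fintype.card_fin]
      omega
    have hmemS : ∀ j : Fin n, 1 ≤ j.val → j.val ≤ n - 3 → f j ∈ S := by
      intro j h1 h2
      have hadj := hHcadj _ _ (hf _ _ (hT0 j h1 h2))
      rw [hSdef]
      simp only [Finset.mem_filter, Finset.mem_univ, true_and]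
      rw [hq]
      exact fun he => hadj he.symm
    obtain ⟨A, hAdef⟩ : ∃ A : Finset (Fin n),
        A = Finset.univ.filter (fun j : Fin n => 1 ≤ j.val ∧ j.val ≤ n - 3) := ⟨_, rfl⟩
    have hAcard : n - 3 ≤ A.card := by
      have h := Finset.card_le_card_of_injOn
        (fun i : ℕ => (⟨i % n, Nat.mod_lt _ (by omega)⟩ : Fin n))
        (s := Finset.Icc 1 (n - 3)) (t := A) ?_ ?_
      · rwa [Nat.card_Icc, Nat.add_sub_cancel] at h
      · intro i hi
        rw [Finset.mem_coe, Finset.mem_Icc] at hi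
        rw [hAdef]
        simp only [Finset.mem_coe, Finset.mem_filter, Finset.mem_univ, true_and]
        rw [Nat.mod_eq_of_lt (by omega)]
        exact hi
      · intro i hi j hj hij
        simp only [Finset.coe_Icc, Set.mem_Icc] at hi hj
        have := congrArg Fin.val hij
        simp only [Nat.mod_eq_of_lt (show i < n by omega),
          Nat.mod_eq_of_lt (show j < n by omega)] at this
        exact this
    obtain ⟨T1, hT1def⟩ : ∃ T1 : Finset (Fin (m + n - 4)), T1 = A.image f := ⟨_, rfl⟩
    have hT1S : T1 ⊆ S := by
      intro v hv
      rw [hT1def] at hv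
      simp only [Finset.mem_image] at hv
      obtain ⟨j, hj, rfl⟩ := hv
      rw [hAdef] at hj
      simp only [Finset.mem_filter, Finset.mem_univ, true_and] at hj
      exact hmemS j hj.1 hj.2
    have hT1card : n - 3 ≤ T1.card := by
      rw [hT1def, Finset.card_image_of_injective _ f.injective]
      exact hAcard
    have hnotmem : ∀ x : Fin n, n - 3 < x.val → f x ∉ T1 := by
      intro x hx hmem
      rw [hT1def] at hmem
      simp only [Finset.mem_image] at hmem
      obtain ⟨j, hj, hje⟩ := hmem
      rw [hAdef] at hj
      simp only [Finset.mem_filter, Finset.mem_univ, true_and] at hj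
      have : j = x := f.injective hje
      omega
    have hquot : ∀ x : Fin n, n - 3 < x.val → (f x).val / (m - 1) = q := by
      intro x hx
      by_contra hne
      have hxS : f x ∈ S := by
        rw [hSdef]
        simp only [Finset.mem_filter, Finset.mem_univ, true_and]
        exact hne
      have hins : insert (f x) T1 ⊆ S := Finset.insert_subset hxS hT1S
      have hcard := Finset.card_le_card hins
      rw [Finset.card_insert_of_notMem (hnotmem x hx)] at hcard
      omega
    have hA' := hquot vA (by omega)
    have hB' := hquot vB (by omega)
    exact hHcadj _ _ (hf _ _ hTAB) (hA'.trans hB'.symm)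
  -- Membership of m + n - 3
  have hmem : (m + n - 3) ∈ {p | 0 < p ∧
      ∀ G : SimpleGraph (Fin p), Contains G Gm ∨ Contains Gᶜ (Tstar n)} := by
    refine ⟨by omega, fun G => ?_⟩
    by_contra hcon
    push_neg at hcon
    obtain ⟨h1, h2⟩ := hcon
    have e1 := edge_le_exNum Gm G h1
    have e2 := edge_le_exNum (Tstar n) Gᶜ h2
    have e3 := edge_compl_sum G
    obtain ⟨a, ha⟩ : ∃ a, m = a + 2 := ⟨m - 2, by omega⟩
    obtain ⟨b, hb⟩ : ∃ b, n = b + 2 := ⟨n - 2, by omega⟩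
    have E1 : 2 * G.edgeSet.ncard ≤ a * (a + b + 1) := by
      have h := le_trans (Nat.mul_le_mul_left 2 e1) hex
      have he : (m - 2) * (m + n - 3) = a * (a + b + 1) := by congr 1 <;> omega
      rw [he] at h
      exact h
    have E2 : 2 * Gᶜ.edgeSet.ncard ≤ b * (a + b) := by
      have h := le_trans (Nat.mul_le_mul_left 2 e2) hexT
      have he : (n - 2) * (m + n - 4) = b * (a + b) := by congr 1 <;> omega
      rw [he] at h
      exact h
    have E3 : 2 * (G.edgeSet.ncard + Gᶜ.edgeSet.ncard) = (a + b + 1) * (a + b) := by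
      rw [e3]
      congr 1 <;> omega
    have hb4 : 4 ≤ b := by omega
    nlinarith [E1, E2, E3]
  refine le_antisymm (Nat.sInf_le hmem) ?_
  apply le_csInf ⟨_, hmem⟩
  rintro b ⟨hb0, hb⟩
  by_contra hlt
  push_neg at hlt
  have hble : b ≤ m + n - 4 := by omega
  rcases hb (H.comap (Fin.castLE hble)) with h | h
  · exact hnoGm (contains_of_comap hble H Gm h)
  · rw [comap_compl] at h
    exact hnoT (contains_of_comap hble Hᶜ (Tstar n) h)
end

section
/- Let m, n be positive integers with n > m ≥ 7 and (m-1) ∤ (n-3). Then r(K_{1,m-1}, T_n*) = m+n-4. -/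
open SimpleGraph

open Finset

section AuxGeneral

lemma contains_comap {V W X : Type*} (f : V ↪ W) (G : SimpleGraph W) (L : SimpleGraph X) :
    Contains (G.comap f) L → Contains G L := by
  rintro ⟨g, hg⟩
  exact ⟨g.trans f, fun a b h => hg a b h⟩

lemma comap_compl_s12 {α β : Type*} (f : α ↪ β) (H : SimpleGraph β) :
    ((Hᶜ).comap f)ᶜ = H.comap f := by
  ext a b
  rw [SimpleGraph.compl_adj, SimpleGraph.comap_adj, SimpleGraph.comap_adj,
    SimpleGraph.compl_adj]
  constructor
  · rintro ⟨hab, h2⟩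
    push_neg at h2
    by_cases hf : f a = f b
    · exact absurd (f.injective hf) hab
    · exact h2 hf
  · intro h
    exact ⟨fun hc => H.irrefl (hc ▸ h), fun hc => hc.2 h⟩

variable {V : Type*} [Fintype V] [DecidableEq V]

lemma star_degree_of_contains {m : ℕ} (hm : 2 ≤ m) (G : SimpleGraph V) [DecidableRel G.Adj]
    (hc : Contains G (_root_.starGraph m)) : ∃ v : V, m - 1 ≤ G.degree v := by
  obtain ⟨f, hf⟩ := hc
  refine ⟨f ⟨0, by omega⟩, ?_⟩
  have hadjS : ∀ (j : ℕ) (h1 : 1 ≤ j) (h2 : j ≤ m - 1), G.Adj (f ⟨0, by omega⟩) (f ⟨j, by omega⟩) := by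
    intro j h1 h2
    apply hf
    rw [_root_.starGraph, SimpleGraph.fromRel_adj]
    refine ⟨fun hcc => by have := congrArg Fin.val hcc; simp at this; omega, ?_⟩
    left; rfl
  set LS : Finset V :=
    ((Finset.Icc 1 (m-1)).attach).image
      (fun j => f ⟨j.1, by have := Finset.mem_Icc.1 j.2; omega⟩) with hLS
  have hLSsub : LS ⊆ G.neighborFinset (f ⟨0, by omega⟩) := by
    intro z hz
    rw [hLS, Finset.mem_image] at hz
    obtain ⟨j, _, rfl⟩ := hz
    have := Finset.mem_Icc.1 j.2
    rw [SimpleGraph.mem_neighborFinset]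
    exact hadjS j.1 this.1 this.2
  have hLScard : LS.card = m - 1 := by
    rw [hLS, Finset.card_image_of_injective _ ?inj, Finset.card_attach, Nat.card_Icc]
    · omega
    case inj =>
      intro a b hab
      have := congrArg Fin.val (f.injective hab)
      exact Subtype.ext (by simpa using this)
  rw [← SimpleGraph.card_neighborFinset_eq_degree]
  calc m - 1 = LS.card := hLScard.symm
  _ ≤ _ := Finset.card_le_card hLSsub


end AuxGeneral

section AuxEmbed

variable {V : Type*} [Fintype V] [DecidableEq V] [LinearOrder V]

lemma embed_tstar {n : ℕ} (hn : 8 ≤ n) (H : SimpleGraph V) [DecidableRel H.Adj]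
    {v u w x : V}
    (hvu : H.Adj v u) (huw : H.Adj u w) (hwx : H.Adj w x)
    (hvw : v ≠ w) (hvx : v ≠ x) (hux : u ≠ x)
    (hcard : n - 4 ≤ (H.neighborFinset v \ {u, w, x}).card) :
    Contains H (Tstar n) := by
  obtain ⟨L, hLsub, hLcard⟩ := Finset.exists_subset_card_eq hcard
  set g : Fin (n-4) → V := fun i => (L.orderIsoOfFin hLcard i : V) with hgdef
  have hginj : Function.Injective g := fun a b hab => by
    exact (L.orderIsoOfFin hLcard).injective (Subtype.ext hab)
  have hgL : ∀ i, g i ∈ H.neighborFinset v \ {u, w, x} := fun i =>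
    hLsub (L.orderIsoOfFin hLcard i).2
  have hgN : ∀ i, H.Adj v (g i) := fun i => by
    have := hgL i; rw [Finset.mem_sdiff] at this
    exact (H.mem_neighborFinset _ _).1 this.1
  have hgne : ∀ i, g i ≠ u ∧ g i ≠ w ∧ g i ≠ x := fun i => by
    have := hgL i; rw [Finset.mem_sdiff] at this
    have h2 := this.2
    simp only [Finset.mem_insert, Finset.mem_singleton] at h2
    tauto
  have hgv : ∀ i, g i ≠ v := fun i h => H.irrefl (h ▸ hgN i)
  let f : Fin n → V := fun i =>
    if h0 : i.val = 0 then v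
    else if h1 : i.val ≤ n - 4 then g ⟨i.val - 1, by omega⟩
    else if i.val = n - 3 then u
    else if i.val = n - 2 then w
    else x
  have fv : ∀ i : Fin n, i.val = 0 → f i = v := by
    intro i h; simp only [f]; rw [dif_pos h]
  have fg : ∀ (i : Fin n) (ha : 1 ≤ i.val) (hb : i.val ≤ n-4),
      f i = g ⟨i.val - 1, by omega⟩ := by
    intro i ha hb; simp only [f]; rw [dif_neg (by omega), dif_pos hb]
  have fu : ∀ i : Fin n, i.val = n - 3 → f i = u := by
    intro i h; simp only [f]
    rw [dif_neg (by omega), dif_neg (by omega), if_pos h]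
  have fw : ∀ i : Fin n, i.val = n - 2 → f i = w := by
    intro i h; simp only [f]
    rw [dif_neg (by omega), dif_neg (by omega), if_neg (by omega), if_pos h]
  have fx : ∀ i : Fin n, i.val = n - 1 → f i = x := by
    intro i h; simp only [f]
    rw [dif_neg (by omega), dif_neg (by omega), if_neg (by omega), if_neg (by omega)]
  have hfinj : Function.Injective f := by
    intro a b hab
    have ha := a.isLt; have hb := b.isLt
    simp only [f] at hab
    split_ifs at hab <;>
    first
      | exact Fin.ext (by omega)
      | exact Fin.ext (by
          have h3 : a.val - 1 = b.val - 1 := congrArg Fin.val (hginj hab); omega)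
      | exact absurd hab (hgv _)
      | exact absurd hab.symm (hgv _)
      | exact absurd hab (hgne _).1
      | exact absurd hab.symm (hgne _).1
      | exact absurd hab (hgne _).2.1
      | exact absurd hab.symm (hgne _).2.1
      | exact absurd hab (hgne _).2.2
      | exact absurd hab.symm (hgne _).2.2
      | exact absurd hab hvu.ne
      | exact absurd hab.symm hvu.ne
      | exact absurd hab hvw
      | exact absurd hab.symm hvw
      | exact absurd hab hvx
      | exact absurd hab.symm hvx
      | exact absurd hab huw.ne
      | exact absurd hab.symm huw.ne
      | exact absurd hab hux
      | exact absurd hab.symm hux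
      | exact absurd hab hwx.ne
      | exact absurd hab.symm hwx.ne
  refine ⟨⟨f, hfinj⟩, ?_⟩
  intro a b hadj
  rw [Tstar, SimpleGraph.fromRel_adj] at hadj
  obtain ⟨hne, hrel⟩ := hadj
  have ha := a.isLt; have hb := b.isLt
  simp only [Function.Embedding.coeFn_mk]
  rcases hrel with (⟨h1,h2,h3⟩|⟨h1,h2⟩|⟨h1,h2⟩)|(⟨h1,h2,h3⟩|⟨h1,h2⟩|⟨h1,h2⟩)
  · rw [fv a h1]
    rcases Nat.lt_or_ge (b.val) (n-3) with hc | hc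
    · rw [fg b h2 (by omega)]; exact hgN _
    · rw [fu b (by omega)]; exact hvu
  · rw [fu a h1, fw b h2]; exact huw
  · rw [fw a h1, fx b h2]; exact hwx
  · rw [fv b h1]
    rcases Nat.lt_or_ge (a.val) (n-3) with hc | hc
    · rw [fg a h2 (by omega)]; exact (hgN _).symm
    · rw [fu a (by omega)]; exact hvu.symm
  · rw [fu b h1, fw a h2]; exact huw.symm
  · rw [fw b h1, fx a h2]; exact hwx.symm


lemma embed_star {m : ℕ} (hm : 1 ≤ m) (G : SimpleGraph V) [DecidableRel G.Adj]
    {v : V} (hcard : m - 1 ≤ (G.neighborFinset v).card) : Contains G (_root_.starGraph m) := by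
  obtain ⟨L, hLsub, hLcard⟩ := Finset.exists_subset_card_eq hcard
  set g : Fin (m-1) → V := fun i => (L.orderIsoOfFin hLcard i : V) with hgdef
  have hginj : Function.Injective g := fun a b hab => by
    exact (L.orderIsoOfFin hLcard).injective (Subtype.ext hab)
  have hgN : ∀ i, G.Adj v (g i) := fun i => by
    have := hLsub (L.orderIsoOfFin hLcard i).2
    exact (G.mem_neighborFinset _ _).1 this
  have hgv : ∀ i, g i ≠ v := fun i h => G.irrefl (h ▸ hgN i)
  let f : Fin m → V := fun i =>
    if h0 : i.val = 0 then v else g ⟨i.val - 1, by omega⟩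
  have fv : ∀ i : Fin m, i.val = 0 → f i = v := by
    intro i h; simp only [f]; rw [dif_pos h]
  have fg : ∀ (i : Fin m) (ha : 1 ≤ i.val), f i = g ⟨i.val - 1, by omega⟩ := by
    intro i ha; simp only [f]; rw [dif_neg (by omega)]
  have hfinj : Function.Injective f := by
    intro a b hab
    have ha := a.isLt; have hb := b.isLt
    simp only [f] at hab
    split_ifs at hab <;>
    first
      | exact Fin.ext (by omega)
      | exact Fin.ext (by
          have h3 : a.val - 1 = b.val - 1 := congrArg Fin.val (hginj hab); omega)
      | exact absurd hab (hgv _)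
      | exact absurd hab.symm (hgv _)
  refine ⟨⟨f, hfinj⟩, ?_⟩
  intro a b hadj
  rw [_root_.starGraph, SimpleGraph.fromRel_adj] at hadj
  obtain ⟨hne, hrel⟩ := hadj
  have hne' : a.val ≠ b.val := fun h => hne (Fin.ext h)
  simp only [Function.Embedding.coeFn_mk]
  rcases hrel with h1 | h1
  · rw [fv a h1, fg b (by omega)]; exact hgN _
  · rw [fv b h1, fg a (by omega)]; exact (hgN _).symm

lemma star_free_degree {m : ℕ} (hm : 1 ≤ m) (G : SimpleGraph V) [DecidableRel G.Adj]
    (h : ¬ Contains G (_root_.starGraph m)) (v : V) : G.degree v ≤ m - 2 := by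
  by_contra h'
  exact h (embed_star hm G (v := v) (by rw [card_neighborFinset_eq_degree]; omega))

lemma tstar_free_of_structure {n : ℕ} (hn : 8 ≤ n) (H : SimpleGraph V) [DecidableRel H.Adj]
    (hstruct : ∀ v : V, n - 3 ≤ H.degree v →
      H.degree v = n - 3 ∧ ∀ u ∈ H.neighborFinset v, ∀ w' ∈ H.neighborFinset u,
        w' ∈ H.neighborFinset v ∨ H.neighborFinset w' = H.neighborFinset v) :
    ¬ Contains H (Tstar n) := by
  rintro ⟨f, hf⟩
  set v := f ⟨0, by omega⟩ with hv
  have hadjT : ∀ (j : ℕ) (h1 : 1 ≤ j) (h2 : j ≤ n - 3), H.Adj v (f ⟨j, by omega⟩) := by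
    intro j h1 h2
    apply hf
    rw [Tstar, SimpleGraph.fromRel_adj]
    refine ⟨fun hc => by have := congrArg Fin.val hc; simp at this; omega, ?_⟩
    left; left; exact ⟨rfl, h1, h2⟩
  set LS : Finset V :=
    ((Finset.Icc 1 (n-3)).attach).image
      (fun j => f ⟨j.1, by have := Finset.mem_Icc.1 j.2; omega⟩) with hLS
  have hLSsub : LS ⊆ H.neighborFinset v := by
    intro z hz
    rw [hLS, Finset.mem_image] at hz
    obtain ⟨j, _, rfl⟩ := hz
    have := Finset.mem_Icc.1 j.2
    rw [mem_neighborFinset]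
    exact hadjT j.1 this.1 this.2
  have hLScard : LS.card = n - 3 := by
    rw [hLS, Finset.card_image_of_injective _ ?inj, Finset.card_attach, Nat.card_Icc]
    · omega
    case inj =>
      intro a b hab
      have := congrArg Fin.val (f.injective hab)
      exact Subtype.ext (by simpa using this)
  have hdeg : n - 3 ≤ H.degree v := by
    rw [← card_neighborFinset_eq_degree]
    calc n - 3 = LS.card := hLScard.symm
    _ ≤ _ := Finset.card_le_card hLSsub
  obtain ⟨hdeq, hstr⟩ := hstruct v hdeg
  have hLSeq : LS = H.neighborFinset v := by
    apply Finset.eq_of_subset_of_card_le hLSsub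
    rw [card_neighborFinset_eq_degree, hdeq, hLScard]
  have hmemLS : ∀ z : V, z ∈ LS → ∃ (j : ℕ) (hj : j < n), 1 ≤ j ∧ j ≤ n - 3 ∧ z = f ⟨j, hj⟩ := by
    intro z hz
    rw [hLS, Finset.mem_image] at hz
    obtain ⟨j, _, rfl⟩ := hz
    have := Finset.mem_Icc.1 j.2
    exact ⟨j.1, by omega, this.1, this.2, rfl⟩
  -- u, w, x
  have hu : (f ⟨n-3, by omega⟩) ∈ H.neighborFinset v := by
    rw [mem_neighborFinset]; exact hadjT (n-3) (by omega) le_rfl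
  have huwadj : H.Adj (f ⟨n-3, by omega⟩) (f ⟨n-2, by omega⟩) := by
    apply hf
    rw [Tstar, SimpleGraph.fromRel_adj]
    refine ⟨fun hc => by have := congrArg Fin.val hc; simp at this; omega, ?_⟩
    left; right; left; exact ⟨rfl, rfl⟩
  have hwxadj : H.Adj (f ⟨n-2, by omega⟩) (f ⟨n-1, by omega⟩) := by
    apply hf
    rw [Tstar, SimpleGraph.fromRel_adj]
    refine ⟨fun hc => by have := congrArg Fin.val hc; simp at this; omega, ?_⟩
    left; right; right; exact ⟨rfl, rfl⟩
  have hwnotin : (f ⟨n-2, by omega⟩) ∉ LS := by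
    intro hc
    obtain ⟨j, hjn, h1, h2, hj⟩ := hmemLS _ hc
    have := congrArg Fin.val (f.injective hj)
    simp at this; omega
  have hxnotin : (f ⟨n-1, by omega⟩) ∉ LS := by
    intro hc
    obtain ⟨j, hjn, h1, h2, hj⟩ := hmemLS _ hc
    have := congrArg Fin.val (f.injective hj)
    simp at this; omega
  rcases hstr _ hu _ ((mem_neighborFinset _ _ _).2 huwadj) with hc | hc
  · exact hwnotin (hLSeq ▸ hc)
  · have : (f ⟨n-1, by omega⟩) ∈ H.neighborFinset (f ⟨n-2, by omega⟩) :=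
      (mem_neighborFinset _ _ _).2 hwxadj
    rw [hc, ← hLSeq] at this
    exact hxnotin this


lemma closed_univ {n : ℕ} (H : SimpleGraph V) [DecidableRel H.Adj]
    (hdeg : ∀ v : V, n - 3 ≤ H.degree v) (hsmall : Fintype.card V < 2 * (n - 2))
    (S : Finset V) (hScard : n - 2 ≤ S.card)
    (hclosed : ∀ s ∈ S, ∀ t : V, H.Adj s t → t ∈ S) : S = Finset.univ := by
  by_contra hne
  have : ∃ z : V, z ∉ S := by
    by_contra hc; push_neg at hc
    exact hne (Finset.eq_univ_iff_forall.2 hc)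
  obtain ⟨z, hz⟩ := this
  have hsub : insert z (H.neighborFinset z) ⊆ Sᶜ := by
    intro t ht
    rw [Finset.mem_insert] at ht
    rw [Finset.mem_compl]
    rcases ht with rfl | ht
    · exact hz
    · intro htS
      exact hz (hclosed t htS z ((H.mem_neighborFinset _ _).1 ht).symm)
  have hc1 : n - 2 ≤ (insert z (H.neighborFinset z)).card := by
    rw [Finset.card_insert_of_notMem (by simp [H.mem_neighborFinset])]
    have := hdeg z; rw [← H.card_neighborFinset_eq_degree] at this; omega
  have hc2 : (Sᶜ : Finset V).card = Fintype.card V - S.card := by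
    rw [Finset.card_compl]
  have := Finset.card_le_card hsub
  omega

lemma contains_tstar_of_min_degree {m n : ℕ} (hm : 7 ≤ m) (hmn : m < n)
    (hndvd : ¬ (m - 1) ∣ (n - 3)) (H : SimpleGraph V) [DecidableRel H.Adj]
    (hcardV : Fintype.card V = m + n - 4)
    (hdeg : ∀ v : V, n - 3 ≤ H.degree v) : Contains H (Tstar n) := by
  have hn : 8 ≤ n := by omega
  by_contra hT
  have key : ∀ v u w x : V, H.Adj v u → H.Adj u w → H.Adj w x → v ≠ w → v ≠ x → u ≠ x →
      (H.neighborFinset v \ {u, w, x}).card ≤ n - 5 := by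
    intro v u w x h1 h2 h3 h4 h5 h6
    by_contra hc
    exact hT (embed_tstar hn H h1 h2 h3 h4 h5 h6 (by omega))
  have hNd : ∀ v : V, (H.neighborFinset v).card = H.degree v := fun v =>
    H.card_neighborFinset_eq_degree v
  have h3le : ∀ u w x : V, ({u, w, x} : Finset V).card ≤ 3 := by
    intro u w x
    calc ({u, w, x} : Finset V).card ≤ ({w, x} : Finset V).card + 1 :=
          Finset.card_insert_le _ _
    _ ≤ (({x} : Finset V).card + 1) + 1 :=
          Nat.add_le_add_right (Finset.card_insert_le _ _) 1
    _ = 3 := by rw [Finset.card_singleton]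
  have hsdiff : ∀ (v : V) (t : Finset V), (H.neighborFinset v).card - t.card ≤
      ((H.neighborFinset v) \ t).card := fun v t => Finset.le_card_sdiff t _
  -- Step A : max degree ≤ n-2
  have stepA : ∀ v : V, H.degree v ≤ n - 2 := by
    intro v; by_contra hc; push_neg at hc
    obtain ⟨u, hu⟩ := Finset.card_pos.1 (show 0 < (H.neighborFinset v).card by rw [hNd]; omega)
    have hAu : H.Adj v u := (H.mem_neighborFinset _ _).1 hu
    obtain ⟨w, hw⟩ := Finset.card_pos.1
      (show 0 < ((H.neighborFinset u).erase v).card by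
        rw [Finset.card_erase_of_mem ((H.mem_neighborFinset _ _).2 hAu.symm)]
        rw [hNd]; have := hdeg u; omega)
    rw [Finset.mem_erase] at hw
    have hAw : H.Adj u w := (H.mem_neighborFinset _ _).1 hw.2
    obtain ⟨x, hx⟩ := Finset.card_pos.1
      (show 0 < ((H.neighborFinset w) \ {v, u}).card by
        have h1 := hsdiff w {v, u}
        have h2 : ({v, u} : Finset V).card ≤ 2 := by
          calc ({v, u} : Finset V).card ≤ ({u} : Finset V).card + 1 := Finset.card_insert_le _ _
          _ = 2 := by rw [Finset.card_singleton]
        have := hdeg w; rw [← hNd w] at this; omega)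
    rw [Finset.mem_sdiff, Finset.mem_insert, Finset.mem_singleton] at hx
    push_neg at hx
    have hAx : H.Adj w x := (H.mem_neighborFinset _ _).1 hx.1
    have := key v u w x hAu hAw hAx (fun h => hw.1 h.symm) (fun h => hx.2.1 h.symm)
      (fun h => hx.2.2 h.symm)
    have h1 := hsdiff v {u, w, x}
    have h2 := h3le u w x
    rw [hNd] at h1
    omega
  -- Step B : regularity
  have stepB : ∀ v : V, H.degree v = n - 3 := by
    intro v
    by_contra hc
    have hdv : H.degree v = n - 2 := by have h1 := hdeg v; have h2 := stepA v; omega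
    have hclosed : ∀ s ∈ insert v (H.neighborFinset v), ∀ t : V, H.Adj s t →
        t ∈ insert v (H.neighborFinset v) := by
      intro s hs t hAdj
      rw [Finset.mem_insert] at hs ⊢
      by_contra hcon; push_neg at hcon
      obtain ⟨htv, htN⟩ := hcon
      rcases hs with rfl | hs
      · exact htN ((H.mem_neighborFinset _ _).2 hAdj)
      · -- s ∈ N(v), t ∉ N[v]
        have hAs : H.Adj v s := (H.mem_neighborFinset _ _).1 hs
        obtain ⟨x, hx⟩ := Finset.card_pos.1
          (show 0 < ((H.neighborFinset t) \ {v, s}).card by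
            have h1 := hsdiff t {v, s}
            have h2 : ({v, s} : Finset V).card ≤ 2 := by
              calc ({v, s} : Finset V).card ≤ ({s} : Finset V).card + 1 :=
                Finset.card_insert_le _ _
              _ = 2 := by rw [Finset.card_singleton]
            have := hdeg t; rw [← hNd t] at this; omega)
        rw [Finset.mem_sdiff, Finset.mem_insert, Finset.mem_singleton] at hx
        push_neg at hx
        have hAx : H.Adj t x := (H.mem_neighborFinset _ _).1 hx.1
        have hkey := key v s t x hAs hAdj hAx (fun h => htv h.symm) (fun h => hx.2.1 h.symm)
          (fun h => hx.2.2 h.symm)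
        -- t ∉ N(v), so N(v) \ {s,t,x} ⊇ N(v) \ {s,x}
        have hsub2 : (H.neighborFinset v) \ {s, x} ⊆ (H.neighborFinset v) \ {s, t, x} := by
          intro z hz
          rw [Finset.mem_sdiff] at hz ⊢
          refine ⟨hz.1, ?_⟩
          intro hz2
          rw [Finset.mem_insert, Finset.mem_insert, Finset.mem_singleton] at hz2
          rcases hz2 with rfl | rfl | rfl
          · exact hz.2 (by simp)
          · exact htN hz.1
          · exact hz.2 (by simp)
        have h1 := hsdiff v {s, x}
        have h2 : ({s, x} : Finset V).card ≤ 2 := by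
          calc ({s, x} : Finset V).card ≤ ({x} : Finset V).card + 1 := Finset.card_insert_le _ _
          _ = 2 := by rw [Finset.card_singleton]
        have h4 := Finset.card_le_card hsub2
        rw [hNd] at h1
        omega
    have huniv := closed_univ H hdeg (by omega) _
      (show n - 2 ≤ (insert v (H.neighborFinset v)).card by
        rw [Finset.card_insert_of_notMem (by simp [H.mem_neighborFinset]), hNd, hdv]; omega)
      hclosed
    have : (insert v (H.neighborFinset v)).card = Fintype.card V := by rw [huniv, Finset.card_univ]
    rw [Finset.card_insert_of_notMem (by simp [H.mem_neighborFinset]), hNd, hdv, hcardV] at this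
    omega
  -- twin lemma
  have twin : ∀ v u w : V, H.Adj v u → H.Adj u w → ¬ H.Adj v w → w ≠ v →
      H.neighborFinset w = H.neighborFinset v := by
    intro v u w hAvu hAuw hnAvw hwv
    have hsub : H.neighborFinset w ⊆ H.neighborFinset v := by
      intro x hxw
      have hAwx : H.Adj w x := (H.mem_neighborFinset _ _).1 hxw
      by_contra hxv
      have hxu : x ≠ u := by
        rintro rfl; exact hxv ((H.mem_neighborFinset _ _).2 hAvu)
      have hxveq : v ≠ x := by
        rintro rfl; exact hnAvw hAwx.symm
      have hkey := key v u w x hAvu hAuw hAwx (fun h => hwv h.symm) hxveq (fun h => hxu h.symm)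
      -- w, x ∉ N(v) : N(v)\{u,w,x} = N(v).erase u
      have heq : (H.neighborFinset v) \ {u, w, x} = (H.neighborFinset v).erase u := by
        ext z
        rw [Finset.mem_sdiff, Finset.mem_erase, Finset.mem_insert, Finset.mem_insert,
          Finset.mem_singleton]
        constructor
        · rintro ⟨h1, h2⟩; push_neg at h2; exact ⟨h2.1, h1⟩
        · rintro ⟨h1, h2⟩
          refine ⟨h2, ?_⟩
          rintro (rfl | rfl | rfl)
          · exact h1 rfl
          · exact hnAvw ((H.mem_neighborFinset _ _).1 h2)
          · exact hxv h2
      rw [heq, Finset.card_erase_of_mem ((H.mem_neighborFinset _ _).2 hAvu), hNd] at hkey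
      have := stepB v
      omega
    apply Finset.eq_of_subset_of_card_le hsub
    rw [hNd, hNd, stepB, stepB]
  -- final counting
  have hVpos : 0 < Fintype.card V := by omega
  obtain ⟨v₀⟩ := Fintype.card_pos_iff.1 hVpos
  set D : Finset V := H.neighborFinset v₀ with hD
  set A : Finset V := Finset.univ.filter (fun z => H.neighborFinset z = D) with hA
  have hv₀A : v₀ ∈ A := by rw [hA]; simp [hD]
  have hAnotD : ∀ z ∈ A, z ∉ D := by
    intro z hz hzD
    rw [hA, Finset.mem_filter] at hz
    have : z ∈ H.neighborFinset z := hz.2.symm ▸ hzD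
    simp [H.mem_neighborFinset] at this
  have hAadj : ∀ z ∈ A, ∀ u ∈ D, H.Adj u z := by
    intro z hz u hu
    rw [hA, Finset.mem_filter] at hz
    have : u ∈ H.neighborFinset z := hz.2 ▸ hu
    exact ((H.mem_neighborFinset _ _).1 this).symm
  have hDcard : D.card = n - 3 := by rw [hD, hNd, stepB]
  have hclosedAD : ∀ s ∈ A ∪ D, ∀ t : V, H.Adj s t → t ∈ A ∪ D := by
    intro s hs t hAdj
    rw [Finset.mem_union] at hs ⊢
    rcases hs with hs | hs
    · right
      rw [hA, Finset.mem_filter] at hs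
      have : t ∈ H.neighborFinset s := (H.mem_neighborFinset _ _).2 hAdj
      rw [hs.2] at this; exact this
    · by_cases htD : t ∈ D
      · right; exact htD
      · left
        by_cases htv : t = v₀
        · subst htv; exact hv₀A
        · have hAvs : H.Adj v₀ s := (H.mem_neighborFinset _ _).1 hs
          have hnAvt : ¬ H.Adj v₀ t := fun h => htD ((H.mem_neighborFinset _ _).2 h)
          rw [hA, Finset.mem_filter]
          exact ⟨Finset.mem_univ t, twin v₀ s t hAvs hAdj hnAvt htv⟩
  have hADuniv : A ∪ D = Finset.univ := by
    apply closed_univ H hdeg (by omega) _ _ hclosedAD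
    calc n - 2 = (insert v₀ D).card := by
          rw [Finset.card_insert_of_notMem (by rw [hD]; simp [H.mem_neighborFinset]), hDcard]
          omega
    _ ≤ (A ∪ D).card := Finset.card_le_card (by
          intro z hz
          rw [Finset.mem_insert] at hz
          rw [Finset.mem_union]
          rcases hz with rfl | hz
          · left; exact hv₀A
          · right; exact hz)
  have hAcard : A.card = m - 1 := by
    have hdisj : Disjoint A D := by
      rw [Finset.disjoint_left]; exact hAnotD
    have := Finset.card_union_of_disjoint hdisj
    rw [hADuniv, Finset.card_univ, hcardV, hDcard] at this
    omega
  -- each u ∈ D : A ⊆ N(u), and |N(u) ∩ D| = n - 3 - (m-1)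
  have hcapD : ∀ u ∈ D, ((H.neighborFinset u) ∩ D).card + (m - 1) = n - 3 := by
    intro u hu
    have hAsub : A ⊆ H.neighborFinset u := by
      intro z hz
      exact (H.mem_neighborFinset _ _).2 (hAadj z hz u hu)
    have hsplit : (H.neighborFinset u ∩ A) ∪ (H.neighborFinset u ∩ D) = H.neighborFinset u := by
      rw [← Finset.inter_union_distrib_left, hADuniv, Finset.inter_univ]
    have hdisj : Disjoint (H.neighborFinset u ∩ A) (H.neighborFinset u ∩ D) := by
      rw [Finset.disjoint_left]
      intro z hz1 hz2
      rw [Finset.mem_inter] at hz1 hz2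
      exact hAnotD z hz1.2 hz2.2
    have hcard := Finset.card_union_of_disjoint hdisj
    rw [hsplit] at hcard
    have hIA : H.neighborFinset u ∩ A = A := by
      rw [Finset.inter_eq_right]; exact hAsub
    rw [hIA, hAcard, hNd, stepB] at hcard
    omega
  -- fibers
  have hfiber : ∀ u ∈ D, D.filter (fun z => H.neighborFinset z = H.neighborFinset u)
      = D \ H.neighborFinset u := by
    intro u hu
    ext z
    rw [Finset.mem_filter, Finset.mem_sdiff]
    constructor
    · rintro ⟨hzD, hzN⟩
      refine ⟨hzD, fun hzu => ?_⟩
      have : u ∈ H.neighborFinset z := (H.mem_neighborFinset _ _).2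
        ((H.mem_neighborFinset _ _).1 hzu).symm
      rw [hzN] at this
      simp [H.mem_neighborFinset] at this
    · rintro ⟨hzD, hzu⟩
      refine ⟨hzD, ?_⟩
      by_cases hzequ : z = u
      · rw [hzequ]
      · apply twin u v₀ z (hAadj v₀ hv₀A u hu) ((H.mem_neighborFinset _ _).1 hzD)
          (fun h => hzu ((H.mem_neighborFinset _ _).2 h)) hzequ
  have hfibercard : ∀ u ∈ D,
      (D.filter (fun z => H.neighborFinset z = H.neighborFinset u)).card = m - 1 := by
    intro u hu
    rw [hfiber u hu]
    have h1 := Finset.card_sdiff_add_card_inter D (H.neighborFinset u)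
    have h2 := hcapD u hu
    rw [Finset.inter_comm] at h2
    omega
  have hsum := Finset.card_eq_sum_card_fiberwise (f := fun z => H.neighborFinset z) (s := D)
    (t := D.image (fun z => H.neighborFinset z)) (fun x hx => Finset.mem_image_of_mem _ hx)
  have hconst : ∀ b ∈ D.image (fun z => H.neighborFinset z),
      (D.filter (fun z => H.neighborFinset z = b)).card = m - 1 := by
    intro b hb
    rw [Finset.mem_image] at hb
    obtain ⟨u, hu, rfl⟩ := hb
    exact hfibercard u hu
  rw [Finset.sum_congr rfl hconst, Finset.sum_const, smul_eq_mul] at hsum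
  exact hndvd ⟨(D.image (fun z => H.neighborFinset z)).card,
    by rw [← hDcard, hsum, Nat.mul_comm]⟩


end AuxEmbed

def lowerGraph (p q h : ℕ) : SimpleGraph (Fin p) :=
  SimpleGraph.fromRel (fun a b =>
    (a.val < q ∧ b.val < q ∧ (b.val + q - a.val) % q ≤ h) ∨ (q ≤ a.val ∧ b.val < q))

instance {p q h : ℕ} : DecidableRel (lowerGraph p q h).Adj := fun a b =>
  decidable_of_iff _ (SimpleGraph.fromRel_adj _ a b).symm

lemma mod_sub {q a b : ℕ} (hq : 0 < q) (ha : a < q) (hb : b < q) :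
    (b + q - a) % q = if a ≤ b then b - a else b + q - a := by
  rcases le_or_gt a b with hc | hc
  · rw [if_pos hc]
    have h1 : b + q - a = (b - a) + q := by omega
    rw [h1, Nat.add_mod_right, Nat.mod_eq_of_lt (by omega)]
  · rw [if_neg (by omega)]
    exact Nat.mod_eq_of_lt (by omega)

lemma mod_addsub {q a d : ℕ} (hq : 0 < q) (ha : a < q) (hd1 : 1 ≤ d) (hd2 : d < q) :
    ((a + d) % q + q - a) % q = d := by
  rcases Nat.lt_or_ge (a + d) q with hc | hc
  · rw [Nat.mod_eq_of_lt hc, mod_sub hq ha hc, if_pos (by omega)]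
    omega
  · have hlt : a + d - q < q := by omega
    have he : (a + d) % q = a + d - q := by
      rw [Nat.mod_eq_sub_mod hc, Nat.mod_eq_of_lt hlt]
    rw [he, mod_sub hq ha hlt, if_neg (by omega)]
    omega

def Cset (p q : ℕ) : Finset (Fin p) := Finset.univ.filter (fun b => b.val < q)

def Pset (p q : ℕ) : Finset (Fin p) := Finset.univ.filter (fun b => q ≤ b.val)

lemma card_Cset {p q : ℕ} (hqp : q ≤ p) : (Cset p q).card = q := by
  have : Cset p q = (Finset.range q).attachFin (fun m hm => by
      rw [Finset.mem_range] at hm; omega) := by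
    ext a
    rw [Cset, Finset.mem_filter, Finset.mem_attachFin, Finset.mem_range]
    simp
  rw [this, Finset.card_attachFin, Finset.card_range]

lemma card_Pset {p q : ℕ} (hqp : q ≤ p) : (Pset p q).card = p - q := by
  have h1 : Pset p q = Finset.univ \ Cset p q := by
    ext a
    rw [Pset, Cset, Finset.mem_filter, Finset.mem_sdiff, Finset.mem_filter]
    simp only [Finset.mem_univ, true_and]
    omega
  rw [h1, Finset.card_sdiff_of_subset (Finset.subset_univ _), Finset.card_univ, Fintype.card_fin,
    card_Cset hqp]

lemma lower_adj {p q h : ℕ} (a b : Fin p) :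
    (lowerGraph p q h).Adj a b ↔ a ≠ b ∧
      ((a.val < q ∧ b.val < q ∧
        ((b.val + q - a.val) % q ≤ h ∨ (a.val + q - b.val) % q ≤ h)) ∨
       (q ≤ a.val ∧ b.val < q) ∨ (q ≤ b.val ∧ a.val < q)) := by
  rw [lowerGraph, SimpleGraph.fromRel_adj]
  constructor
  · rintro ⟨hne, hr⟩
    exact ⟨hne, by tauto⟩
  · rintro ⟨hne, hr⟩
    exact ⟨hne, by tauto⟩

lemma lower_nbhd_P {p q h : ℕ} (b : Fin p) (hb : q ≤ b.val) :
    (lowerGraph p q h).neighborFinset b = Cset p q := by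
  ext a
  rw [SimpleGraph.mem_neighborFinset, lower_adj, Cset, Finset.mem_filter]
  simp only [Finset.mem_univ, true_and]
  constructor
  · rintro ⟨hne, hc | hc | hc⟩ <;> omega
  · intro ha
    refine ⟨fun hc => by cases hc; omega, ?_⟩
    right; left; omega

lemma lower_deg_P {p q h : ℕ} (hqp : q ≤ p) (b : Fin p) (hb : q ≤ b.val) :
    (lowerGraph p q h).degree b = q := by
  rw [← SimpleGraph.card_neighborFinset_eq_degree, lower_nbhd_P b hb, card_Cset hqp]

lemma lower_nbhd_C {p q h : ℕ} (hqp : q ≤ p) (hq2 : 2 * h + 1 ≤ q) (a : Fin p)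
    (ha : a.val < q) :
    (lowerGraph p q h).neighborFinset a =
      Pset p q ∪ (Finset.Icc 1 h ∪ Finset.Icc (q - h) (q - 1)).image
        (fun d => (⟨(a.val + d) % q, Nat.lt_of_lt_of_le (Nat.mod_lt _ (by omega)) hqp⟩ : Fin p)) := by
  have hq : 0 < q := by omega
  ext b
  rw [SimpleGraph.mem_neighborFinset, lower_adj, Finset.mem_union, Pset, Finset.mem_filter,
    Finset.mem_image]
  simp only [Finset.mem_univ, true_and, Finset.mem_union, Finset.mem_Icc]
  constructor
  · rintro ⟨hne, hc | hc | hc⟩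
    · -- b < q, circulant edge
      right
      obtain ⟨ha', hb', hd⟩ := hc
      have hvalne : a.val ≠ b.val := fun hv => hne (Fin.ext hv)
      have hm1 := mod_sub hq ha hb'
      have hm2 := mod_sub hq hb' ha
      refine ⟨(b.val + q - a.val) % q, ?_, ?_⟩
      · split_ifs at hm1 hm2 <;> omega
      · apply Fin.ext
        simp only []
        rcases le_or_gt a.val b.val with hcc | hcc
        · rw [hm1, if_pos hcc]
          have : a.val + (b.val - a.val) = b.val := by omega
          rw [this, Nat.mod_eq_of_lt hb']
        · rw [hm1, if_neg (by omega)]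
          have : a.val + (b.val + q - a.val) = b.val + q := by omega
          rw [this, Nat.add_mod_right, Nat.mod_eq_of_lt hb']
    · omega
    · left; omega
  · rintro (hb | ⟨d, hd, rfl⟩)
    · refine ⟨fun hc => by cases hc; omega, ?_⟩
      right; right; omega
  -- b = (a+d)%q
    · have hd1 : 1 ≤ d := by omega
      have hd2 : d < q := by omega
      have hmod : ((a.val + d) % q + q - a.val) % q = d := mod_addsub hq ha hd1 hd2
      have hblt : (a.val + d) % q < q := Nat.mod_lt _ hq
      have hne : a ≠ (⟨(a.val + d) % q, Nat.lt_of_lt_of_le hblt hqp⟩ : Fin p) := by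
        intro hc
        have hv := congrArg Fin.val hc
        simp only [] at hv
        rw [← hv] at hmod
        have : (a.val + q - a.val) % q = 0 := by
          have : a.val + q - a.val = q := by omega
          rw [this, Nat.mod_self]
        omega
      refine ⟨hne, ?_⟩
      left
      refine ⟨ha, hblt, ?_⟩
      show ((a.val + d) % q + q - a.val) % q ≤ h ∨ (a.val + q - (a.val + d) % q) % q ≤ h
      rcases hd with hd | hd
      · left; omega
      · right
        -- δ(b,a) = q - d ≤ h
        have hm2 := mod_sub hq hblt ha
        have hm1 := mod_sub hq ha hblt
        have hvne : a.val ≠ (a.val + d) % q := fun hv => hne (Fin.ext hv)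
        split_ifs at hm1 hm2 <;> omega

lemma lower_deg_C {p q h : ℕ} (hqp : q ≤ p) (hq2 : 2 * h + 1 ≤ q) (a : Fin p)
    (ha : a.val < q) :
    (lowerGraph p q h).degree a = (p - q) + 2 * h := by
  have hq : 0 < q := by omega
  rw [← SimpleGraph.card_neighborFinset_eq_degree, lower_nbhd_C hqp hq2 a ha]
  have hdisj : Disjoint (Pset p q)
      ((Finset.Icc 1 h ∪ Finset.Icc (q - h) (q - 1)).image
        (fun d => (⟨(a.val + d) % q, Nat.lt_of_lt_of_le (Nat.mod_lt _ (by omega)) hqp⟩ : Fin p))) := by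
    rw [Finset.disjoint_left]
    intro z hz hz2
    rw [Pset, Finset.mem_filter] at hz
    rw [Finset.mem_image] at hz2
    obtain ⟨d, _, rfl⟩ := hz2
    have := Nat.mod_lt (a.val + d) hq
    simp only [] at hz
    omega
  rw [Finset.card_union_of_disjoint hdisj, card_Pset hqp]
  have hinj : Set.InjOn (fun d => (⟨(a.val + d) % q,
      Nat.lt_of_lt_of_le (Nat.mod_lt _ (by omega)) hqp⟩ : Fin p))
      ↑(Finset.Icc 1 h ∪ Finset.Icc (q - h) (q - 1)) := by
    intro d1 hd1 d2 hd2 heq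
    simp only [Finset.coe_union, Set.mem_union, Finset.coe_Icc, Set.mem_Icc] at hd1 hd2
    have hv := congrArg Fin.val heq
    simp only [] at hv
    have e1 : ((a.val + d1) % q + q - a.val) % q = d1 :=
      mod_addsub hq ha (by omega) (by omega)
    have e2 : ((a.val + d2) % q + q - a.val) % q = d2 :=
      mod_addsub hq ha (by omega) (by omega)
    rw [hv] at e1
    omega
  rw [Finset.card_image_of_injOn hinj]
  have hdisj2 : Disjoint (Finset.Icc 1 h) (Finset.Icc (q - h) (q - 1)) := by
    rw [Finset.disjoint_left]
    intro d hd1 hd2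
    rw [Finset.mem_Icc] at hd1 hd2
    omega
  rw [Finset.card_union_of_disjoint hdisj2, Nat.card_Icc, Nat.card_Icc]
  omega


-- ## the lower-bound case analysis
lemma lower_case {m n q h : ℕ} (hm : 7 ≤ m) (hmn : m < n)
    (hqp : q ≤ m + n - 5) (hq2 : 2 * h + 1 ≤ q)
    (hC : (m + n - 5) - q + 2 * h = n - 4 ∨ ((m + n - 5) - q = n - 3 ∧ h = 0))
    (hP : q = m + n - 5 ∨ (n - 4 ≤ q ∧ q ≤ n - 3)) :
    (∀ v : Fin (m + n - 5), n - 4 ≤ (lowerGraph (m + n - 5) q h).degree v) ∧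
      ¬ Contains (lowerGraph (m + n - 5) q h) (Tstar n) := by
  have hNC0 : ∀ (a : Fin (m + n - 5)), a.val < q → h = 0 →
      (lowerGraph (m + n - 5) q h).neighborFinset a = Pset (m + n - 5) q := by
    intro a ha h0
    rw [lower_nbhd_C hqp hq2 a ha]
    subst h0
    have he : Finset.Icc 1 0 ∪ Finset.Icc (q - 0) (q - 1) = (∅ : Finset ℕ) := by
      rw [Finset.Icc_eq_empty (by omega), Finset.Icc_eq_empty (by omega),
        Finset.union_empty]
    rw [he, Finset.image_empty, Finset.union_empty]
  have hcardP : (Pset (m + n - 5) q).card = (m + n - 5) - q := by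
    have h1 : Pset (m + n - 5) q = Finset.univ \ Cset (m + n - 5) q := by
      ext a
      rw [Pset, Cset, Finset.mem_filter, Finset.mem_sdiff, Finset.mem_filter]
      simp only [Finset.mem_univ, true_and]
      omega
    rw [h1, Finset.card_sdiff_of_subset (Finset.subset_univ _), Finset.card_univ, Fintype.card_fin,
      card_Cset hqp]
  constructor
  · intro v
    rcases Nat.lt_or_ge v.val q with hv | hv
    · rw [lower_deg_C hqp hq2 v hv]; omega
    · rw [lower_deg_P hqp v hv]
      have := v.isLt
      rcases hP with hP | hP <;> omega
  · apply tstar_free_of_structure (by omega)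
    intro v hdegv
    rcases Nat.lt_or_ge v.val q with hv | hv
    · -- v in circulant part
      rw [lower_deg_C hqp hq2 v hv] at hdegv
      rcases hC with hC | ⟨hC2, h0⟩
      · omega
      · refine ⟨by rw [lower_deg_C hqp hq2 v hv]; omega, ?_⟩
        intro u hu w hw
        rw [hNC0 v hv h0] at hu
        rw [Pset, Finset.mem_filter] at hu
        have hwu := hw
        rw [lower_nbhd_P u hu.2, Cset, Finset.mem_filter] at hwu
        right
        rw [hNC0 w hwu.2 h0, hNC0 v hv h0]
    · -- v in P part
      have hvq := lower_deg_P (h := h) hqp v hv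
      have := v.isLt
      have hq3 : q = n - 3 := by rcases hP with hP | hP <;> omega
      refine ⟨by omega, ?_⟩
      intro u hu w hw
      rw [lower_nbhd_P v hv] at hu ⊢
      rw [Cset, Finset.mem_filter] at hu
      rcases Nat.lt_or_ge w.val q with hwv | hwv
      · left; rw [Cset, Finset.mem_filter]; exact ⟨Finset.mem_univ _, hwv⟩
      · right; rw [lower_nbhd_P w hwv]

lemma lower_params {m n : ℕ} (hm : 7 ≤ m) (hmn : m < n) :
    ∃ q h : ℕ, q ≤ m + n - 5 ∧ 2 * h + 1 ≤ q ∧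
      ((m + n - 5) - q + 2 * h = n - 4 ∨ ((m + n - 5) - q = n - 3 ∧ h = 0)) ∧
      (q = m + n - 5 ∨ (n - 4 ≤ q ∧ q ≤ n - 3)) := by
  rcases Nat.even_or_odd n with he | ho
  · have h2 : n % 2 = 0 := Nat.even_iff.1 he
    exact ⟨m + n - 5, (n - 4) / 2, by omega, by omega, by left; omega, by left; omega⟩
  · have h2 : n % 2 = 1 := Nat.odd_iff.1 ho
    rcases Nat.even_or_odd m with hem | hom
    · have h3 : m % 2 = 0 := Nat.even_iff.1 hem
      rcases Nat.lt_or_ge (m + 1) n with hn3 | hn3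
      · -- n ≥ m+3
        exact ⟨n - 4, (n - m - 3) / 2, by omega, by omega, by left; omega,
          by right; omega⟩
      · -- n = m+1
        exact ⟨n - 3, 0, by omega, by omega, by right; omega, by right; omega⟩
    · have h3 : m % 2 = 1 := Nat.odd_iff.1 hom
      exact ⟨n - 3, (n - m - 2) / 2, by omega, by omega, by left; omega, by right; omega⟩

lemma lower_bound_all {m n : ℕ} (hm : 7 ≤ m) (hmn : m < n) (N : ℕ) (hN2 : N ≤ m + n - 5) :
    ¬ (∀ G : SimpleGraph (Fin N), Contains G (_root_.starGraph m) ∨ Contains Gᶜ (Tstar n)) := by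
  obtain ⟨q, h, hqp, hq2, hC, hP⟩ := lower_params hm hmn
  obtain ⟨hdegH, hfree⟩ := lower_case hm hmn hqp hq2 hC hP
  intro hall
  rcases hall (((lowerGraph (m + n - 5) q h)ᶜ).comap (Fin.castLEEmb hN2)) with hstar | htstar
  · have hcc := contains_comap _ _ _ hstar
    obtain ⟨v, hv⟩ := star_degree_of_contains (by omega) ((lowerGraph (m + n - 5) q h)ᶜ) hcc
    have hdc := SimpleGraph.degree_compl (lowerGraph (m + n - 5) q h) v
    rw [Fintype.card_fin] at hdc
    have := hdegH v
    omega
  · rw [comap_compl_s12] at htstar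
    exact hfree (contains_comap _ _ _ htstar)


theorem stmt12 {m n : ℕ} (hm : 7 ≤ m) (hmn : m < n) (hndvd : ¬ (m - 1) ∣ (n - 3)) :
    ramsey (_root_.starGraph m) (Tstar n) = m + n - 4 := by
  have hupper : (m + n - 4) ∈ {N | 0 < N ∧
      ∀ G : SimpleGraph (Fin N), Contains G (_root_.starGraph m) ∨ Contains Gᶜ (Tstar n)} := by
    refine ⟨by omega, fun G => ?_⟩
    by_contra hcon
    push_neg at hcon
    obtain ⟨h1, h2⟩ := hcon
    letI : DecidableRel G.Adj := Classical.decRel _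
    have hdeg : ∀ v, G.degree v ≤ m - 2 := star_free_degree (by omega) G h1
    have hdegc : ∀ v : Fin (m + n - 4), n - 3 ≤ Gᶜ.degree v := by
      intro v
      have hh := SimpleGraph.degree_compl G v
      rw [Fintype.card_fin] at hh
      have := hdeg v
      omega
    exact h2 (contains_tstar_of_min_degree hm hmn hndvd Gᶜ (by rw [Fintype.card_fin]) hdegc)
  unfold ramsey
  apply le_antisymm
  · exact Nat.sInf_le hupper
  · have hmem := Nat.sInf_mem (⟨_, hupper⟩ : Set.Nonempty _)
    obtain ⟨hN1, hN2⟩ := hmem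
    by_contra hc
    push_neg at hc
    exact lower_bound_all hm hmn _ (by omega) hN2
end

section
/- Let m, n ∈ ℕ with n ≥ m ≥ 3, (m-1) ∤ (n-2), and n = q(m-2) + a with q ≥ 1 and 2 ≤ a ≤ m-3. Let T_m ≠ K_{1,m-1} be a tree on m vertices. If n ≥ (a-3)(m-1) + 3 and r(T_m, K_{1,n-1}) ≤ m+n-3 holds, then r(T_m, K_{1,n-1}) = m+n-3. -/
open SimpleGraph

/-- The star `K_{1,n-1}` on `n` vertices with center `0`. -/
def starGraphFin (n : ℕ) : SimpleGraph (Fin n) :=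
  SimpleGraph.fromRel (fun a _ => a.val = 0)

open scoped Classical

private lemma card_filter_eq {α : Type*} (s : Finset α) (p : α → Prop)
    (i1 i2 : DecidablePred p) :
    (@Finset.filter α p i1 s).card = (@Finset.filter α p i2 s).card := by
  rw [Subsingleton.elim i1 i2]

private lemma nat_div_eq_iff {b : ℕ} (hb : 0 < b) (x c : ℕ) :
    x / b = c ↔ c * b ≤ x ∧ x < (c + 1) * b := by
  rw [show (x / b = c) ↔ (c ≤ x / b ∧ x / b < c + 1) by omega,
    Nat.le_div_iff_mul_le hb, Nat.div_lt_iff_lt_mul hb]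

private lemma card_filter_interval (N lo hi : ℕ) (h : hi ≤ N) :
    (Finset.univ.filter (fun w : Fin N => lo ≤ w.val ∧ w.val < hi)).card = hi - lo := by
  have hmap : (Finset.univ.filter (fun w : Fin N => lo ≤ w.val ∧ w.val < hi)).map
      Fin.valEmbedding = Finset.Ico lo hi := by
    ext x
    simp only [Finset.mem_map, Finset.mem_filter, Finset.mem_univ, true_and,
      Fin.valEmbedding_apply, Finset.mem_Ico]
    constructor
    · rintro ⟨w, hw, rfl⟩; exact hw
    · rintro ⟨h1, h2⟩; exact ⟨⟨x, lt_of_lt_of_le h2 h⟩, ⟨h1, h2⟩, rfl⟩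
  have hcg := congrArg Finset.card hmap
  rwa [Finset.card_map, Nat.card_Ico] at hcg

private lemma exists_clique {N : ℕ} (G : SimpleGraph (Fin N)) (d : ℕ)
    (hdeg : ∀ v : Fin N, (Finset.univ.filter (fun w => ¬ G.Adj v w)).card ≤ d + 1) :
    ∀ k : ℕ, ∀ s : Finset (Fin N), k * (d + 1) ≤ s.card →
      ∃ t, t ⊆ s ∧ t.card = k ∧ ∀ x ∈ t, ∀ y ∈ t, x ≠ y → G.Adj x y := by
  intro k
  induction k with
  | zero => intro s _; exact ⟨∅, Finset.empty_subset s, Finset.card_empty, by simp⟩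
  | succ k ih =>
    intro s hs
    have hsm : (k + 1) * (d + 1) = k * (d + 1) + (d + 1) := by ring
    have hpos : 0 < s.card := by omega
    obtain ⟨v, hv⟩ := Finset.card_pos.mp hpos
    have hsub : s ⊆ s.filter (fun w => G.Adj v w) ∪
        Finset.univ.filter (fun w => ¬ G.Adj v w) := by
      intro w hw
      by_cases h : G.Adj v w
      · exact Finset.mem_union_left _ (Finset.mem_filter.mpr ⟨hw, h⟩)
      · exact Finset.mem_union_right _ (Finset.mem_filter.mpr ⟨Finset.mem_univ w, h⟩)
    have hcard : k * (d + 1) ≤ (s.filter (fun w => G.Adj v w)).card := by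
      have h1 := Finset.card_le_card hsub
      have h2 := Finset.card_union_le (s.filter (fun w => G.Adj v w))
        (Finset.univ.filter (fun w => ¬ G.Adj v w))
      have h3 := hdeg v
      omega
    obtain ⟨t, hts, htc, htcl⟩ := ih (s.filter (fun w => G.Adj v w)) hcard
    have hvt : v ∉ t := fun h => G.irrefl (Finset.mem_filter.mp (hts h)).2
    refine ⟨insert v t, ?_, ?_, ?_⟩
    · exact Finset.insert_subset hv (hts.trans (Finset.filter_subset _ s))
    · rw [Finset.card_insert_of_notMem hvt, htc]
    · intro x hx y hy hxy
      rcases Finset.mem_insert.mp hx with rfl | hx'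
      · rcases Finset.mem_insert.mp hy with rfl | hy'
        · exact absurd rfl hxy
        · exact (Finset.mem_filter.mp (hts hy')).2
      · rcases Finset.mem_insert.mp hy with rfl | hy'
        · exact ((Finset.mem_filter.mp (hts hx')).2).symm
        · exact htcl x hx' y hy' hxy

private lemma contains_of_clique {N m : ℕ} (G : SimpleGraph (Fin N)) (t : Finset (Fin N))
    (ht : t.card = m) (hcl : ∀ x ∈ t, ∀ y ∈ t, x ≠ y → G.Adj x y)
    (T : SimpleGraph (Fin m)) : Contains G T := by
  let e := t.equivFinOfCardEq ht
  refine ⟨⟨fun i => (e.symm i : Fin N), fun i j h => e.symm.injective (Subtype.ext h)⟩, ?_⟩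
  intro i j hadj
  exact hcl _ (e.symm i).2 _ (e.symm j).2
    (fun h => hadj.ne (e.symm.injective (Subtype.ext h)))

private lemma contains_star {N n : ℕ} (hn : 3 ≤ n) (H : SimpleGraph (Fin N)) (v : Fin N)
    (hdeg : n - 1 ≤ (Finset.univ.filter (fun w => H.Adj v w)).card) :
    Contains H (starGraphFin n) := by
  obtain ⟨s, hs, hcard⟩ := Finset.exists_subset_card_eq hdeg
  have hadj : ∀ w ∈ s, H.Adj v w := fun w hw => (Finset.mem_filter.mp (hs hw)).2
  have hvs : v ∉ s := fun h => H.irrefl (hadj v h)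
  let e := s.equivFinOfCardEq hcard
  have hlt : ∀ i : Fin n, i.val ≠ 0 → i.val - 1 < n - 1 := by intro i hi; omega
  let f : Fin n → Fin N := fun i =>
    if h : i.val = 0 then v else (e.symm ⟨i.val - 1, hlt i h⟩ : Fin N)
  have hf0 : ∀ i : Fin n, i.val = 0 → f i = v := by intro i h; simp only [f, dif_pos h]
  have hfs : ∀ i : Fin n, i.val ≠ 0 → f i ∈ s := by
    intro i h; simp only [f, dif_neg h]; exact (e.symm _).2
  have hfadj : ∀ i : Fin n, i.val ≠ 0 → H.Adj v (f i) := fun i h => hadj _ (hfs i h)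
  have hinj : Function.Injective f := by
    intro i j h
    by_cases h1 : i.val = 0 <;> by_cases h2 : j.val = 0
    · exact Fin.ext (h1.trans h2.symm)
    · rw [hf0 i h1] at h; exact absurd (hfs j h2) (h ▸ hvs)
    · rw [hf0 j h2] at h; exact absurd (hfs i h1) (by rw [h]; exact hvs)
    · simp only [f, dif_neg h1, dif_neg h2] at h
      have hval : i.val - 1 = j.val - 1 :=
        congrArg Fin.val (e.symm.injective (Subtype.ext h))
      exact Fin.ext (by omega)
  refine ⟨⟨f, hinj⟩, ?_⟩
  intro x y hxy
  simp only [starGraphFin, SimpleGraph.fromRel_adj] at hxy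
  obtain ⟨hne, h0⟩ := hxy
  simp only [Function.Embedding.coeFn_mk]
  have hne' : ¬ (x.val = 0 ∧ y.val = 0) := fun hc => hne (Fin.ext (hc.1.trans hc.2.symm))
  rcases h0 with h0 | h0
  · have hb : y.val ≠ 0 := fun h => hne' ⟨h0, h⟩
    rw [hf0 x h0]; exact hfadj y hb
  · have ha : x.val ≠ 0 := fun h => hne' ⟨h, h0⟩
    rw [hf0 y h0]; exact (hfadj x ha).symm

private lemma ramsey_up {V W : Type*} (G₁ : SimpleGraph V) (G₂ : SimpleGraph W) {N N' : ℕ}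
    (h : N ≤ N')
    (hN : 0 < N ∧ ∀ G : SimpleGraph (Fin N), Contains G G₁ ∨ Contains Gᶜ G₂) :
    0 < N' ∧ ∀ G : SimpleGraph (Fin N'), Contains G G₁ ∨ Contains Gᶜ G₂ := by
  refine ⟨lt_of_lt_of_le hN.1 h, fun G => ?_⟩
  have hemb : Function.Injective (Fin.castLE h) := Fin.castLE_injective h
  rcases hN.2 (G.comap (Fin.castLE h)) with ⟨f, hf⟩ | ⟨f, hf⟩
  · exact Or.inl ⟨f.trans ⟨Fin.castLE h, hemb⟩, fun a b hab => hf a b hab⟩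
  · refine Or.inr ⟨f.trans ⟨Fin.castLE h, hemb⟩, fun a b hab => ?_⟩
    have h2 := hf a b hab
    simp only [SimpleGraph.compl_adj, SimpleGraph.comap_adj,
      Function.Embedding.trans_apply, Function.Embedding.coeFn_mk] at h2 ⊢
    exact ⟨fun hc => h2.1 (hemb hc), h2.2⟩

private def cfun (B m a x : ℕ) : ℕ :=
  if x < B then x / (m - 1) else (x - B) / (m - 2) + (a - 2)

private lemma cfun_fiber {m a B Q N : ℕ} (hm : 3 ≤ m) (ha2 : 2 ≤ a)
    (hB : B = (a - 2) * (m - 1)) (hkey : B + Q * (m - 2) = N)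
    (v : ℕ) (hv : v < N) :
    ∃ lo hi : ℕ, hi ≤ N ∧ m - 2 ≤ hi - lo ∧ hi - lo ≤ m - 1 ∧
      ∀ w : ℕ, (cfun B m a w = cfun B m a v ↔ lo ≤ w ∧ w < hi) := by
  have hm1 : 0 < m - 1 := by omega
  have hm2 : 0 < m - 2 := by omega
  unfold cfun
  by_cases hvB : v < B
  · rw [if_pos hvB]
    have hjlt : v / (m - 1) < a - 2 := by rw [Nat.div_lt_iff_lt_mul hm1]; omega
    have h1 : (v / (m - 1) + 1) * (m - 1) ≤ (a - 2) * (m - 1) :=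
      Nat.mul_le_mul_right _ (by omega)
    have h2 : (v / (m - 1) + 1) * (m - 1) = (v / (m - 1)) * (m - 1) + (m - 1) := by ring
    generalize hJ : v / (m - 1) = J at hjlt h1 h2 ⊢
    refine ⟨J * (m - 1), J * (m - 1) + (m - 1),
      by omega, by omega, by omega, ?_⟩
    intro w
    by_cases hw : w < B
    · rw [if_pos hw, nat_div_eq_iff hm1]
      omega
    · rw [if_neg hw]
      generalize hD : (w - B) / (m - 2) = D
      constructor
      · intro h; omega
      · intro h; omega
  · rw [if_neg hvB]
    have hjlt : (v - B) / (m - 2) < Q := by rw [Nat.div_lt_iff_lt_mul hm2]; omega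
    have h1 : ((v - B) / (m - 2) + 1) * (m - 2) ≤ Q * (m - 2) :=
      Nat.mul_le_mul_right _ (by omega)
    have h2 : ((v - B) / (m - 2) + 1) * (m - 2)
        = ((v - B) / (m - 2)) * (m - 2) + (m - 2) := by ring
    generalize hJ : (v - B) / (m - 2) = J at hjlt h1 h2 ⊢
    refine ⟨B + J * (m - 2), B + J * (m - 2) + (m - 2),
      by omega, by omega, by omega, ?_⟩
    intro w
    by_cases hw : w < B
    · rw [if_pos hw]
      have hlt : w / (m - 1) < a - 2 := by rw [Nat.div_lt_iff_lt_mul hm1]; omega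
      generalize hK : w / (m - 1) = K at hlt ⊢
      constructor
      · intro h; omega
      · intro h; omega
    · rw [if_neg hw]
      have heq := nat_div_eq_iff hm2 (w - B) J
      generalize hD : (w - B) / (m - 2) = D at heq ⊢
      omega

private lemma lower_cex {m n q a : ℕ} (hm : 3 ≤ m) (hmn : m ≤ n) (ha2 : 2 ≤ a)
    (haq : a ≤ q + 3) (hn : n = q * (m - 2) + a)
    (T : SimpleGraph (Fin m)) (hT : T.Connected) :
    ∃ G : SimpleGraph (Fin (m + n - 4)), ¬ Contains G T ∧ ¬ Contains Gᶜ (starGraphFin n) := by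
  have hm1 : 0 < m - 1 := by omega
  have hn3 : 3 ≤ n := le_trans hm hmn
  set N := m + n - 4 with hN
  set B := (a - 2) * (m - 1) with hB
  have key : B + (q + 3 - a) * (m - 2) = N := by
    rw [hB, hN]
    zify [ha2, haq, show 1 ≤ m by omega, show 2 ≤ m by omega, show 4 ≤ m + n by omega]
    zify [show 2 ≤ m by omega] at hn
    linear_combination -hn
  set G : SimpleGraph (Fin N) :=
    SimpleGraph.fromRel (fun v w => cfun B m a v.val = cfun B m a w.val) with hG
  have hGadj : ∀ v w : Fin N, G.Adj v w ↔ v ≠ w ∧ cfun B m a v.val = cfun B m a w.val := by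
    intro v w
    rw [hG, SimpleGraph.fromRel_adj]
    constructor
    · rintro ⟨hx, hy | hy⟩
      exacts [⟨hx, hy⟩, ⟨hx, hy.symm⟩]
    · rintro ⟨hx, hy⟩; exact ⟨hx, Or.inl hy⟩
  obtain ⟨i0, -⟩ : ∃ x : Fin m, x.val = 0 := ⟨⟨0, by omega⟩, rfl⟩
  obtain ⟨n0, hn0⟩ : ∃ x : Fin n, x.val = 0 := ⟨⟨0, by omega⟩, rfl⟩
  refine ⟨G, ?_, ?_⟩
  · rintro ⟨f, hf⟩
    have hconst : ∀ i : Fin m, cfun B m a (f i).val = cfun B m a (f i0).val := by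
      intro i
      obtain ⟨p⟩ := hT.preconnected i i0
      induction p with
      | nil => rfl
      | cons hadj p ih =>
        have hstep := (hGadj _ _).mp (hf _ _ hadj)
        exact hstep.2.trans ih
    obtain ⟨lo, hi, hhiN, hlb, hub', hiff⟩ :=
      cfun_fiber hm ha2 hB key (f i0).val (f i0).isLt
    have him : (Finset.univ.image f) ⊆
        Finset.univ.filter (fun w : Fin N => lo ≤ w.val ∧ w.val < hi) := by
      intro w hw
      obtain ⟨i, -, rfl⟩ := Finset.mem_image.mp hw
      exact Finset.mem_filter.mpr ⟨Finset.mem_univ _, (hiff (f i).val).mp (hconst i)⟩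
    have h1 := Finset.card_le_card him
    have h2 : (Finset.univ.image f).card = m := by
      rw [Finset.card_image_of_injective _ f.injective, Finset.card_univ, Fintype.card_fin]
    rw [card_filter_interval _ _ _ hhiN] at h1
    omega
  · rintro ⟨f, hf⟩
    have hstar : ∀ b : Fin n, b ≠ n0 →
        ¬ (cfun B m a (f b).val = cfun B m a (f n0).val) := by
      intro b hb
      have hadj : (starGraphFin n).Adj n0 b := by
        rw [starGraphFin, SimpleGraph.fromRel_adj]
        exact ⟨fun hcc => hb hcc.symm, Or.inl hn0⟩
      have h2 := hf _ _ hadj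
      rw [SimpleGraph.compl_adj] at h2
      intro hcc
      exact h2.2 ((hGadj _ _).mpr ⟨h2.1, hcc.symm⟩)
    obtain ⟨lo, hi, hhiN, hlb, hub', hiff⟩ :=
      cfun_fiber hm ha2 hB key (f n0).val (f n0).isLt
    have h1 : ((Finset.univ.erase n0).image f) ⊆
        Finset.univ \ (Finset.univ.filter (fun w : Fin N => lo ≤ w.val ∧ w.val < hi)) := by
      intro w hw
      obtain ⟨b, hb, rfl⟩ := Finset.mem_image.mp hw
      rw [Finset.mem_sdiff]
      refine ⟨Finset.mem_univ _, fun hc2 => ?_⟩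
      exact hstar b (Finset.ne_of_mem_erase hb)
        ((hiff (f b).val).mpr (Finset.mem_filter.mp hc2).2)
    have h2 : ((Finset.univ.erase n0).image f).card = n - 1 := by
      rw [Finset.card_image_of_injective _ f.injective,
        Finset.card_erase_of_mem (Finset.mem_univ _), Finset.card_univ, Fintype.card_fin]
    have h5 := Finset.card_le_card h1
    have h3 : (Finset.univ \
        (Finset.univ.filter (fun w : Fin N => lo ≤ w.val ∧ w.val < hi))).card
        = N - (hi - lo) := by
      rw [Finset.card_sdiff_of_subset (Finset.filter_subset _ _), card_filter_interval _ _ _ hhiN,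
        Finset.card_univ, Fintype.card_fin]
    omega

theorem stmt14 {m n q a : ℕ} (hm : 3 ≤ m) (hmn : m ≤ n)
    (hndvd : ¬ (m - 1) ∣ (n - 2)) (hq : 1 ≤ q) (ha2 : 2 ≤ a) (ham : a ≤ m - 3)
    (hn : n = q * (m - 2) + a)
    (T : SimpleGraph (Fin m)) (hT : T.IsTree)
    (hTne : ¬ Nonempty (T ≃g starGraphFin m))
    (hbig : (a - 3) * (m - 1) + 3 ≤ n)
    (hub : ramsey T (starGraphFin n) ≤ m + n - 3) :
    ramsey T (starGraphFin n) = m + n - 3 := by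
  have hn3 : 3 ≤ n := le_trans hm hmn
  have hq3 : a ≤ q + 3 := by
    by_contra hcon
    push_neg at hcon
    have h1 : q + 1 ≤ a - 3 := by omega
    have h2 : (q + 1) * (m - 2) ≤ (a - 3) * (m - 1) := Nat.mul_le_mul h1 (by omega)
    have h3 : (q + 1) * (m - 2) = q * (m - 2) + (m - 2) := by ring
    omega
  set SR := {N | 0 < N ∧ ∀ G : SimpleGraph (Fin N), Contains G T ∨ Contains Gᶜ (starGraphFin n)}
    with hSR
  have hmem : m * (n - 1) ∈ SR := by
    refine ⟨Nat.mul_pos (by omega) (by omega), fun G => ?_⟩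
    by_cases hstar : ∃ v, n - 1 ≤ (Finset.univ.filter (fun w => Gᶜ.Adj v w)).card
    · obtain ⟨v, hv⟩ := hstar
      exact Or.inr (contains_star hn3 Gᶜ v
        (le_trans hv (Nat.le_of_eq (card_filter_eq _ _ _ _))))
    · push_neg at hstar
      have hdeg : ∀ v : Fin (m * (n - 1)),
          (Finset.univ.filter (fun w => ¬ G.Adj v w)).card ≤ (n - 2) + 1 := by
        intro v
        have h1 : Finset.univ.filter (fun w => ¬ G.Adj v w) ⊆
            insert v (Finset.univ.filter (fun w => Gᶜ.Adj v w)) := by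
          intro w hw
          rcases eq_or_ne w v with rfl | hne
          · exact Finset.mem_insert_self _ _
          · refine Finset.mem_insert_of_mem (Finset.mem_filter.mpr ⟨Finset.mem_univ _, ?_⟩)
            rw [SimpleGraph.compl_adj]
            exact ⟨hne.symm, (Finset.mem_filter.mp hw).2⟩
        have h2 := Finset.card_le_card h1
        have h3 := Finset.card_insert_le v (Finset.univ.filter (fun w => Gᶜ.Adj v w))
        have h4 := hstar v
        omega
      obtain ⟨t, -, htc, hcl⟩ := exists_clique G (n - 2)
        (fun v => le_trans (Nat.le_of_eq (card_filter_eq _ _ _ _)) (hdeg v)) m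
        Finset.univ (by
          rw [Finset.card_univ, Fintype.card_fin]
          have hwn : (n - 2) + 1 = n - 1 := by omega
          rw [hwn])
      exact Or.inl (contains_of_clique G t htc hcl T)
  have hInf : sInf SR ∈ SR := Nat.sInf_mem ⟨_, hmem⟩
  have hram : ramsey T (starGraphFin n) = sInf SR := rfl
  rw [hram] at hub ⊢
  refine le_antisymm hub ?_
  by_contra hlt
  push_neg at hlt
  simp only [hSR, Set.mem_setOf_eq] at hInf
  have h4 := ramsey_up T (starGraphFin n) (show sInf SR ≤ m + n - 4 by omega) hInf
  obtain ⟨G0, hG1, hG2⟩ := lower_cex hm hmn ha2 hq3 hn T hT.isConnected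
  rcases h4.2 G0 with h | h
  · exact hG1 h
  · exact hG2 h
end
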